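/- arXiv:2505.11400 — 7 statements merged into one kernel-verified Lean document; each statement's English description precedes it below -/
import Mathlib

section
/- Let H be a k-graph and let S ⊆ V(H) satisfy |S| ≤ k-1 and deg(S) ≥ 1. Then deg(S) ≥ C(δ⁺(H), k-|S|), the binomial coefficient 'δ⁺(H) choose k-|S|'. -/
open Finset

/-- The degree of a vertex set `S` in the `k`-graph with edge set `E`:
the number of edges containing `S`. -/
def degH {V : Type*} [DecidableEq V] (E : Finset (Finset V)) (S : Finset V) : ℕ :=
  (E.filter (fun e => S ⊆ e)).card

/-- The minimum positive codegree `δ⁺`: the minimum of `deg(S)` over all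
`(k-1)`-element vertex sets `S` with `deg(S) ≥ 1`. -/
noncomputable def posCodeg {V : Type*} [DecidableEq V] (k : ℕ) (E : Finset (Finset V)) : ℕ :=
  sInf {d : ℕ | ∃ S : Finset V, S.card = k - 1 ∧ 1 ≤ degH E S ∧ degH E S = d}

section Aux
variable {V : Type*} [DecidableEq V]

lemma sdiff_injOn (S : Finset V) : Set.InjOn (· \ S) {e : Finset V | S ⊆ e} := by
  intro e₁ h₁ e₂ h₂ h
  dsimp only at h
  rw [← Finset.sdiff_union_of_subset h₁, ← Finset.sdiff_union_of_subset h₂, h]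

lemma link_card (E : Finset (Finset V)) (S : Finset V) :
    ((E.filter (fun e => S ⊆ e)).image (· \ S)).card = degH E S := by
  rw [degH]
  apply Finset.card_image_of_injOn
  apply (sdiff_injOn S).mono
  intro e he
  simp only [Finset.coe_filter, Set.mem_setOf_eq] at he ⊢
  exact he.2

lemma link_disjoint {E : Finset (Finset V)} {S f : Finset V}
    (hf : f ∈ (E.filter (fun e => S ⊆ e)).image (· \ S)) : Disjoint f S := by
  obtain ⟨e, -, rfl⟩ := Finset.mem_image.mp hf
  exact Finset.sdiff_disjoint

lemma mem_of_pos_deg {E : Finset (Finset V)} {g : Finset V} (h : 1 ≤ degH E g) :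
    ∃ f ∈ E, g ⊆ f := by
  obtain ⟨f, hf⟩ := Finset.card_pos.mp h
  exact ⟨f, (Finset.mem_filter.mp hf).1, (Finset.mem_filter.mp hf).2⟩

lemma degH_link (E : Finset (Finset V)) (S g : Finset V) (hdisj : Disjoint g S) :
    degH ((E.filter (fun e => S ⊆ e)).image (· \ S)) g = degH E (S ∪ g) := by
  unfold degH
  rw [Finset.filter_image, Finset.card_image_of_injOn, Finset.filter_filter]
  · congr 1
    apply Finset.filter_congr
    intro e _
    simp only [Finset.subset_sdiff, Finset.union_subset_iff]
    tauto
  · apply (sdiff_injOn S).mono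
    intro e he
    simp only [Finset.coe_filter, Set.mem_setOf_eq, Finset.mem_filter] at he ⊢
    tauto

lemma key (D : ℕ) : ∀ m : ℕ, 1 ≤ m → ∀ E : Finset (Finset V),
    (∀ e ∈ E, e.card = m) →
    (∀ g : Finset V, g.card + 1 = m → 1 ≤ degH E g → D ≤ degH E g) →
    E.Nonempty → D.choose m ≤ E.card := by
  intro m
  induction m with
  | zero => omega
  | succ m' ih =>
    intro _ E hE hcod hne
    rcases Nat.eq_zero_or_pos m' with hm' | hm'
    · subst hm'
      have h0 : degH E ∅ = E.card := by
        unfold degH; congr 1; apply Finset.filter_true_of_mem; intros; exact Finset.empty_subset _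
      have := hcod ∅ (by simp) (by rw [h0]; exact Finset.card_pos.mpr hne)
      simpa [h0] using this
    · -- step: m = m' + 1, m' ≥ 1
      set P : Finset V := E.biUnion id with hP
      have hmemP : ∀ v : V, v ∈ P ↔ ∃ e ∈ E, v ∈ e := by
        intro v; simp [hP, Finset.mem_biUnion]
      -- each vertex of P has degree ≥ choose D m'
      have hdegv : ∀ v ∈ P, D.choose m' ≤ degH E {v} := by
        intro v hv
        obtain ⟨e, he, hve⟩ := (hmemP v).mp hv
        set Ev := (E.filter (fun e => ({v} : Finset V) ⊆ e)).image (· \ ({v} : Finset V)) with hEv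
        have hEvcard : Ev.card = degH E {v} := link_card E {v}
        rw [← hEvcard]
        apply ih hm' Ev
        · intro f hf
          obtain ⟨e', he', rfl⟩ := Finset.mem_image.mp hf
          have := Finset.mem_filter.mp he'
          rw [Finset.card_sdiff_of_subset this.2, hE e' this.1]
          simp
        · intro g hg hgd
          obtain ⟨f, hf, hgf⟩ := mem_of_pos_deg hgd
          have hdisj : Disjoint g ({v} : Finset V) :=
            Finset.disjoint_of_subset_left hgf (link_disjoint hf)
          have heq : degH Ev g = degH E ({v} ∪ g) := degH_link E {v} g hdisj
          rw [heq]
          rw [heq] at hgd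
          apply hcod _ _ hgd
          rw [Finset.card_union_of_disjoint hdisj.symm]
          simp; omega
        · refine Finset.image_nonempty.mpr ⟨e, Finset.mem_filter.mpr ⟨he, ?_⟩⟩
          simpa using hve
      -- total degree bound
      have hsum_le : ∑ v ∈ P, degH E {v} ≤ (m' + 1) * E.card := by
        have h1 : ∀ v : V, degH E {v} = ∑ e ∈ E, if v ∈ e then 1 else 0 := by
          intro v
          rw [degH, Finset.card_filter]
          congr 1; funext e; simp
        calc ∑ v ∈ P, degH E {v} = ∑ v ∈ P, ∑ e ∈ E, if v ∈ e then 1 else 0 := by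
              simp_rw [h1]
          _ = ∑ e ∈ E, ∑ v ∈ P, if v ∈ e then 1 else 0 := Finset.sum_comm
          _ = ∑ e ∈ E, (P.filter (fun v => v ∈ e)).card := by simp [Finset.card_filter]
          _ ≤ ∑ e ∈ E, e.card := by
              refine Finset.sum_le_sum fun e _ => Finset.card_le_card ?_
              intro v hv; exact (Finset.mem_filter.mp hv).2
          _ = ∑ e ∈ E, (m' + 1) := by
              exact Finset.sum_congr rfl fun e he => hE e he
          _ = E.card * (m' + 1) := by rw [Finset.sum_const, smul_eq_mul]
          _ = (m' + 1) * E.card := Nat.mul_comm _ _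
      -- lower bound on |P|
      obtain ⟨f, hf⟩ := hne
      obtain ⟨g, hgf, hgcard⟩ := Finset.exists_subset_card_eq (s := f) (n := m') (by rw [hE f hf]; omega)
      have hdegg : D ≤ degH E g := by
        apply hcod g (by omega)
        apply Finset.card_pos.mpr
        exact ⟨f, Finset.mem_filter.mpr ⟨hf, hgf⟩⟩
      have hgP : g ⊆ P := fun x hx => (hmemP x).mpr ⟨f, hf, hgf hx⟩
      have hPcard : D + m' ≤ P.card := by
        have hT : ((E.filter (fun e => g ⊆ e)).image (· \ g)) ⊆ (P \ g).powersetCard 1 := by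
          intro t ht
          obtain ⟨e, he, rfl⟩ := Finset.mem_image.mp ht
          have he' := Finset.mem_filter.mp he
          rw [Finset.mem_powersetCard]
          constructor
          · intro x hx
            rw [Finset.mem_sdiff] at hx ⊢
            exact ⟨(hmemP x).mpr ⟨e, he'.1, hx.1⟩, hx.2⟩
          · rw [Finset.card_sdiff_of_subset he'.2, hE e he'.1, hgcard]; omega
        have h2 : D ≤ (P \ g).card := by
          calc D ≤ degH E g := hdegg
            _ = ((E.filter (fun e => g ⊆ e)).image (· \ g)).card := (link_card E g).symm
            _ ≤ ((P \ g).powersetCard 1).card := Finset.card_le_card hT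
            _ = (P \ g).card := by rw [Finset.card_powersetCard, Nat.choose_one_right]
        have := Finset.card_sdiff_add_card_eq_card hgP
        omega
      -- combine
      have hlow : (D + m') * D.choose m' ≤ ∑ v ∈ P, degH E {v} := by
        calc (D + m') * D.choose m' ≤ P.card * D.choose m' :=
              Nat.mul_le_mul_right _ hPcard
          _ = P.card • D.choose m' := by rw [smul_eq_mul]
          _ ≤ ∑ v ∈ P, degH E {v} := Finset.card_nsmul_le_sum P _ _ hdegv
      have hid : D.choose (m' + 1) * (m' + 1) = D.choose m' * (D - m') :=
        Nat.choose_succ_right_eq D m'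
      have hfin : D.choose (m' + 1) * (m' + 1) ≤ E.card * (m' + 1) := by
        calc D.choose (m' + 1) * (m' + 1) = D.choose m' * (D - m') := hid
          _ ≤ D.choose m' * (D + m') := Nat.mul_le_mul_left _ (by omega)
          _ = (D + m') * D.choose m' := Nat.mul_comm _ _
          _ ≤ (m' + 1) * E.card := le_trans hlow hsum_le
          _ = E.card * (m' + 1) := Nat.mul_comm _ _
      exact Nat.le_of_mul_le_mul_right hfin (by omega)

end Aux

/-- Proposition 1.3(c): if `|S| ≤ k-1` and `deg(S) ≥ 1`, then
`deg(S) ≥ C(δ⁺(H), k - |S|)`. -/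
theorem statement3 {V : Type*} [Fintype V] [DecidableEq V] (k : ℕ)
    (E : Finset (Finset V)) (hE : ∀ e ∈ E, e.card = k)
    (S : Finset V) (hScard : S.card ≤ k - 1) (hSdeg : 1 ≤ degH E S) :
    Nat.choose (posCodeg k E) (k - S.card) ≤ degH E S := by
  rcases Nat.eq_zero_or_pos (k - S.card) with hm | hm
  · simp [hm, hSdeg]
  · set D := posCodeg k E with hD
    set ES := (E.filter (fun e => S ⊆ e)).image (· \ S) with hES
    have hSk : S.card < k := by omega
    rw [← link_card E S]
    apply key D (k - S.card) hm ES
    · intro f hf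
      obtain ⟨e, he, rfl⟩ := Finset.mem_image.mp hf
      have he' := Finset.mem_filter.mp he
      rw [Finset.card_sdiff_of_subset he'.2, hE e he'.1]
    · intro g hg hgd
      obtain ⟨f, hf, hgf⟩ := mem_of_pos_deg hgd
      have hdisj : Disjoint g S := Finset.disjoint_of_subset_left hgf (link_disjoint hf)
      have heq : degH ES g = degH E (S ∪ g) := degH_link E S g hdisj
      rw [heq] at hgd ⊢
      apply Nat.sInf_le
      refine ⟨S ∪ g, ?_, hgd, rfl⟩
      rw [Finset.card_union_of_disjoint hdisj.symm]
      omega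
    · obtain ⟨f, hf, hSf⟩ := mem_of_pos_deg hSdeg
      exact Finset.image_nonempty.mpr ⟨f, Finset.mem_filter.mpr ⟨hf, hSf⟩⟩
end

section
/- Let k ≥ 3 and 1 ≤ ℓ ≤ k-1 be integers and let C be a k-uniform ℓ-cycle or a k-uniform ℓ-path on n vertices. Then there exists a partition 𝒫 of V(C) into sets each of size ⌊k/(k-ℓ)⌋(k-ℓ), together with possibly one set of smaller size, such that for each S ∈ 𝒫 there is an edge e of C with S ⊆ e. -/
open Finset

lemma mem_take_drop {α} (l : List α) (a n : ℕ) (x : α) :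
    x ∈ (l.drop a).take n ↔ ∃ i, ∃ h : i < l.length, a ≤ i ∧ i < a + n ∧ l[i] = x := by
  rw [List.mem_iff_getElem]
  constructor
  · rintro ⟨i, hi, hget⟩
    simp only [List.length_take, List.length_drop, lt_min_iff] at hi
    refine ⟨a + i, by omega, by omega, by omega, ?_⟩
    rw [← hget, List.getElem_take, List.getElem_drop]
  · rintro ⟨i, h, hai, hin, hx⟩
    refine ⟨i - a, by simp [List.length_take, List.length_drop]; omega, ?_⟩
    rw [List.getElem_take, List.getElem_drop, ← hx]
    congr 1; omega

/-- The edge set of the `k`-uniform `ℓ`-path whose vertex order is given by `vs`: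
the `i`-th edge consists of the `k` consecutive vertices starting at position `i(k-ℓ)`. -/
def pathEdges {V : Type*} [DecidableEq V] (k ℓ : ℕ) (vs : List V) : Finset (Finset V) :=
  (Finset.range ((vs.length - ℓ) / (k - ℓ))).image
    (fun i => ((vs.drop (i * (k - ℓ))).take k).toFinset)

/-- `E` is (the edge set of) a `k`-uniform `ℓ`-path with vertex order `vs`. -/
def IsLPath {V : Type*} [DecidableEq V] (k ℓ : ℕ) (E : Finset (Finset V)) (vs : List V) :
    Prop :=
  vs.Nodup ∧ (∃ m, 1 ≤ m ∧ vs.length = m * (k - ℓ) + ℓ) ∧ E = pathEdges k ℓ vs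

/-- The edge set of the `k`-uniform `ℓ`-cycle whose cyclic vertex order is given by `vs`. -/
def cycleEdges {V : Type*} [DecidableEq V] (k ℓ : ℕ) (vs : List V) : Finset (Finset V) :=
  (Finset.range (vs.length / (k - ℓ))).image
    (fun i => (((vs ++ vs).drop (i * (k - ℓ))).take k).toFinset)

/-- `E` is (the edge set of) a `k`-uniform `ℓ`-cycle with cyclic vertex order `vs`. -/
def IsLCycle {V : Type*} [DecidableEq V] (k ℓ : ℕ) (E : Finset (Finset V)) (vs : List V) :
    Prop :=
  vs.Nodup ∧ k ≤ vs.length ∧ (k - ℓ) ∣ vs.length ∧ E = cycleEdges k ℓ vs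

/-- Proposition 1.4: the vertex set of a `k`-uniform `ℓ`-path or
`ℓ`-cycle can be partitioned into sets of size `⌊k/(k-ℓ)⌋(k-ℓ)` plus possibly one smaller
set, each contained in an edge. -/
theorem statement5 {V : Type*} [DecidableEq V] (k ℓ : ℕ) (hk : 3 ≤ k) (hℓ1 : 1 ≤ ℓ)
    (hℓ2 : ℓ ≤ k - 1) (E : Finset (Finset V)) (vs : List V)
    (hC : IsLPath k ℓ E vs ∨ IsLCycle k ℓ E vs) :
    ∃ Part : Finset (Finset V),
      (∀ S ∈ Part, ∀ T ∈ Part, S ≠ T → Disjoint S T) ∧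
      Part.biUnion id = vs.toFinset ∧
      (∀ S ∈ Part, S.card ≤ k / (k - ℓ) * (k - ℓ)) ∧
      (Part.filter (fun S => S.card < k / (k - ℓ) * (k - ℓ))).card ≤ 1 ∧
      (∀ S ∈ Part, ∃ e ∈ E, S ⊆ e) := by
  have hkl : 0 < k - ℓ := by omega
  set b := k / (k - ℓ) * (k - ℓ) with hbdef
  have hbk : b ≤ k := Nat.div_mul_le_self k (k - ℓ)
  have hb : 0 < b := Nat.mul_pos (Nat.div_pos (by omega) hkl) hkl
  have hnd : vs.Nodup := by rcases hC with ⟨h, _, _⟩ | ⟨h, _, _⟩ <;> exact h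
  set P : Finset (Finset V) :=
    ((Finset.range vs.length).image fun j => ((vs.drop (j * b)).take b).toFinset).filter
      (·.Nonempty) with hPdef
  have hchunk : ∀ j (x : V), x ∈ (vs.drop (j * b)).take b ↔
      ∃ i, ∃ h : i < vs.length, j * b ≤ i ∧ i < j * b + b ∧ vs[i] = x :=
    fun j x => mem_take_drop vs (j * b) b x
  have hmem : ∀ S, S ∈ P ↔ ∃ j, j * b < vs.length ∧ S = ((vs.drop (j * b)).take b).toFinset := by
    intro S
    simp only [hPdef, Finset.mem_filter, Finset.mem_image, Finset.mem_range]
    constructor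
    · rintro ⟨⟨j, hj, rfl⟩, hne⟩
      obtain ⟨x, hx⟩ := hne
      rw [List.mem_toFinset, hchunk] at hx
      obtain ⟨i, h, h1, h2, h3⟩ := hx
      exact ⟨j, by omega, rfl⟩
    · rintro ⟨j, hj, rfl⟩
      have hjlt : j < vs.length := by
        have : j * 1 ≤ j * b := Nat.mul_le_mul_left j hb
        omega
      refine ⟨⟨j, hjlt, rfl⟩, ⟨vs[j * b], ?_⟩⟩
      rw [List.mem_toFinset, hchunk]
      exact ⟨j * b, hj, le_refl _, by omega, rfl⟩
  have hnodupchunk : ∀ j, ((vs.drop (j * b)).take b).Nodup := fun j =>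
    (((List.take_sublist _ _).trans (List.drop_sublist _ _)).nodup hnd)
  refine ⟨P, ?_, ?_, ?_, ?_, ?_⟩
  · -- disjointness
    intro S hS T hT hne
    obtain ⟨j, hj, rfl⟩ := (hmem S).mp hS
    obtain ⟨j', hj', rfl⟩ := (hmem T).mp hT
    have hjj' : j ≠ j' := fun h => hne (by rw [h])
    rw [Finset.disjoint_left]
    intro x hxS hxT
    rw [List.mem_toFinset, hchunk] at hxS hxT
    obtain ⟨i, h, h1, h2, h3⟩ := hxS
    obtain ⟨i', h', h1', h2', h3'⟩ := hxT
    have : i = i' := (List.Nodup.getElem_inj_iff hnd).mp (h3.trans h3'.symm)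
    subst this
    rcases Nat.lt_or_ge j j' with hlt | hge
    · have : (j + 1) * b ≤ j' * b := Nat.mul_le_mul_right _ (by omega)
      rw [Nat.succ_mul] at this; omega
    · have hlt : j' < j := by omega
      have : (j' + 1) * b ≤ j * b := Nat.mul_le_mul_right _ (by omega)
      rw [Nat.succ_mul] at this; omega
  · -- union
    apply Finset.ext; intro v
    rw [Finset.mem_biUnion]
    constructor
    · rintro ⟨S, hS, hv⟩
      obtain ⟨j, hj, rfl⟩ := (hmem S).mp hS
      simp only [id_eq, List.mem_toFinset, hchunk] at hv
      obtain ⟨i, h, _, _, h3⟩ := hv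
      rw [List.mem_toFinset, ← h3]
      exact List.getElem_mem h
    · intro hv
      rw [List.mem_toFinset, List.mem_iff_getElem] at hv
      obtain ⟨i, hi, hv⟩ := hv
      have h1 : i / b * b ≤ i := Nat.div_mul_le_self i b
      have h2 : i % b < b := Nat.mod_lt _ hb
      have h3 : b * (i / b) + i % b = i := Nat.div_add_mod i b
      have h3' : i / b * b + i % b = i := by rw [Nat.mul_comm] at h3; exact h3
      refine ⟨((vs.drop (i / b * b)).take b).toFinset, (hmem _).mpr ⟨i / b, by omega, rfl⟩, ?_⟩
      simp only [id_eq, List.mem_toFinset, hchunk]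
      exact ⟨i, hi, h1, by omega, hv⟩
  · -- card bound
    intro S hS
    obtain ⟨j, hj, rfl⟩ := (hmem S).mp hS
    calc ((vs.drop (j * b)).take b).toFinset.card ≤ ((vs.drop (j * b)).take b).length :=
          List.toFinset_card_le _
      _ ≤ b := by rw [List.length_take]; exact min_le_left _ _
  · -- at most one small part
    rw [Finset.card_le_one]
    intro S hS T hT
    rw [Finset.mem_filter] at hS hT
    obtain ⟨hS, hSc⟩ := hS
    obtain ⟨hT, hTc⟩ := hT
    obtain ⟨j, hj, rfl⟩ := (hmem S).mp hS
    obtain ⟨j', hj', rfl⟩ := (hmem T).mp hT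
    rw [List.toFinset_card_of_nodup (hnodupchunk j), List.length_take, List.length_drop] at hSc
    rw [List.toFinset_card_of_nodup (hnodupchunk j'), List.length_take, List.length_drop] at hTc
    have hSs : vs.length < j * b + b := by omega
    have hTs : vs.length < j' * b + b := by omega
    have : j = j' := by
      rcases Nat.lt_trichotomy j j' with hlt | heq | hgt
      · have : (j + 1) * b ≤ j' * b := Nat.mul_le_mul_right _ (by omega)
        rw [Nat.succ_mul] at this; omega
      · exact heq
      · have : (j' + 1) * b ≤ j * b := Nat.mul_le_mul_right _ (by omega)
        rw [Nat.succ_mul] at this; omega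
    rw [this]
  · -- each part in an edge
    intro S hS
    obtain ⟨j, hj, rfl⟩ := (hmem S).mp hS
    have heq : j * (k / (k - ℓ)) * (k - ℓ) = j * b := by rw [hbdef, Nat.mul_assoc]
    rcases hC with ⟨-, ⟨m, hm, hlen⟩, hE⟩ | ⟨-, hklen, hdvd, hE⟩
    · -- path case
      have hklen : k ≤ vs.length := by
        have : (k - ℓ) ≤ m * (k - ℓ) := Nat.le_mul_of_pos_left _ hm
        omega
      have hmq : (vs.length - ℓ) / (k - ℓ) = m := by
        rw [hlen, Nat.add_sub_cancel, Nat.mul_div_cancel _ hkl]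
      rw [hE]
      by_cases hcase : j * b + k ≤ vs.length
      · refine ⟨((vs.drop (j * (k / (k - ℓ)) * (k - ℓ))).take k).toFinset,
          Finset.mem_image_of_mem _ (Finset.mem_range.mpr ?_), ?_⟩
        · rw [hmq]
          by_contra hcon
          push_neg at hcon
          have : m * (k - ℓ) ≤ j * (k / (k - ℓ)) * (k - ℓ) := Nat.mul_le_mul_right _ hcon
          rw [heq] at this
          omega
        · intro x hx
          rw [List.mem_toFinset, hchunk] at hx
          obtain ⟨i, h, h1, h2, h3⟩ := hx
          rw [List.mem_toFinset, heq, mem_take_drop]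
          exact ⟨i, h, h1, by omega, h3⟩
      · obtain ⟨m', rfl⟩ : ∃ m', m = m' + 1 := ⟨m - 1, by omega⟩
        refine ⟨((vs.drop (m' * (k - ℓ))).take k).toFinset,
          Finset.mem_image_of_mem _ (Finset.mem_range.mpr (by omega)), ?_⟩
        have hm' : m' * (k - ℓ) = vs.length - k := by
          have : (m' + 1) * (k - ℓ) = m' * (k - ℓ) + (k - ℓ) := Nat.succ_mul _ _
          omega
        intro x hx
        rw [List.mem_toFinset, hchunk] at hx
        obtain ⟨i, h, h1, h2, h3⟩ := hx
        rw [List.mem_toFinset, mem_take_drop]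
        exact ⟨i, h, by omega, by omega, h3⟩
    · -- cycle case
      rw [hE]
      refine ⟨(((vs ++ vs).drop (j * (k / (k - ℓ)) * (k - ℓ))).take k).toFinset,
        Finset.mem_image_of_mem _ (Finset.mem_range.mpr ?_), ?_⟩
      · have hlen' : vs.length / (k - ℓ) * (k - ℓ) = vs.length := Nat.div_mul_cancel hdvd
        have : j * (k / (k - ℓ)) * (k - ℓ) < vs.length / (k - ℓ) * (k - ℓ) := by
          rw [heq, hlen']; exact hj
        exact Nat.lt_of_mul_lt_mul_right this
      · intro x hx
        rw [List.mem_toFinset, hchunk] at hx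
        obtain ⟨i, h, h1, h2, h3⟩ := hx
        rw [List.mem_toFinset, heq, mem_take_drop]
        refine ⟨i, by simp only [List.length_append]; omega, h1, by omega, ?_⟩
        rw [List.getElem_append_left h]
        exact h3
end

section
/- Let k ≥ 3 and 1 ≤ ℓ ≤ k-1 be integers, set w₁ = k-1 and wᵢ = ⌊k/(k-ℓ)⌋(k-ℓ) - 1 for 2 ≤ i ≤ k. Then for every real number x ≥ 0 there is a k-uniform ℓ-path P together with a partition of V(P) into sets U₁, …, U_k such that every edge of P has precisely one vertex in each Uᵢ and, for each i ∈ [k], wᵢx - k ≤ |Uᵢ| ≤ wᵢx + k. -/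
open Finset

private lemma div_le_div_add (P a b : ℕ) (hP : 0 < P) (h : a ≤ b) :
    b / P ≤ a / P + (b - a) := by
  calc b / P ≤ (a + (b-a) * P) / P := Nat.div_le_div_right (by
      have := Nat.le_mul_of_pos_right (b-a) hP
      omega)
  _ = a / P + (b - a) := Nat.add_mul_div_right _ _ hP

private lemma g_mono (P : ℕ) (hP : 0 < P) {a b : ℕ} (h : a ≤ b) :
    a - a / P ≤ b - b / P := by
  have h1 := div_le_div_add P a b hP h
  have h2 : a / P ≤ a := Nat.div_le_self _ _
  have h3 : b / P ≤ b := Nat.div_le_self _ _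
  have h4 : a / P ≤ b / P := Nat.div_le_div_right h
  omega

private lemma succ_div_eq (P p : ℕ) (hP : 0 < P) (h : p % P = P - 1) :
    (p + 1) / P = p / P + 1 := by
  have hd := Nat.div_add_mod p P
  have hq : p + 1 = (p / P + 1) * P := by
    have : (p / P + 1) * P = P * (p/P) + P := by ring
    omega
  rw [hq, Nat.mul_div_cancel _ hP]

private lemma succ_div_eq' (P p : ℕ) (hP : 0 < P) (h : p % P ≠ P - 1) :
    (p + 1) / P = p / P := by
  have hm : p % P < P := Nat.mod_lt _ hP
  rw [Nat.add_div hP]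
  have h1 : (1:ℕ) % P = 1 % P := rfl
  have h1' : 1 % P ≤ 1 := Nat.mod_le _ _
  have : ¬ (P ≤ p % P + 1 % P) := by omega
  simp only [this, if_false]
  have : 1 / P = 0 := Nat.div_eq_of_lt (by omega)
  omega

private lemma g_succ (P p : ℕ) (hP : 0 < P) :
    (p+1) - (p+1) / P = (p - p / P) + (if p % P = P - 1 then 0 else 1) := by
  have h2 : p / P ≤ p := Nat.div_le_self _ _
  by_cases h : p % P = P - 1
  · rw [succ_div_eq P p hP h, if_pos h]; omega
  · rw [succ_div_eq' P p hP h, if_neg h]; omega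
private lemma count_mod (M c N : ℕ) (hM : 0 < M) (hc : c < M) :
    ((Finset.range N).filter (fun n => n % M = c)).card
      = if c < N then (N - c - 1) / M + 1 else 0 := by
  by_cases hcN : c < N
  · rw [if_pos hcN]
    have himg : (Finset.range N).filter (fun n => n % M = c)
        = (Finset.range ((N - c - 1) / M + 1)).image (fun t => t * M + c) := by
      ext n
      simp only [mem_filter, mem_range, mem_image]
      constructor
      · rintro ⟨hn, hmod⟩
        refine ⟨n / M, ?_, ?_⟩
        · have hd : M * (n / M) + n % M = n := Nat.div_add_mod n M
          have h1 : n / M * M = n - c := by rw [Nat.mul_comm] at hd; omega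
          have h2 : n / M * M ≤ N - c - 1 := by omega
          have h3 : n / M ≤ (N - c - 1) / M := by
            calc n / M = (n / M * M) / M := (Nat.mul_div_cancel _ hM).symm
            _ ≤ (N - c - 1) / M := Nat.div_le_div_right h2
          omega
        · have hd : M * (n / M) + n % M = n := Nat.div_add_mod n M
          rw [Nat.mul_comm] at hd; omega
      · rintro ⟨t, ht, rfl⟩
        constructor
        · have h1 : t ≤ (N - c - 1) / M := by omega
          have h2 : t * M ≤ (N - c - 1) / M * M := Nat.mul_le_mul_right _ h1
          have h3 : (N - c - 1) / M * M ≤ N - c - 1 := Nat.div_mul_le_self _ _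
          omega
        · simp [Nat.mul_add_mod', Nat.mod_eq_of_lt hc]
    rw [himg, Finset.card_image_of_injective _ (fun t₁ t₂ h => by
      have : t₁ * M = t₂ * M := by omega
      exact Nat.eq_of_mul_eq_mul_right hM this), Finset.card_range]
  · rw [if_neg hcN]
    rw [Finset.card_eq_zero, Finset.filter_eq_empty_iff]
    intro n hn
    simp only [mem_range] at hn
    intro hmod
    have := Nat.mod_le n M
    omega
private lemma colcount (M P L c : ℕ) (hP : 2 ≤ P) :
    (((Finset.range L).filter (fun p => p % P ≠ P - 1 ∧ (p - p / P) % M = c))).card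
      = ((Finset.range (L - L / P)).filter (fun n => n % M = c)).card := by
  have hP0 : 0 < P := by omega
  have hP1 : 0 < P - 1 := by omega
  -- facts about the backward map
  have key : ∀ n : ℕ, (P * (n / (P-1)) + n % (P-1)) / P = n / (P-1) ∧
      (P * (n / (P-1)) + n % (P-1)) % P = n % (P-1) ∧
      (P * (n / (P-1)) + n % (P-1)) - (P * (n / (P-1)) + n % (P-1)) / P = n := by
    intro n
    have hs : n % (P-1) < P - 1 := Nat.mod_lt _ hP1
    have hdm : (P-1) * (n / (P-1)) + n % (P-1) = n := Nat.div_add_mod n (P-1)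
    have hdiv : (P * (n / (P-1)) + n % (P-1)) / P = n / (P-1) := by
      rw [Nat.mul_add_div hP0]
      have : n % (P-1) / P = 0 := Nat.div_eq_of_lt (by omega)
      omega
    have hmod : (P * (n / (P-1)) + n % (P-1)) % P = n % (P-1) := by
      rw [Nat.mul_add_mod]
      exact Nat.mod_eq_of_lt (by omega)
    refine ⟨hdiv, hmod, ?_⟩
    rw [hdiv]
    have hexp : P * (n / (P-1)) = (P-1) * (n / (P-1)) + n / (P-1) := by
      have : (P - 1) * (n / (P-1)) + 1 * (n / (P-1)) = (P - 1 + 1) * (n / (P-1)) :=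
        (Nat.add_mul _ _ _).symm
      have hPP : P - 1 + 1 = P := by omega
      rw [hPP] at this
      omega
    omega
  apply Finset.card_bij' (fun p _ => p - p / P)
    (fun n _ => P * (n / (P-1)) + n % (P-1))
  · -- maps forward
    intro p hp
    simp only [mem_filter, mem_range] at hp ⊢
    obtain ⟨hpL, hnz, hcol⟩ := hp
    refine ⟨?_, hcol⟩
    have hstep : (p+1) - (p+1) / P = (p - p / P) + 1 := by
      rw [succ_div_eq' P p hP0 hnz]
      have : p / P ≤ p := Nat.div_le_self _ _
      omega
    have := g_mono P hP0 (show p + 1 ≤ L by omega)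
    omega
  · -- maps backward
    intro n hn
    simp only [mem_filter, mem_range] at hn ⊢
    obtain ⟨hnN, hmod⟩ := hn
    obtain ⟨hdiv, hmodP, hg⟩ := key n
    have hs : n % (P-1) < P - 1 := Nat.mod_lt _ hP1
    refine ⟨?_, ?_, by rw [hg]; exact hmod⟩
    · by_contra hge
      push_neg at hge
      have := g_mono P hP0 hge
      have hLP : L / P ≤ L := Nat.div_le_self _ _
      omega
    · rw [hmodP]; omega
  · -- left inverse
    intro p hp
    simp only [mem_filter, mem_range] at hp
    obtain ⟨hpL, hnz, _⟩ := hp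
    have hm : p % P < P := Nat.mod_lt _ hP0
    have hmlt : p % P < P - 1 := by omega
    have hdm : P * (p / P) + p % P = p := Nat.div_add_mod p P
    have hgp : p - p / P = (P - 1) * (p / P) + p % P := by
      have hexp : P * (p / P) = (P-1) * (p / P) + p / P := by
        have : (P - 1) * (p / P) + 1 * (p / P) = (P - 1 + 1) * (p / P) :=
          (Nat.add_mul _ _ _).symm
        have hPP : P - 1 + 1 = P := by omega
        rw [hPP] at this
        omega
      omega
    rw [hgp]
    rw [Nat.mul_add_div hP1, Nat.mul_add_mod]
    have h1 : p % P / (P-1) = 0 := Nat.div_eq_of_lt hmlt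
    have h2 : p % P % (P-1) = p % P := Nat.mod_eq_of_lt hmlt
    rw [h1, h2, Nat.add_zero]
    omega
  · -- right inverse
    intro n hn
    exact (key n).2.2
private lemma window_sum_div (P a k : ℕ) (hP0 : 0 < P) (hPk : P ≤ k)
    (ha : a % P + (k - P) < P) : (a + k) / P = a / P + 1 := by
  have hk' : a + k = (a + (k - P)) + P := by omega
  rw [hk', Nat.add_div_right _ hP0]
  have h1 : (k - P) % P = k - P := Nat.mod_eq_of_lt (by omega)
  have h2 : (k - P) / P = 0 := Nat.div_eq_of_lt (by omega)
  rw [Nat.add_div hP0, h1, h2]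
  have : ¬ (P ≤ a % P + (k - P)) := by omega
  simp [this]

private lemma window_card (k P a : ℕ) (hk : 3 ≤ k) (hP0 : 0 < P) (hPk : P ≤ k)
    (ha : a % P + (k - P) < P) (i : ℕ) (hi : i < k) :
    ((Finset.Ico a (a+k)).filter
      (fun p => (if p % P = P - 1 then 0 else (p - p / P) % (k-1) + 1) = i)).card = 1 := by
  set col : ℕ → ℕ := fun p => if p % P = P - 1 then 0 else (p - p / P) % (k-1) + 1 with hcol
  have hsum : (a + k) / P = a / P + 1 := window_sum_div P a k hP0 hPk ha
  have hk1 : 0 < k - 1 := by omega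
  -- location of the unique Z-element
  have Zloc : ∀ p, a ≤ p → p < a + k → p % P = P - 1 → p = P * (a / P) + (P - 1) := by
    intro p h1 h2 h3
    have e1 : (p + 1) / P = p / P + 1 := succ_div_eq P p hP0 h3
    have e2 : (p + 1) / P ≤ (a + k) / P := Nat.div_le_div_right (by omega)
    have e3 : a / P ≤ p / P := Nat.div_le_div_right h1
    have e4 : p / P = a / P := by omega
    have e5 : P * (p / P) + p % P = p := Nat.div_add_mod p P
    rw [e4] at e5
    omega
  -- strict growth of g between non-Z positions in the window
  have gdiff : ∀ p₁ p₂, a ≤ p₁ → p₁ < p₂ → p₂ < a + k →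
      p₁ % P ≠ P - 1 → p₂ % P ≠ P - 1 →
      (p₁ - p₁ / P) < (p₂ - p₂ / P) ∧ (p₂ - p₂ / P) < (p₁ - p₁ / P) + (k - 1) := by
    intro p₁ p₂ h1 h2 h3 hz1 hz2
    have s1 : (p₁ + 1) - (p₁ + 1) / P = (p₁ - p₁ / P) + 1 := by
      rw [succ_div_eq' P p₁ hP0 hz1]
      have : p₁ / P ≤ p₁ := Nat.div_le_self _ _
      omega
    have s2 : (p₂ + 1) - (p₂ + 1) / P = (p₂ - p₂ / P) + 1 := by
      rw [succ_div_eq' P p₂ hP0 hz2]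
      have : p₂ / P ≤ p₂ := Nat.div_le_self _ _
      omega
    have m1 : (p₁ + 1) - (p₁ + 1) / P ≤ (p₂ - p₂ / P) := g_mono P hP0 (by omega)
    have m2 : (p₂ + 1) - (p₂ + 1) / P ≤ (a + k) - (a + k) / P := g_mono P hP0 (by omega)
    have m3 : (a - a / P) ≤ (p₁ - p₁ / P) := g_mono P hP0 h1
    have haP : a / P ≤ a := Nat.div_le_self _ _
    rw [hsum] at m2
    omega
  -- injectivity of col on the window
  have hinj : ∀ p₁ ∈ Finset.Ico a (a+k), ∀ p₂ ∈ Finset.Ico a (a+k),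
      col p₁ = col p₂ → p₁ = p₂ := by
    intro p₁ hp₁ p₂ hp₂ hc
    simp only [Finset.mem_Ico] at hp₁ hp₂
    by_cases z1 : p₁ % P = P - 1 <;> by_cases z2 : p₂ % P = P - 1
    · rw [Zloc p₁ hp₁.1 hp₁.2 z1, Zloc p₂ hp₂.1 hp₂.2 z2]
    · simp only [hcol, if_pos z1, if_neg z2] at hc; omega
    · simp only [hcol, if_neg z1, if_pos z2] at hc; omega
    · simp only [hcol, if_neg z1, if_neg z2, Nat.add_right_cancel_iff] at hc
      rcases Nat.lt_trichotomy p₁ p₂ with h | h | h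
      · exfalso
        obtain ⟨d1, d2⟩ := gdiff p₁ p₂ hp₁.1 h hp₂.2 z1 z2
        have hdvd : (k-1) ∣ (p₂ - p₂ / P) - (p₁ - p₁ / P) :=
          (Nat.modEq_iff_dvd' (le_of_lt d1)).mp hc
        have := Nat.le_of_dvd (by omega) hdvd
        omega
      · exact h
      · exfalso
        obtain ⟨d1, d2⟩ := gdiff p₂ p₁ hp₂.1 h hp₁.2 z2 z1
        have hdvd : (k-1) ∣ (p₁ - p₁ / P) - (p₂ - p₂ / P) :=
          (Nat.modEq_iff_dvd' (le_of_lt d1)).mp hc.symm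
        have := Nat.le_of_dvd (by omega) hdvd
        omega
  have hcard : (Finset.Ico a (a+k)).card = k := by
    rw [Nat.card_Ico]; omega
  have hcoltlt : ∀ p, col p < k := by
    intro p
    simp only [hcol]
    split
    · omega
    · have := Nat.mod_lt (p - p / P) hk1
      omega
  have himg : (Finset.Ico a (a+k)).image col = Finset.range k := by
    apply Finset.eq_of_subset_of_card_le
    · intro ii hii
      simp only [Finset.mem_image] at hii
      obtain ⟨p, _, rfl⟩ := hii
      exact Finset.mem_range.mpr (hcoltlt p)
    · rw [Finset.card_range, Finset.card_image_of_injOn (fun p hp q hq h => hinj p hp q hq h),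
        hcard]
  have hmem : i ∈ (Finset.Ico a (a+k)).image col := by
    rw [himg]; exact Finset.mem_range.mpr hi
  simp only [Finset.mem_image] at hmem
  obtain ⟨p, hp, hpi⟩ := hmem
  have : (Finset.Ico a (a+k)).filter (fun q => col q = i) = {p} := by
    ext q
    simp only [Finset.mem_filter, Finset.mem_singleton]
    constructor
    · rintro ⟨hq, hqi⟩
      exact hinj q hq p hp (by rw [hqi, hpi])
    · rintro rfl
      exact ⟨hp, hpi⟩
  rw [this, Finset.card_singleton]

set_option maxHeartbeats 1000000 in
/-- consequence of Proposition 1.6: with `w₁ = k-1` and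
`wᵢ = ⌊k/(k-ℓ)⌋(k-ℓ) - 1` for `i ≥ 2`, for every real `x ≥ 0` there is a `k`-uniform
`ℓ`-path with vertex classes `U₁, …, U_k` (each edge meeting each class exactly once)
with `|Uᵢ| = wᵢx ± k`. -/
theorem statement8 (k ℓ : ℕ) (hk : 3 ≤ k) (hℓ1 : 1 ≤ ℓ) (hℓ2 : ℓ ≤ k - 1)
    (w : Fin k → ℕ)
    (hw : ∀ i : Fin k, w i = if (i : ℕ) = 0 then k - 1 else k / (k - ℓ) * (k - ℓ) - 1)
    (x : ℝ) (hx : 0 ≤ x) :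
    ∃ (E : Finset (Finset ℕ)) (vs : List ℕ), IsLPath k ℓ E vs ∧
      ∃ U : Fin k → Finset ℕ,
        (∀ i j, i ≠ j → Disjoint (U i) (U j)) ∧
        Finset.univ.biUnion U = vs.toFinset ∧
        (∀ i, ∀ e ∈ E, (e ∩ U i).card = 1) ∧
        (∀ i, (w i : ℝ) * x - (k : ℝ) ≤ ((U i).card : ℝ) ∧
          ((U i).card : ℝ) ≤ (w i : ℝ) * x + (k : ℝ)) := by
  -- basic numeric setup
  obtain ⟨d, hd⟩ : ∃ d, d = k - ℓ := ⟨_, rfl⟩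
  have hd1 : 1 ≤ d := by omega
  have hdk : d ≤ k := by omega
  have hkdl : d + ℓ = k := by omega
  obtain ⟨q, hq⟩ : ∃ q, q = k / d := ⟨_, rfl⟩
  obtain ⟨P, hP⟩ : ∃ P, P = q * d := ⟨_, rfl⟩
  have hPr : P + k % d = k := by
    have h := Nat.div_add_mod k d
    rw [← hq] at h
    have h2 : P = q * d := hP
    have h3 : q * d = d * q := Nat.mul_comm _ _
    omega
  have hrd : k % d < d := Nat.mod_lt _ (by omega)
  have hPk : P ≤ k := by omega
  have hP2 : 2 ≤ P := by omega
  have hP0 : 0 < P := by omega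
  have hq1 : 1 ≤ q := by
    rcases Nat.eq_zero_or_pos q with h | h
    · exfalso; rw [hP, h] at hPr; simp at hPr; omega
    · exact h
  have hk1 : (0:ℕ) < k - 1 := by omega
  -- choice of the number of edges
  obtain ⟨y, hy⟩ : ∃ y : ℝ, y = (q : ℝ) * ((k:ℝ) - 1) * x := ⟨_, rfl⟩
  have hk3R : (3:ℝ) ≤ (k:ℝ) := by exact_mod_cast hk
  have hy0 : 0 ≤ y := by
    rw [hy]
    apply mul_nonneg (mul_nonneg (by positivity) (by linarith)) hx
  obtain ⟨m, hm⟩ : ∃ m, m = max 1 ⌈y⌉₊ := ⟨_, rfl⟩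
  have hm1 : 1 ≤ m := hm ▸ le_max_left _ _
  have hmyl : y ≤ (m : ℝ) := le_trans (Nat.le_ceil y) (by rw [hm]; exact_mod_cast le_max_right 1 ⌈y⌉₊)
  have hmyu : (m : ℝ) ≤ y + 1 := by
    rcases max_choice 1 ⌈y⌉₊ with h | h <;> rw [hm, h]
    · simpa using by linarith
    · have := Nat.ceil_lt_add_one hy0
      exact_mod_cast this.le
  obtain ⟨L, hL⟩ : ∃ L, L = m * d + ℓ := ⟨_, rfl⟩
  have hLk : k ≤ L := by
    have : d ≤ m * d := Nat.le_mul_of_pos_left d (by omega)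
    omega
  -- the coloring
  obtain ⟨col, hcol⟩ : ∃ col : ℕ → ℕ,
      col = fun p => if p % P = P - 1 then 0 else (p - p / P) % (k-1) + 1 := ⟨_, rfl⟩
  have hcoltlt : ∀ p, col p < k := by
    intro p
    simp only [hcol]
    split
    · omega
    · have := Nat.mod_lt (p - p / P) hk1
      omega
  refine ⟨pathEdges k ℓ (List.range L), List.range L,
    ⟨List.nodup_range, ⟨m, hm1, by rw [List.length_range, hL, hd]⟩, rfl⟩,
    fun i => (Finset.range L).filter (fun p => col p = (i:ℕ)), ?_, ?_, ?_, ?_⟩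
  · -- disjoint
    intro i j hij
    refine Finset.disjoint_left.mpr ?_
    intro p hpi hpj
    simp only [mem_filter] at hpi hpj
    exact hij (Fin.ext (hpi.2 ▸ hpj.2.symm ▸ rfl))
  · -- biUnion
    ext p
    simp only [mem_biUnion, mem_filter, mem_range, List.mem_toFinset, List.mem_range, mem_univ,
      true_and]
    constructor
    · rintro ⟨i, hpL, _⟩; exact hpL
    · intro hpL; exact ⟨⟨col p, hcoltlt p⟩, hpL, rfl⟩
  · -- each edge meets each class once
    intro i e he
    rw [pathEdges] at he
    rw [← hd] at he
    simp only [Finset.mem_image, Finset.mem_range, List.length_range] at he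
    obtain ⟨j, hj, rfl⟩ := he
    have hdiv : (L - ℓ) / d = m := by
      have : L - ℓ = m * d := by omega
      rw [this, Nat.mul_div_cancel _ (by omega : 0 < d)]
    rw [hdiv] at hj
    obtain ⟨a, hadef⟩ : ∃ a, a = j * d := ⟨_, rfl⟩
    rw [← hadef]
    have hak : a + k ≤ L := by
      have h1 : (j+1) * d ≤ m * d := Nat.mul_le_mul_right _ (by omega)
      have h2 : (j+1) * d = j * d + d := by ring
      omega
    have hlist : ((List.range L).drop a).take k = List.range' a k := by
      apply List.ext_getElem
      · simp; omega
      · intro t h1 h2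
        simp [List.getElem_take, List.getElem_drop, List.getElem_range, List.getElem_range']
    have hfin : (List.range' a k).toFinset = Finset.Ico a (a+k) := by
      ext p
      rw [List.mem_toFinset, List.mem_range', Finset.mem_Ico]
      constructor
      · rintro ⟨t, ht, rfl⟩; omega
      · rintro ⟨h1, h2⟩; exact ⟨p - a, by omega, by omega⟩
    rw [hlist, hfin]
    have hint : Finset.Ico a (a+k) ∩ ((Finset.range L).filter (fun p => col p = (i:ℕ)))
        = (Finset.Ico a (a+k)).filter (fun p => col p = (i:ℕ)) := by
      ext p
      simp only [Finset.mem_inter, Finset.mem_filter, Finset.mem_Ico, Finset.mem_range]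
      constructor
      · rintro ⟨h1, _, h3⟩; exact ⟨h1, h3⟩
      · rintro ⟨h1, h2⟩; exact ⟨h1, ⟨by omega, h2⟩⟩
    rw [hint]
    -- window position condition
    have haP : a % P + (k - P) < P := by
      have hdvdP : d ∣ P := ⟨q, by rw [hP, Nat.mul_comm]⟩
      have hdvda : d ∣ a := ⟨j, by rw [hadef, Nat.mul_comm]⟩
      have hdvdm : d ∣ a % P := (Nat.dvd_mod_iff hdvdP).mpr hdvda
      obtain ⟨t, ht⟩ := hdvdm
      have hmP : a % P < P := Nat.mod_lt _ hP0
      have htq : t < q := by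
        by_contra hc
        push_neg at hc
        have : q * d ≤ t * d := Nat.mul_le_mul_right _ hc
        have : d * t = t * d := Nat.mul_comm _ _
        omega
      have : t * d + d ≤ q * d := by
        have := Nat.mul_le_mul_right d (show t + 1 ≤ q by omega)
        have h2 : (t+1) * d = t * d + d := by ring
        omega
      have : d * t = t * d := Nat.mul_comm _ _
      omega
    rw [hcol]
    exact window_card k P a hk hP0 hPk haP (i:ℕ) i.isLt
  · -- cardinalities
    intro i
    beta_reduce
    have hwi := hw i
    rw [← hd, ← hq, ← hP] at hwi
    -- real number facts
    have hdR : (1:ℝ) ≤ (d:ℝ) := by exact_mod_cast hd1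
    have hqR : (1:ℝ) ≤ (q:ℝ) := by exact_mod_cast hq1
    have hPR : (P:ℝ) = (q:ℝ) * d := by exact_mod_cast hP
    have hPRk : (P:ℝ) ≤ (k:ℝ) := by exact_mod_cast hPk
    have hP2R : (2:ℝ) ≤ (P:ℝ) := by exact_mod_cast hP2
    have hLR : (L:ℝ) = (m:ℝ) * d + (ℓ:ℝ) := by exact_mod_cast hL
    have hlR : (ℓ:ℝ) = (k:ℝ) - d := by
      have h : ((d:ℝ) + (ℓ:ℝ)) = (k:ℝ) := by exact_mod_cast hkdl
      linarith
    have hl0 : (0:ℝ) ≤ (ℓ:ℝ) := by positivity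
    by_cases hv : (i:ℕ) = 0
    · -- the big class
      rw [if_pos hv] at hwi
      have hfe : (Finset.range L).filter (fun p => col p = (i:ℕ))
          = (Finset.range L).filter (fun p => p % P = P - 1) := by
        apply Finset.filter_congr
        intro p _
        rw [hv]
        simp only [hcol]
        by_cases z : p % P = P - 1 <;> simp [z]
      rw [hfe, count_mod P (P-1) L hP0 (by omega), if_pos (by omega)]
      have hsub : L - (P-1) - 1 = L - P := by omega
      rw [hsub]
      obtain ⟨A, hA⟩ : ∃ A, A = (L - P) / P + 1 := ⟨_, rfl⟩
      rw [← hA]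
      have hAf : P * ((L-P)/P) + (L-P) % P = L - P := Nat.div_add_mod _ _
      have hAr : (L - P) % P < P := Nat.mod_lt _ hP0
      have hA1 : A * P ≤ L := by
        have : A * P = P * ((L-P)/P) + P := by rw [hA]; ring
        omega
      have hA2 : L < A * P + P := by
        have : A * P = P * ((L-P)/P) + P := by rw [hA]; ring
        omega
      have hA1R : (A:ℝ) * P ≤ (L:ℝ) := by exact_mod_cast hA1
      have hA2R : (L:ℝ) < (A:ℝ) * P + P := by exact_mod_cast hA2
      rw [hwi]
      have hwR : ((k-1 : ℕ) : ℝ) = (k:ℝ) - 1 := by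
        have : (1:ℕ) ≤ k := by omega
        push_cast [Nat.cast_sub this]
        ring
      rw [hwR]
      have hP0R : (0:ℝ) < P := by linarith
      constructor
      · -- lower bound
        have h1 : ((k:ℝ)-1) * x * P ≤ (m:ℝ) * d := by
          have : (q:ℝ) * ((k:ℝ)-1) * x * d ≤ (m:ℝ) * d := by
            rw [← hy]
            apply mul_le_mul_of_nonneg_right hmyl (by linarith)
          calc ((k:ℝ)-1) * x * P = (q:ℝ) * ((k:ℝ)-1) * x * d := by rw [hPR]; ring
          _ ≤ (m:ℝ) * d := this
        have h2 : ((k:ℝ)-1) * x * P < (A:ℝ) * P + P := by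
          calc ((k:ℝ)-1) * x * P ≤ (m:ℝ) * d := h1
          _ ≤ (L:ℝ) := by rw [hLR]; linarith
          _ < (A:ℝ) * P + P := hA2R
        have h3 : ((k:ℝ)-1) * x < (A:ℝ) + 1 := by
          have := (mul_lt_mul_iff_of_pos_right hP0R).mp (by linarith [h2] : ((k:ℝ)-1) * x * P < ((A:ℝ) + 1) * P)
          exact this
        linarith
      · -- upper bound
        have h1 : (m:ℝ) * d ≤ ((k:ℝ)-1) * x * P + d := by
          have : (m:ℝ) * d ≤ ((q:ℝ) * ((k:ℝ)-1) * x + 1) * d := by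
            rw [← hy]
            apply mul_le_mul_of_nonneg_right hmyu (by linarith)
          calc (m:ℝ) * d ≤ ((q:ℝ) * ((k:ℝ)-1) * x + 1) * d := this
          _ = ((k:ℝ)-1) * x * P + d := by rw [hPR]; ring
        have h2 : (A:ℝ) * P ≤ ((k:ℝ)-1) * x * P + k := by
          calc (A:ℝ) * P ≤ (L:ℝ) := hA1R
          _ = (m:ℝ) * d + ℓ := hLR
          _ ≤ ((k:ℝ)-1) * x * P + d + ℓ := by linarith
          _ = ((k:ℝ)-1) * x * P + k := by rw [hlR]; ring
        have h3 : (A:ℝ) * P ≤ (((k:ℝ)-1) * x + k) * P := by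
          have hkP : (k:ℝ) ≤ (k:ℝ) * P := by nlinarith
          nlinarith
        have := (mul_le_mul_iff_of_pos_right hP0R).mp h3
        linarith
    · -- the small classes
      rw [if_neg hv] at hwi
      have hik : (i:ℕ) < k := i.isLt
      have hi1 : 1 ≤ (i:ℕ) := by omega
      obtain ⟨c, hc⟩ : ∃ c, c = (i:ℕ) - 1 := ⟨_, rfl⟩
      have hck : c < k - 1 := by omega
      have hfe : (Finset.range L).filter (fun p => col p = (i:ℕ))
          = (Finset.range L).filter (fun p => p % P ≠ P - 1 ∧ (p - p / P) % (k-1) = c) := by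
        apply Finset.filter_congr
        intro p _
        simp only [hcol]
        by_cases z : p % P = P - 1 <;> simp [z]
        · omega
        · have := Nat.mod_lt (p - p / P) hk1
          constructor
          · intro h; omega
          · intro h; omega
      rw [hfe, colcount (k-1) P L c hP2, count_mod (k-1) c (L - L/P) hk1 hck]
      obtain ⟨N, hN⟩ : ∃ N, N = L - L / P := ⟨_, rfl⟩
      rw [← hN]
      obtain ⟨B, hB⟩ : ∃ B, B = L / P := ⟨_, rfl⟩
      have hNB : N = L - B := by rw [hN, hB]
      have hBf : P * B + L % P = L := by rw [hB]; exact Nat.div_add_mod _ _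
      have hBr : L % P < P := Nat.mod_lt _ hP0
      have hBL : B ≤ L := by rw [hB]; exact Nat.div_le_self _ _
      obtain ⟨T, hT⟩ : ∃ T, T = (if c < N then (N - c - 1) / (k-1) + 1 else 0) := ⟨_, rfl⟩
      rw [← hT]
      -- ℕ bounds on T
      have hF1 : N < (T + 1) * (k - 1) := by
        by_cases hcN : c < N
        · rw [hT, if_pos hcN]
          obtain ⟨u, hu⟩ : ∃ u, u = (N - c - 1) / (k-1) := ⟨_, rfl⟩
          rw [← hu]
          have hdm := Nat.div_add_mod (N - c - 1) (k-1)
          rw [← hu] at hdm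
          have hrr : (N - c - 1) % (k-1) < k - 1 := Nat.mod_lt _ hk1
          have e1 : (u + 1 + 1) * (k-1) = (k-1) * u + 2 * (k-1) := by ring
          omega
        · rw [hT, if_neg hcN]
          omega
      have hF2 : T * (k - 1) < N + (k - 1) := by
        by_cases hcN : c < N
        · rw [hT, if_pos hcN]
          obtain ⟨u, hu⟩ : ∃ u, u = (N - c - 1) / (k-1) := ⟨_, rfl⟩
          rw [← hu]
          have hdm := Nat.div_add_mod (N - c - 1) (k-1)
          rw [← hu] at hdm
          have hrr : (N - c - 1) % (k-1) < k - 1 := Nat.mod_lt _ hk1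
          have e2 : (u + 1) * (k-1) = (k-1) * u + (k-1) := by ring
          omega
        · rw [hT, if_neg hcN]
          omega
      -- pass to the reals
      have hNR : (N:ℝ) = (L:ℝ) - (B:ℝ) := by
        rw [hNB]
        push_cast [Nat.cast_sub hBL]
        ring
      have hBfR : (P:ℝ) * B ≤ (L:ℝ) ∧ (L:ℝ) < (P:ℝ) * B + P := by
        constructor
        · exact_mod_cast le_of_le_of_eq (Nat.le_add_right _ _) hBf
        · have : L < P * B + P := by omega
          exact_mod_cast this
      have hkk : ((k - 1 : ℕ) : ℝ) = (k:ℝ) - 1 := by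
        have : (1:ℕ) ≤ k := by omega
        push_cast [Nat.cast_sub this]
        ring
      have hF1R : (N:ℝ) < ((T:ℝ) + 1) * ((k:ℝ) - 1) := by
        have := hF1
        have h' : (N:ℝ) < ((T + 1 : ℕ) : ℝ) * (((k-1:ℕ)):ℝ) := by exact_mod_cast this
        rw [hkk] at h'
        push_cast at h'
        convert h' using 2
      have hF2R : (T:ℝ) * ((k:ℝ) - 1) < (N:ℝ) + ((k:ℝ) - 1) := by
        have h' : ((T * (k-1) : ℕ) : ℝ) < ((N + (k-1) : ℕ) : ℝ) := by exact_mod_cast hF2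
        push_cast [hkk] at h'
        convert h' using 2
      rw [hwi]
      have hwPR : ((P - 1 : ℕ) : ℝ) = (P:ℝ) - 1 := by
        have : (1:ℕ) ≤ P := by omega
        push_cast [Nat.cast_sub this]
        ring
      rw [hwPR]
      have hP0R : (0:ℝ) < P := by linarith
      have hk1R : (0:ℝ) < (k:ℝ) - 1 := by linarith
      -- key real bounds on N
      have hNlower : (P:ℝ) * N ≥ ((k:ℝ)-1) * x * ((P:ℝ)-1) * P := by
        have h1 : (P:ℝ) * N = (P:ℝ) * L - (P:ℝ) * B := by rw [hNR]; ring
        have h2 : (P:ℝ) * N ≥ (P:ℝ) * L - L := by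
          rw [h1]; linarith [hBfR.1]
        have h3 : (L:ℝ) ≥ y * d := by
          rw [hLR]
          have : y * d ≤ (m:ℝ) * d := mul_le_mul_of_nonneg_right hmyl (by linarith)
          linarith
        have h4 : (P:ℝ) * L - L = (L:ℝ) * ((P:ℝ) - 1) := by ring
        have h5 : (L:ℝ) * ((P:ℝ) - 1) ≥ y * d * ((P:ℝ) - 1) := by
          apply mul_le_mul_of_nonneg_right h3 (by linarith)
        have h6 : y * d * ((P:ℝ) - 1) = ((k:ℝ)-1) * x * ((P:ℝ)-1) * P := by
          rw [hy, hPR]; ring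
        linarith
      have hNupper : (P:ℝ) * N < ((k:ℝ)-1) * x * ((P:ℝ)-1) * P + (k:ℝ) * ((P:ℝ)-1) + P := by
        have h1 : (P:ℝ) * N = (P:ℝ) * L - (P:ℝ) * B := by rw [hNR]; ring
        have h2 : (P:ℝ) * N < (P:ℝ) * L - L + P := by
          rw [h1]; linarith [hBfR.2]
        have h3 : (L:ℝ) ≤ y * d + k := by
          rw [hLR]
          have : (m:ℝ) * d ≤ (y + 1) * d := mul_le_mul_of_nonneg_right hmyu (by linarith)
          have h' : (y+1) * d = y * d + d := by ring
          rw [hlR]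
          linarith
        have h4 : (P:ℝ) * L - L = (L:ℝ) * ((P:ℝ) - 1) := by ring
        have h5 : (L:ℝ) * ((P:ℝ) - 1) ≤ (y * d + k) * ((P:ℝ) - 1) := by
          apply mul_le_mul_of_nonneg_right h3 (by linarith)
        have h6 : (y * d + k) * ((P:ℝ) - 1) = ((k:ℝ)-1) * x * ((P:ℝ)-1) * P + (k:ℝ)*((P:ℝ)-1) := by
          rw [hy, hPR]; ring
        linarith
      constructor
      · -- lower bound
        have h7 : (N:ℝ) ≥ ((k:ℝ)-1) * x * ((P:ℝ)-1) := by
          have e : ((k:ℝ)-1) * x * ((P:ℝ)-1) * P = (P:ℝ) * (((k:ℝ)-1) * x * ((P:ℝ)-1)) := by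
            ring
          rw [e] at hNlower
          exact le_of_mul_le_mul_left hNlower hP0R
        have h8 : ((k:ℝ)-1) * x * ((P:ℝ)-1) < ((T:ℝ) + 1) * ((k:ℝ) - 1) := by linarith
        have h9 : x * ((P:ℝ)-1) < (T:ℝ) + 1 := by
          have e1 : ((k:ℝ)-1) * x * ((P:ℝ)-1) = (((k:ℝ)-1)) * (x * ((P:ℝ)-1)) := by ring
          have e2 : ((T:ℝ) + 1) * ((k:ℝ) - 1) = (((k:ℝ)-1)) * ((T:ℝ) + 1) := by ring
          rw [e1, e2] at h8
          exact lt_of_mul_lt_mul_left h8 (by linarith)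
        linarith
      · -- upper bound
        have h7 : (P:ℝ) * ((T:ℝ) * ((k:ℝ)-1)) < (P:ℝ) * N + (P:ℝ) * ((k:ℝ)-1) := by
          have := mul_lt_mul_of_pos_left hF2R hP0R
          have e : (P:ℝ) * ((N:ℝ) + ((k:ℝ)-1)) = (P:ℝ) * N + (P:ℝ) * ((k:ℝ)-1) := by ring
          linarith [this, e.le, e.ge]
        have h8 : (P:ℝ) * ((T:ℝ) * ((k:ℝ)-1)) <
            ((k:ℝ)-1) * x * ((P:ℝ)-1) * P + (k:ℝ) * ((P:ℝ)-1) + P + (P:ℝ) * ((k:ℝ)-1) := by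
          linarith
        have h9 : (k:ℝ) * ((P:ℝ)-1) + P + (P:ℝ) * ((k:ℝ)-1) ≤ (P:ℝ) * ((k:ℝ)-1) * k := by
          nlinarith [mul_nonneg (mul_nonneg (by linarith : (0:ℝ) ≤ (P:ℝ))
            (by linarith : (0:ℝ) ≤ (k:ℝ))) (by linarith : (0:ℝ) ≤ (k:ℝ) - 3)]
        have h10 : ((P:ℝ) * ((k:ℝ)-1)) * (T:ℝ) ≤ ((P:ℝ) * ((k:ℝ)-1)) * ((((P:ℝ)-1)) * x + k) := by
          have e1 : (P:ℝ) * ((T:ℝ) * ((k:ℝ)-1)) = ((P:ℝ)*((k:ℝ)-1)) * T := by ring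
          have e2 : ((P:ℝ)*((k:ℝ)-1)) * ((((P:ℝ)-1)) * x + k)
              = ((k:ℝ)-1) * x * ((P:ℝ)-1) * P + (P:ℝ) * ((k:ℝ)-1) * k := by ring
          have e3 : (P:ℝ) * ((k:ℝ)-1) * k = (P:ℝ) * (((k:ℝ)-1) * k) := by ring
          rw [e2]
          have h9' : (k:ℝ) * ((P:ℝ)-1) + P + (P:ℝ) * ((k:ℝ)-1) ≤ (P:ℝ) * ((k:ℝ)-1) * k := h9
          linarith [e1.le, e1.ge]
        have hpos : (0:ℝ) < (P:ℝ) * ((k:ℝ)-1) := by positivity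
        have h11 : (T:ℝ) ≤ ((P:ℝ)-1) * x + k := le_of_mul_le_mul_left h10 hpos
        exact h11
end

section
/- Fix integers k ≥ 3 and 1 ≤ ℓ ≤ k-1 and let n be a positive integer divisible by ⌊k/(k-ℓ)⌋(k-ℓ). Let A and B be disjoint sets with |A| = n/(⌊k/(k-ℓ)⌋(k-ℓ)) + 1 and |B| = n - |A|, and let H_ext be the k-graph on vertex set A ∪ B whose edges are all k-element subsets e of A ∪ B with |e ∩ A| ∈ {0,1}. Then (assuming n is sufficiently large in terms of k) H_ext has minimum positive codegree δ⁺(H_ext) = (1 - 1/(⌊k/(k-ℓ)⌋(k-ℓ)))·n - (k-1), has no isolated vertices, and contains no Hamilton ℓ-cycle. -/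
open Finset

/-- `E` contains a Hamilton `ℓ`-cycle: there is a cyclic ordering `vs` of all the vertices
such that every block of `k` consecutive vertices (stepping by `k - ℓ`) is an edge of `E`. -/
def HasHamiltonLCycle {V : Type*} [DecidableEq V] [Fintype V] (k ℓ : ℕ)
    (E : Finset (Finset V)) : Prop :=
  ∃ vs : List V, vs.Nodup ∧ vs.toFinset = Finset.univ ∧ k ≤ vs.length ∧
    (k - ℓ) ∣ vs.length ∧ cycleEdges k ℓ vs ⊆ E

private lemma degH_ge {V : Type*} [DecidableEq V] (E : Finset (Finset V))
    (S W : Finset V) (hW : ∀ w ∈ W, w ∉ S) (hE : ∀ w ∈ W, insert w S ∈ E) :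
    W.card ≤ degH E S := by
  unfold degH
  apply Finset.card_le_card_of_injOn (fun w => insert w S)
  · intro w hw
    exact Finset.mem_filter.mpr ⟨hE w hw, Finset.subset_insert _ _⟩
  · intro w₁ h₁ w₂ h₂ h
    have h' : insert w₁ S = insert w₂ S := h
    have : w₁ ∈ insert w₂ S := h' ▸ Finset.mem_insert_self w₁ S
    rcases Finset.mem_insert.mp this with h' | h'
    · exact h'
    · exact absurd h' (hW w₁ h₁)

private lemma count_blocks {α : Type*} [DecidableEq α] (vs : List α) (a : α)
    (ha : a ∈ vs) (k d n q : ℕ) (hd : 0 < d) (hlen : vs.length = n) (hkn : k ≤ n)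
    (hdn : d ∣ n) (hqk : q * d ≤ k) :
    q ≤ ((Finset.range (n / d)).filter
      (fun i => a ∈ (((vs ++ vs).drop (i * d)).take k).toFinset)).card := by
  obtain ⟨p, hp, hpa⟩ := List.mem_iff_getElem.mp ha
  rw [hlen] at hp
  set N := n / d with hN
  have hNd : d * N = n := Nat.mul_div_cancel' hdn
  have hqN : q ≤ N := by
    have h1 : q * d ≤ N * d := by
      calc q * d ≤ k := hqk
        _ ≤ n := hkn
        _ = N * d := by rw [← hNd]; ring
    exact Nat.le_of_mul_le_mul_right h1 hd
  set i₀ := p / d with hi₀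
  have hi₀d : i₀ * d ≤ p := Nat.div_mul_le_self p d
  have hpmod : i₀ * d + p % d = p := by
    rw [hi₀, mul_comm]; exact Nat.div_add_mod p d
  have hpm : p % d < d := Nat.mod_lt _ hd
  have hi₀N : i₀ < N := by
    rw [hi₀, hN]
    rw [Nat.div_lt_iff_lt_mul hd, Nat.div_mul_cancel hdn]
    exact hp
  clear_value N i₀
  clear hN hi₀
  have hll : (vs ++ vs).length = n + n := by
    rw [List.length_append, hlen]
  have := Finset.card_le_card_of_injOn
    (fun t => if t ≤ i₀ then i₀ - t else i₀ + N - t)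
    (s := Finset.range q)
    (t := (Finset.range N).filter
      (fun i => a ∈ (((vs ++ vs).drop (i * d)).take k).toFinset))
    ?_ ?_
  · simpa using this
  · intro u hu
    simp only [Finset.mem_coe, Finset.mem_range] at hu ⊢
    set i := if u ≤ i₀ then i₀ - u else i₀ + N - u with hi
    have hiN : i < N := by rw [hi]; split <;> omega
    have hidx : i * d + (p % d + u * d) = p ∨ i * d + (p % d + u * d) = p + n := by
      rw [hi]
      split
      · left
        have h1 : (i₀ - u) * d = i₀ * d - u * d := Nat.sub_mul _ _ _
        have h2 : u * d ≤ i₀ * d := Nat.mul_le_mul_right d (by omega)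
        omega
      · right
        have h1 : (i₀ + N - u) * d = i₀ * d + (N - u) * d := by
          have he : i₀ + N - u = i₀ + (N - u) := by omega
          rw [he, Nat.add_mul]
        have h2 : (N - u) * d + u * d = N * d := by
          rw [← Nat.add_mul]; congr 1; omega
        have h3 : N * d = n := by rw [← hNd]; ring
        omega
    have hjk : p % d + u * d < k := by
      have h1 : (u + 1) * d ≤ q * d := Nat.mul_le_mul_right d (by omega)
      have h2 : (u + 1) * d = u * d + d := by ring
      omega
    refine Finset.mem_filter.mpr ⟨Finset.mem_range.mpr hiN, ?_⟩
    rw [List.mem_toFinset, List.mem_iff_getElem]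
    have hlen1 : i * d + k ≤ n + n := by
      have : i * d + d ≤ N * d := by
        have : (i + 1) * d ≤ N * d := Nat.mul_le_mul_right d (by omega)
        linarith [this, Nat.add_mul i 1 d]
      have h3 : N * d = n := by rw [← hNd]; ring
      omega
    have hlt : p % d + u * d < (((vs ++ vs).drop (i * d)).take k).length := by
      rw [List.length_take, List.length_drop, hll]
      omega
    refine ⟨p % d + u * d, hlt, ?_⟩
    rw [List.getElem_take, List.getElem_drop]
    rcases hidx with h | h
    · have h' : (vs ++ vs)[i * d + (p % d + u * d)]'(by omega) =
          (vs ++ vs)[p]'(by omega) := by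
        congr 1
      rw [h']
      rw [List.getElem_append_left (hlen ▸ hp)]
      exact hpa
    · have h' : (vs ++ vs)[i * d + (p % d + u * d)]'(by omega) =
          (vs ++ vs)[p + n]'(by omega) := by
        congr 1
      rw [h']
      rw [List.getElem_append_right (by omega)]
      have : p + n - vs.length = p := by omega
      simp only [this]
      exact hpa
  · intro t₁ h₁ t₂ h₂ h
    simp only [Finset.coe_range, Set.mem_Iio] at h₁ h₂
    have e₁ : t₁ < N := lt_of_lt_of_le h₁ hqN
    have e₂ : t₂ < N := lt_of_lt_of_le h₂ hqN
    simp only at h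
    split_ifs at h <;> omega

/-- Construction 1.7: for sufficiently large `n` divisible by
`⌊k/(k-ℓ)⌋(k-ℓ)`, the `k`-graph on `A ∪ B` (`|A| = n/(⌊k/(k-ℓ)⌋(k-ℓ)) + 1`,
`B` the complement) whose edges are the `k`-sets meeting `A` in at most one vertex
has `δ⁺ = (1 - 1/(⌊k/(k-ℓ)⌋(k-ℓ)))n - (k-1)`, no isolated vertices, and no Hamilton
`ℓ`-cycle. -/
theorem statement9 (k ℓ : ℕ) (hk : 3 ≤ k) (hℓ1 : 1 ≤ ℓ) (hℓ2 : ℓ ≤ k - 1) :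
    ∃ n₀ : ℕ, ∀ n : ℕ, n₀ ≤ n → (k / (k - ℓ) * (k - ℓ)) ∣ n →
      ∀ A : Finset (Fin n), A.card = n / (k / (k - ℓ) * (k - ℓ)) + 1 →
        ∀ E : Finset (Finset (Fin n)),
          E = (Finset.univ.powersetCard k).filter (fun e => (e ∩ A).card ≤ 1) →
          (posCodeg k E : ℝ) = (1 - 1 / ((k / (k - ℓ) * (k - ℓ) : ℕ) : ℝ)) * n - ((k : ℝ) - 1) ∧
          (∀ v : Fin n, 1 ≤ degH E {v}) ∧
          ¬ HasHamiltonLCycle k ℓ E := by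
  refine ⟨4 * k + 4, ?_⟩
  intro n hn hdvd A hA E hE
  have hkl : ℓ < k := by omega
  set d := k - ℓ with hdd
  have hd : 0 < d := by omega
  have hdk : d < k := by omega
  set q := k / d with hq
  set m := q * d with hm
  clear_value q
  have hqd_le : m ≤ k := by rw [hm, hq]; exact Nat.div_mul_le_self k d
  have hq1 : 1 ≤ q := by rw [hq]; exact (Nat.one_le_div_iff hd).mpr (le_of_lt hdk)
  have hm2 : 2 ≤ m := by
    have h1 := Nat.div_add_mod k d
    have h2 : k % d < d := Nat.mod_lt _ hd
    have h3 : d * q + k % d = k := by rw [hq]; exact h1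
    have h4 : m = d * q := by rw [hm]; ring
    omega
  have hdm : d ∣ m := ⟨q, by rw [hm, mul_comm]⟩
  set t := n / m with ht
  have htm : m * t = n := Nat.mul_div_cancel' hdvd
  clear_value t m
  have h2t : 2 * t ≤ n := by
    calc 2 * t ≤ m * t := Nat.mul_le_mul_right t hm2
      _ = n := htm
  have htk : t + 2 * k + 2 ≤ n := by omega
  have hAcard : A.card = t + 1 := hA
  have hAc : Aᶜ.card = n - (t + 1) := by
    rw [Finset.card_compl, hAcard]; simp
  have hEmem : ∀ e : Finset (Fin n), e ∈ E ↔ (e.card = k ∧ (e ∩ A).card ≤ 1) := by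
    intro e
    rw [hE, Finset.mem_filter, Finset.mem_powersetCard]
    exact ⟨fun ⟨⟨_, h1⟩, h2⟩ => ⟨h1, h2⟩, fun ⟨h1, h2⟩ => ⟨⟨Finset.subset_univ e, h1⟩, h2⟩⟩
  -- Part 2: no isolated vertices
  have hNoIso : ∀ v : Fin n, 1 ≤ degH E {v} := by
    intro v
    have hcard : k - 1 ≤ (Aᶜ \ {v}).card := by
      have h1 := Finset.card_le_card_sdiff_add_card (s := Aᶜ) (t := ({v} : Finset (Fin n)))
      have h2 : ({v} : Finset (Fin n)).card = 1 := Finset.card_singleton v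
      omega
    obtain ⟨S₀, hS₀sub, hS₀card⟩ := Finset.exists_subset_card_eq hcard
    have hS₀' : ∀ x ∈ S₀, x ∉ A ∧ x ≠ v := by
      intro x hx
      have := hS₀sub hx
      rw [Finset.mem_sdiff, Finset.mem_compl, Finset.mem_singleton] at this
      exact this
    have hvS₀ : v ∉ S₀ := fun h => (hS₀' v h).2 rfl
    have he : insert v S₀ ∈ E := by
      rw [hEmem]
      constructor
      · rw [Finset.card_insert_of_notMem hvS₀, hS₀card]; omega
      · have hs : insert v S₀ ∩ A ⊆ {v} := by
          intro x hx
          rw [Finset.mem_inter, Finset.mem_insert] at hx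
          rcases hx.1 with h | h
          · simp [h]
          · exact absurd hx.2 (hS₀' x h).1
        calc (insert v S₀ ∩ A).card ≤ ({v} : Finset (Fin n)).card := Finset.card_le_card hs
          _ = 1 := Finset.card_singleton v
    rw [degH, Nat.succ_le_iff, Finset.card_pos]
    exact ⟨insert v S₀, Finset.mem_filter.mpr ⟨he,
      Finset.singleton_subset_iff.mpr (Finset.mem_insert_self v S₀)⟩⟩
  -- Part 1 lower bound
  have hlow : ∀ S : Finset (Fin n), S.card = k - 1 → 1 ≤ degH E S →
      n - (t + k - 1) ≤ degH E S := by
    intro S hScard hSdeg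
    rw [degH, Nat.succ_le_iff, Finset.card_pos] at hSdeg
    obtain ⟨e₀, he₀⟩ := hSdeg
    rw [Finset.mem_filter] at he₀
    have hSA : (S ∩ A).card ≤ 1 := by
      calc (S ∩ A).card ≤ (e₀ ∩ A).card :=
        Finset.card_le_card (Finset.inter_subset_inter_right he₀.2)
        _ ≤ 1 := ((hEmem e₀).mp he₀.1).2
    rcases Nat.lt_or_ge (S ∩ A).card 1 with hc | hc
    · -- S ∩ A = ∅
      have hSA0 : S ∩ A = ∅ := Finset.card_eq_zero.mp (by omega)
      have hW := degH_ge E S Sᶜ (fun w hw => Finset.mem_compl.mp hw) ?_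
      · have hSc : (Sᶜ : Finset (Fin n)).card = n - (k - 1) := by
          rw [Finset.card_compl, hScard]; simp
        omega
      · intro w hw
        rw [hEmem]
        constructor
        · rw [Finset.card_insert_of_notMem (Finset.mem_compl.mp hw), hScard]; omega
        · have hs : insert w S ∩ A ⊆ {w} := by
            intro x hx
            rw [Finset.mem_inter, Finset.mem_insert] at hx
            rcases hx.1 with h | h
            · simp [h]
            · exact absurd (Finset.mem_inter.mpr ⟨h, hx.2⟩) (by rw [hSA0]; simp)
          calc (insert w S ∩ A).card ≤ ({w} : Finset (Fin n)).card := Finset.card_le_card hs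
            _ = 1 := Finset.card_singleton w
    · -- (S ∩ A).card = 1
      have hc1 : (S ∩ A).card = 1 := le_antisymm hSA hc
      have hW := degH_ge E S (Aᶜ \ S)
        (fun w hw => (Finset.mem_sdiff.mp hw).2) ?_
      · have h1 := Finset.card_sdiff_add_card_inter Aᶜ S
        have h2 : (Aᶜ ∩ S).card = k - 2 := by
          have h3 := Finset.card_sdiff_add_card_inter S A
          have h4 : (Aᶜ ∩ S) = S \ A := by
            ext x; rw [Finset.mem_inter, Finset.mem_compl, Finset.mem_sdiff]; tauto
          rw [h4]; omega
        omega
      · intro w hw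
        rw [Finset.mem_sdiff, Finset.mem_compl] at hw
        rw [hEmem]
        constructor
        · rw [Finset.card_insert_of_notMem hw.2, hScard]; omega
        · have hs : insert w S ∩ A ⊆ S ∩ A := by
            intro x hx
            rw [Finset.mem_inter, Finset.mem_insert] at hx
            rcases hx.1 with rfl | h
            · exact absurd hx.2 hw.1
            · exact Finset.mem_inter.mpr ⟨h, hx.2⟩
          calc (insert w S ∩ A).card ≤ (S ∩ A).card := Finset.card_le_card hs
            _ = 1 := hc1
  -- Part 1: the extremal S
  obtain ⟨a, haA⟩ : A.Nonempty := by rw [← Finset.card_pos, hAcard]; omega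
  have hcard2 : k - 2 ≤ Aᶜ.card := by omega
  obtain ⟨S₀, hS₀A, hS₀c⟩ := Finset.exists_subset_card_eq hcard2
  have hS₀nA : ∀ x ∈ S₀, x ∉ A := fun x hx => Finset.mem_compl.mp (hS₀A hx)
  have haS₀ : a ∉ S₀ := fun h => hS₀nA a h haA
  set S : Finset (Fin n) := insert a S₀ with hS
  have hScard : S.card = k - 1 := by
    rw [hS, Finset.card_insert_of_notMem haS₀, hS₀c]; omega
  have hfilter : E.filter (fun e => S ⊆ e) = (Aᶜ \ S).image (fun w => insert w S) := by
    ext e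
    simp only [Finset.mem_filter, Finset.mem_image, Finset.mem_sdiff, Finset.mem_compl]
    constructor
    · rintro ⟨heE, hSe⟩
      obtain ⟨hek, heA⟩ := (hEmem e).mp heE
      have hcs : (e \ S).card = 1 := by
        rw [Finset.card_sdiff_of_subset hSe, hek, hScard]; omega
      obtain ⟨w, hw⟩ := Finset.card_eq_one.mp hcs
      have hwe : w ∈ e ∧ w ∉ S := by
        have : w ∈ e \ S := hw ▸ Finset.mem_singleton_self w
        exact Finset.mem_sdiff.mp this
      have hew : e = insert w S := by
        apply Finset.Subset.antisymm
        · intro x hx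
          by_cases hxS : x ∈ S
          · exact Finset.mem_insert_of_mem hxS
          · have hx2 : x ∈ e \ S := Finset.mem_sdiff.mpr ⟨hx, hxS⟩
            rw [hw, Finset.mem_singleton] at hx2
            exact hx2 ▸ Finset.mem_insert_self w S
        · intro x hx
          rcases Finset.mem_insert.mp hx with rfl | hxS
          · exact hwe.1
          · exact hSe hxS
      refine ⟨w, ⟨?_, hwe.2⟩, hew.symm⟩
      intro hwA
      have haw : a ≠ w := fun h => hwe.2 (h ▸ Finset.mem_insert_self a S₀)
      have h2 : ({a, w} : Finset (Fin n)) ⊆ e ∩ A := by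
        intro x hx
        rw [Finset.mem_insert, Finset.mem_singleton] at hx
        rcases hx with h | h
        · rw [h]; exact Finset.mem_inter.mpr ⟨hSe (Finset.mem_insert_self a S₀), haA⟩
        · rw [h]; exact Finset.mem_inter.mpr ⟨hwe.1, hwA⟩
      have h3 := Finset.card_le_card h2
      rw [Finset.card_pair haw] at h3
      omega
    · rintro ⟨w, ⟨hwA, hwS⟩, rfl⟩
      refine ⟨(hEmem _).mpr ⟨?_, ?_⟩, Finset.subset_insert _ _⟩
      · rw [Finset.card_insert_of_notMem hwS, hScard]; omega
      · have hs : insert w S ∩ A ⊆ {a} := by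
          intro x hx
          rw [Finset.mem_inter, Finset.mem_insert] at hx
          rcases hx.1 with rfl | hxS
          · exact absurd hx.2 hwA
          · rcases Finset.mem_insert.mp hxS with rfl | h
            · exact Finset.mem_singleton_self _
            · exact absurd hx.2 (hS₀nA x h)
        calc (insert w S ∩ A).card ≤ ({a} : Finset (Fin n)).card := Finset.card_le_card hs
          _ = 1 := Finset.card_singleton a
  have hAcS : (Aᶜ ∩ S) = S₀ := by
    ext x
    rw [Finset.mem_inter, Finset.mem_compl, hS, Finset.mem_insert]
    constructor
    · rintro ⟨hxA, rfl | hx⟩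
      · exact absurd haA hxA
      · exact hx
    · intro hx
      exact ⟨hS₀nA x hx, Or.inr hx⟩
  have hdegS : degH E S = n - (t + k - 1) := by
    rw [degH, hfilter, Finset.card_image_of_injOn ?_]
    · have h1 := Finset.card_sdiff_add_card_inter Aᶜ S
      rw [hAcS, hS₀c] at h1
      omega
    · intro w₁ h₁ w₂ h₂ hww
      simp only [Finset.coe_sdiff, Set.mem_diff, Finset.mem_coe, Finset.coe_compl,
        Set.mem_compl_iff] at h₁ h₂
      have hww' : insert w₁ S = insert w₂ S := hww
      have : w₁ ∈ insert w₂ S := hww' ▸ Finset.mem_insert_self w₁ S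
      rcases Finset.mem_insert.mp this with h | h
      · exact h
      · exact absurd h h₁.2
  have hVpos : 1 ≤ n - (t + k - 1) := by omega
  have hsetmem : (n - (t + k - 1)) ∈
      {x : ℕ | ∃ S : Finset (Fin n), S.card = k - 1 ∧ 1 ≤ degH E S ∧ degH E S = x} :=
    ⟨S, hScard, by rw [hdegS]; exact hVpos, hdegS⟩
  have hposCodeg : posCodeg k E = n - (t + k - 1) := by
    unfold posCodeg
    refine le_antisymm (Nat.sInf_le hsetmem) (le_csInf ⟨_, hsetmem⟩ ?_)
    rintro x ⟨S', h1, h2, rfl⟩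
    exact hlow S' h1 h2
  refine ⟨?_, hNoIso, ?_⟩
  · -- cast computation
    rw [hposCodeg]
    have hmR : (m : ℝ) ≠ 0 := Nat.cast_ne_zero.mpr (by omega)
    have hmt : (m : ℝ) * t = n := by exact_mod_cast htm
    have hcast : ((n - (t + k - 1) : ℕ) : ℝ) = (n : ℝ) - t - k + 1 := by
      rw [Nat.cast_sub (by omega : t + k - 1 ≤ n), Nat.cast_sub (by omega : 1 ≤ t + k)]
      push_cast; ring
    rw [hcast]
    have h1m : (1 : ℝ) / m * n = t := by
      rw [div_mul_eq_mul_div, one_mul, div_eq_iff hmR]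
      linarith [hmt]
    have : (1 - 1 / (m : ℝ)) * n = n - t := by
      rw [sub_mul, one_mul, h1m]
    rw [this]
    ring
  · -- Part 3: no Hamilton cycle
    rintro ⟨vs, hnd, htf, hklen, -, hsub⟩
    have hlenn : vs.length = n := by
      rw [← List.toFinset_card_of_nodup hnd, htf, Finset.card_univ, Fintype.card_fin]
    have hkn : k ≤ n := hlenn ▸ hklen
    have hdn : d ∣ n := hdm.trans hdvd
    set N := n / d with hN
    have hNd : d * N = n := Nat.mul_div_cancel' hdn
    clear_value N
    have hNq : N = q * t := by
      have h5 : d * (q * t) = n := by rw [← htm, hm]; ring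
      exact Nat.eq_of_mul_eq_mul_left hd (hNd.trans h5.symm)
    have hblk : ∀ i ∈ Finset.range N,
        ((((vs ++ vs).drop (i * d)).take k).toFinset ∩ A).card ≤ 1 := by
      intro i hi
      have hmem : (((vs ++ vs).drop (i * d)).take k).toFinset ∈ cycleEdges k ℓ vs := by
        unfold cycleEdges
        rw [← hdd, hlenn, ← hN]
        exact Finset.mem_image_of_mem _ hi
      have := hsub hmem
      rw [hEmem] at this
      exact this.2
    have hupper : ∑ i ∈ Finset.range N,
        ((((vs ++ vs).drop (i * d)).take k).toFinset ∩ A).card ≤ N := by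
      calc ∑ i ∈ Finset.range N, ((((vs ++ vs).drop (i * d)).take k).toFinset ∩ A).card
          ≤ (Finset.range N).card • 1 := Finset.sum_le_card_nsmul _ _ 1 hblk
        _ = N := by simp
    have hswap : ∑ i ∈ Finset.range N,
        ((((vs ++ vs).drop (i * d)).take k).toFinset ∩ A).card
        = ∑ a ∈ A, ((Finset.range N).filter
            (fun i => a ∈ (((vs ++ vs).drop (i * d)).take k).toFinset)).card := by
      have h1 : ∀ i, ((((vs ++ vs).drop (i * d)).take k).toFinset ∩ A).card
          = ∑ a ∈ A, if a ∈ (((vs ++ vs).drop (i * d)).take k).toFinset then 1 else 0 := by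
        intro i
        rw [Finset.inter_comm, ← Finset.filter_mem_eq_inter, Finset.card_filter]
      simp only [h1, Finset.card_filter]
      rw [Finset.sum_comm]
    have hlower : A.card * q ≤ ∑ i ∈ Finset.range N,
        ((((vs ++ vs).drop (i * d)).take k).toFinset ∩ A).card := by
      rw [hswap]
      calc A.card * q = ∑ _a ∈ A, q := by rw [Finset.sum_const, smul_eq_mul]
        _ ≤ _ := by
          apply Finset.sum_le_sum
          intro a ha
          have hav : a ∈ vs := by
            rw [← List.mem_toFinset, htf]; exact Finset.mem_univ a
          have hcb := count_blocks vs a hav k d n q hd hlenn hkn hdn (hm ▸ hqd_le)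
          rwa [← hN] at hcb
    rw [hAcard] at hlower
    have hfin : (t + 1) * q ≤ q * t := by
      calc (t + 1) * q ≤ _ := hlower
        _ ≤ N := hupper
        _ = q * t := hNq
    have hfin2 : q * t + q ≤ q * t := by
      calc q * t + q = (t + 1) * q := by ring
        _ ≤ q * t := hfin
    omega
end

section
/- Fix an integer k ≥ 2 and a real d ∈ (0,1). Let H be a k-partite k-graph with vertex classes X₁, …, X_k each of size m, with d(X₁, …, X_k) ≥ d. Then H has a subgraph H' (same vertex set, a subset of the edges) with at least one edge and with minimum positive codegree δ⁺(H') > dm/k. -/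
open Finset

/-- `e(V₁,…,V_k)`: the number of edges with exactly one vertex in each part `P i`. -/
def edgeCountT {V : Type*} [DecidableEq V] (k : ℕ) (E : Finset (Finset V))
    (P : Fin k → Finset V) : ℕ :=
  (E.filter (fun e => ∀ i, (e ∩ P i).card = 1)).card

/-- The density `d(V₁,…,V_k) = e(V₁,…,V_k) / ∏ᵢ |Vᵢ|`. -/
noncomputable def densityT {V : Type*} [DecidableEq V] (k : ℕ) (E : Finset (Finset V))
    (P : Fin k → Finset V) : ℝ :=
  (edgeCountT k E P : ℝ) / ∏ i, ((P i).card : ℝ)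

/-- If `f ≤ 1` on `s` and the sum is at least `s.card`, every value is `1`. -/
private lemma aux_all_eq_one {ι : Type*} [DecidableEq ι] {s : Finset ι} {f : ι → ℕ}
    (h1 : ∀ x ∈ s, f x ≤ 1) (h2 : s.card ≤ ∑ x ∈ s, f x) : ∀ x ∈ s, f x = 1 := by
  intro x hx
  by_contra hne
  have hx0 : f x = 0 := by have := h1 x hx; omega
  have hsum_le : ∑ y ∈ s.erase x, f y ≤ (s.erase x).card := by
    calc ∑ y ∈ s.erase x, f y ≤ (s.erase x).card • 1 :=
          Finset.sum_le_card_nsmul _ _ _ (fun y hy => h1 y (Finset.mem_of_mem_erase hy))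
    _ = (s.erase x).card := by simp
  have hsplit : f x + ∑ y ∈ s.erase x, f y = ∑ y ∈ s, f y := Finset.add_sum_erase s f hx
  have hc := Finset.card_erase_of_mem hx
  have hpos : 0 < s.card := Finset.card_pos.2 ⟨x, hx⟩
  omega

/-- The parts partition any finset's cardinality. -/
private lemma aux_sum_inter {V : Type*} [DecidableEq V] [Fintype V] {k : ℕ}
    {X : Fin k → Finset V}
    (hXdisj : ∀ i j, i ≠ j → Disjoint (X i) (X j))
    (hXcover : Finset.univ.biUnion X = Finset.univ)
    (A : Finset V) : ∑ i, (A ∩ X i).card = A.card := by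
  rw [← Finset.card_biUnion (by
    intro i _ j _ hij
    exact (hXdisj i j hij).mono Finset.inter_subset_right Finset.inter_subset_right)]
  congr 1
  ext v
  simp only [Finset.mem_biUnion, Finset.mem_inter, Finset.mem_univ, true_and]
  constructor
  · rintro ⟨i, hv, _⟩; exact hv
  · intro hv
    have hvu : v ∈ Finset.univ.biUnion X := by rw [hXcover]; exact Finset.mem_univ v
    obtain ⟨i, _, hi⟩ := Finset.mem_biUnion.1 hvu
    exact ⟨i, hv, hi⟩

/-- from the proof of Lemma 3.4: a `k`-partite `k`-graph with classes
of size `m` and density at least `d` has a nonempty subgraph `H'` with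
`δ⁺(H') > dm/k`. -/
theorem statement15 {V : Type*} [DecidableEq V] [Fintype V] (k : ℕ) (hk : 2 ≤ k)
    (d : ℝ) (hd0 : 0 < d) (hd1 : d < 1) (m : ℕ)
    (E : Finset (Finset V)) (hE : ∀ e ∈ E, e.card = k)
    (X : Fin k → Finset V)
    (hXdisj : ∀ i j, i ≠ j → Disjoint (X i) (X j))
    (hXcover : Finset.univ.biUnion X = Finset.univ)
    (hXpart : ∀ e ∈ E, ∀ i, (e ∩ X i).card ≤ 1)
    (hXcard : ∀ i, (X i).card = m)
    (hdens : d ≤ densityT k E X) :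
    ∃ E' ⊆ E, E'.Nonempty ∧ d * (m : ℝ) / (k : ℝ) < (posCodeg k E' : ℝ) := by
  classical
  -- every edge is transversal
  have htrans : ∀ e ∈ E, ∀ i, (e ∩ X i).card = 1 := by
    intro e he
    have hsum := aux_sum_inter hXdisj hXcover e
    rw [hE e he] at hsum
    have huniv : (Finset.univ : Finset (Fin k)).card = k := by simp
    exact fun i => aux_all_eq_one (fun j _ => hXpart e he j)
      (by rw [huniv, hsum]) i (Finset.mem_univ i)
  have hprod : ∏ i, ((X i).card : ℝ) = (m : ℝ) ^ k := by
    simp [hXcard, Finset.prod_const]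
  -- m ≥ 1
  have hm : 1 ≤ m := by
    by_contra h
    have hm0 : m = 0 := by omega
    rw [densityT, hprod, hm0] at hdens
    have : ((0 : ℕ) : ℝ) ^ k = 0 := by
      rw [Nat.cast_zero]; exact zero_pow (by omega)
    rw [this, div_zero] at hdens
    linarith
  have hmR : (1 : ℝ) ≤ (m : ℝ) := by exact_mod_cast hm
  have hkR : (0 : ℝ) < (k : ℝ) := by exact_mod_cast (by omega : 0 < k)
  set c : ℝ := d * (m : ℝ) / (k : ℝ) with hc
  have hcpos : 0 < c := by
    apply div_pos (mul_pos hd0 (by linarith)) hkR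
  -- |E| ≥ d m^k
  have hEcount : (d * (m : ℝ) ^ k) ≤ E.card := by
    have h1 : edgeCountT k E X = E.card := by
      unfold edgeCountT
      rw [Finset.filter_true_of_mem (fun e he => htrans e he)]
    rw [densityT, h1, hprod] at hdens
    have hmk : (0 : ℝ) < (m : ℝ) ^ k := by positivity
    exact (le_div_iff₀ hmk).1 hdens
  -- the counting function p
  let Tf : Finset (Finset V) → Finset (Finset V) := fun A =>
    (Finset.powersetCard (k - 1) (Finset.univ : Finset V)).filter (fun S => 1 ≤ degH A S)
  let p : Finset (Finset V) → ℕ := fun A => (Tf A).card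
  have hTfmem : ∀ A S, S ∈ Tf A ↔ (S.card = k - 1 ∧ 1 ≤ degH A S) := by
    intro A S
    simp only [Tf, Finset.mem_filter, Finset.mem_powersetCard, Finset.subset_univ, true_and]
  -- a positive-degree (k-1)-set misses exactly one part
  have hedge_of_deg : ∀ (A : Finset (Finset V)), A ⊆ E → ∀ S : Finset V, 1 ≤ degH A S →
      ∃ e ∈ E, S ⊆ e := by
    intro A hA S hS
    obtain ⟨e, he⟩ := Finset.card_pos.1 hS
    exact ⟨e, hA (Finset.mem_filter.1 he).1, (Finset.mem_filter.1 he).2⟩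
  have hstruct2 : ∀ S : Finset V, S.card = k - 1 → (∃ e ∈ E, S ⊆ e) →
      ∀ i, S ∩ X i = ∅ → ∀ j, j ≠ i → (S ∩ X j).card = 1 := by
    intro S hScard ⟨e, heE, hSe⟩ i hi j hj
    have hle : ∀ j', (S ∩ X j').card ≤ 1 := fun j' =>
      le_trans (Finset.card_le_card (Finset.inter_subset_inter hSe le_rfl))
        (le_of_eq (htrans e heE j'))
    have hsum := aux_sum_inter hXdisj hXcover S
    rw [hScard] at hsum
    have hsplit : (S ∩ X i).card + ∑ j' ∈ Finset.univ.erase i, (S ∩ X j').card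
        = ∑ j', (S ∩ X j').card :=
      Finset.add_sum_erase Finset.univ (fun j' => (S ∩ X j').card) (Finset.mem_univ i)
    have hi0 : (S ∩ X i).card = 0 := by rw [hi]; simp
    have hcerase : (Finset.univ.erase i).card = k - 1 := by
      rw [Finset.card_erase_of_mem (Finset.mem_univ i)]; simp
    exact aux_all_eq_one (fun j' _ => hle j')
      (by omega) j (Finset.mem_erase.2 ⟨hj, Finset.mem_univ j⟩)
  have hstruct1 : ∀ S : Finset V, S.card = k - 1 → (∃ e ∈ E, S ⊆ e) →
      ∃ i, S ∩ X i = ∅ := by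
    intro S hScard ⟨e, heE, hSe⟩
    have hle : ∀ j', (S ∩ X j').card ≤ 1 := fun j' =>
      le_trans (Finset.card_le_card (Finset.inter_subset_inter hSe le_rfl))
        (le_of_eq (htrans e heE j'))
    have hsum := aux_sum_inter hXdisj hXcover S
    rw [hScard] at hsum
    by_contra hcon
    push_neg at hcon
    have hge : ∀ j', 1 ≤ (S ∩ X j').card := by
      intro j'
      rcases Finset.eq_empty_or_nonempty (S ∩ X j') with h | h
      · exact absurd h (hcon j').ne_empty
      · exact Finset.card_pos.2 h
    have : k ≤ ∑ j', (S ∩ X j').card := by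
      calc k = ∑ _j' : Fin k, 1 := by simp
      _ ≤ _ := Finset.sum_le_sum (fun j' _ => hge j')
    omega
  -- bound p E ≤ k * m^(k-1)
  have hv0 : ∃ v : V, v ∈ X ⟨0, by omega⟩ := by
    have := hXcard ⟨0, by omega⟩
    have : 0 < (X ⟨0, by omega⟩).card := by omega
    exact Finset.card_pos.1 this
  obtain ⟨v₀, _⟩ := hv0
  have hpE : p E ≤ k * m ^ (k - 1) := by
    have hsub : Tf E ⊆ Finset.univ.biUnion
        (fun i : Fin k => (Tf E).filter (fun S => S ∩ X i = ∅)) := by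
      intro S hS
      obtain ⟨hScard, hSdeg⟩ := (hTfmem E S).1 hS
      obtain ⟨i, hi⟩ := hstruct1 S hScard (hedge_of_deg E le_rfl S hSdeg)
      exact Finset.mem_biUnion.2 ⟨i, Finset.mem_univ i, Finset.mem_filter.2 ⟨hS, hi⟩⟩
    have hBi : ∀ i : Fin k, ((Tf E).filter (fun S => S ∩ X i = ∅)).card ≤ m ^ (k - 1) := by
      intro i
      -- inject into piFinset
      set φ : Finset V → (Fin k → V) := fun S j =>
        if hj : (S ∩ X j).Nonempty then hj.choose else v₀ with hφ
      have hsingle : ∀ S ∈ (Tf E).filter (fun S => S ∩ X i = ∅),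
          ∀ j, j ≠ i → S ∩ X j = {φ S j} := by
        intro S hS j hj
        obtain ⟨hS1, hS2⟩ := Finset.mem_filter.1 hS
        obtain ⟨hScard, hSdeg⟩ := (hTfmem E S).1 hS1
        have h1 : (S ∩ X j).card = 1 :=
          hstruct2 S hScard (hedge_of_deg E le_rfl S hSdeg) i hS2 j hj
        obtain ⟨a, ha⟩ := Finset.card_eq_one.1 h1
        have hne : (S ∩ X j).Nonempty := ⟨a, ha ▸ Finset.mem_singleton_self a⟩
        have hmem : φ S j ∈ S ∩ X j := by
          rw [hφ]; simp only [dif_pos hne]; exact hne.choose_spec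
        rw [ha] at hmem ⊢
        rw [Finset.mem_singleton.1 hmem]
      have hrepr : ∀ S ∈ (Tf E).filter (fun S => S ∩ X i = ∅),
          S = (Finset.univ.erase i).image (fun j => φ S j) := by
        intro S hS
        obtain ⟨hS1, hS2⟩ := Finset.mem_filter.1 hS
        ext v
        simp only [Finset.mem_image, Finset.mem_erase, Finset.mem_univ, and_true]
        constructor
        · intro hv
          have hvu : v ∈ Finset.univ.biUnion X := by rw [hXcover]; exact Finset.mem_univ v
          obtain ⟨j, _, hvj⟩ := Finset.mem_biUnion.1 hvu
          have hji : j ≠ i := by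
            rintro rfl
            have : v ∈ S ∩ X j := Finset.mem_inter.2 ⟨hv, hvj⟩
            rw [hS2] at this
            exact absurd this (Finset.notMem_empty v)
          refine ⟨j, hji, ?_⟩
          have := hsingle S hS j hji
          have hv2 : v ∈ S ∩ X j := Finset.mem_inter.2 ⟨hv, hvj⟩
          rw [this] at hv2
          exact (Finset.mem_singleton.1 hv2).symm
        · rintro ⟨j, hji, rfl⟩
          have := hsingle S hS j hji
          have : φ S j ∈ S ∩ X j := by rw [this]; exact Finset.mem_singleton_self _
          exact (Finset.mem_inter.1 this).1
      have hcard_le : ((Tf E).filter (fun S => S ∩ X i = ∅)).card ≤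
          (Fintype.piFinset (fun j : Fin k => if j = i then ({v₀} : Finset V) else X j)).card := by
        apply Finset.card_le_card_of_injOn φ
        · intro S hS
          rw [Finset.mem_coe, Fintype.mem_piFinset]
          intro j
          by_cases hji : j = i
          · subst hji
            obtain ⟨hS1, hS2⟩ := Finset.mem_filter.1 hS
            have hempty : ¬ (S ∩ X j).Nonempty := by rw [hS2]; simp
            rw [if_pos rfl, hφ]
            simp only [dif_neg hempty]
            exact Finset.mem_singleton_self v₀
          · rw [if_neg hji]
            have := hsingle S hS j hji
            have hmem : φ S j ∈ S ∩ X j := by rw [this]; exact Finset.mem_singleton_self _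
            exact (Finset.mem_inter.1 hmem).2
        · intro S hS S' hS' hEq
          rw [hrepr S hS, hrepr S' hS']
          exact Finset.image_congr (fun j _ => congrFun hEq j)
      rw [Fintype.card_piFinset] at hcard_le
      have hprod2 : ∏ j : Fin k, (if j = i then ({v₀} : Finset V) else X j).card
          = m ^ (k - 1) := by
        have hval : ∀ j : Fin k, (if j = i then ({v₀} : Finset V) else X j).card
            = if j = i then 1 else m := by
          intro j; by_cases h : j = i <;> simp [h, hXcard]
        simp only [hval]
        rw [← Finset.mul_prod_erase _ _ (Finset.mem_univ i), if_pos rfl, one_mul]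
        rw [Finset.prod_congr rfl (fun j hj => if_neg (Finset.ne_of_mem_erase hj))]
        rw [Finset.prod_const, Finset.card_erase_of_mem (Finset.mem_univ i),
          Finset.card_univ, Fintype.card_fin]
      rw [hprod2] at hcard_le
      exact hcard_le
    calc p E ≤ (Finset.univ.biUnion
        (fun i : Fin k => (Tf E).filter (fun S => S ∩ X i = ∅))).card :=
          Finset.card_le_card hsub
    _ ≤ ∑ i : Fin k, ((Tf E).filter (fun S => S ∩ X i = ∅)).card := Finset.card_biUnion_le
    _ ≤ ∑ _i : Fin k, m ^ (k - 1) := Finset.sum_le_sum (fun i _ => hBi i)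
    _ = k * m ^ (k - 1) := by simp
  -- potential function
  let fval : Finset (Finset V) → ℝ := fun A => (A.card : ℝ) - c * (p A : ℝ)
  have hmpow : (m : ℝ) ^ k = (m : ℝ) * (m : ℝ) ^ (k - 1) := by
    rw [← pow_succ']
    congr 1
    omega
  have hfE : 0 ≤ fval E := by
    have h1 : c * (p E : ℝ) ≤ c * ((k * m ^ (k - 1) : ℕ) : ℝ) := by
      apply mul_le_mul_of_nonneg_left _ hcpos.le
      exact_mod_cast hpE
    have h2 : c * ((k * m ^ (k - 1) : ℕ) : ℝ) = d * (m : ℝ) ^ k := by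
      push_cast
      rw [hc, hmpow]
      field_simp
    simp only [fval]
    rw [h2] at h1
    linarith
  have hEne : E.Nonempty := by
    rw [← Finset.card_pos]
    by_contra h
    have : E.card = 0 := by omega
    rw [this] at hEcount
    have : (0:ℝ) < d * (m:ℝ)^k := by positivity
    simp at hEcount
    linarith
  -- minimize cardinality among nonempty subgraphs with nonneg potential
  set Qset : Set ℕ := {n | ∃ A : Finset (Finset V), A ⊆ E ∧ A.Nonempty ∧ 0 ≤ fval A ∧ A.card = n}
    with hQ
  have hQne : Qset.Nonempty := ⟨E.card, E, le_rfl, hEne, hfE, rfl⟩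
  obtain ⟨A, hAE, hAne, hAf, hAcard⟩ := Nat.sInf_mem hQne
  have hclaim : ∀ S : Finset V, S.card = k - 1 → 1 ≤ degH A S → c < (degH A S : ℝ) := by
    intro S hScard hSdeg
    by_contra hle
    push_neg at hle
    set A' := A.filter (fun e => ¬ S ⊆ e) with hA'
    have hsplit : degH A S + A'.card = A.card := by
      rw [degH, hA']
      exact Finset.card_filter_add_card_filter_not _
    have hA'subA : A' ⊆ A := Finset.filter_subset _ _
    have hA'ne : A'.Nonempty := by
      by_contra hne
      rw [Finset.not_nonempty_iff_eq_empty] at hne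
      obtain ⟨e, heA⟩ := hAne
      have hek := hE e (hAE heA)
      obtain ⟨x, hx, y, hy, hxy⟩ := Finset.one_lt_card.1 (by omega : 1 < e.card)
      have hmemTf : ∀ z ∈ e, e.erase z ∈ Tf A := by
        intro z hz
        rw [hTfmem]
        constructor
        · rw [Finset.card_erase_of_mem hz, hek]
        · exact Finset.card_pos.2 ⟨e, Finset.mem_filter.2 ⟨heA, Finset.erase_subset _ _⟩⟩
      have hne12 : e.erase x ≠ e.erase y := by
        intro hcon
        have : y ∈ e.erase x := Finset.mem_erase.2 ⟨hxy.symm, hy⟩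
        rw [hcon] at this
        exact (Finset.mem_erase.1 this).1 rfl
      have h2le : 2 ≤ p A := by
        have hsub2 : ({e.erase x, e.erase y} : Finset (Finset V)) ⊆ Tf A := by
          intro t ht
          rcases Finset.mem_insert.1 ht with h | h
          · exact h ▸ hmemTf x hx
          · exact (Finset.mem_singleton.1 h) ▸ hmemTf y hy
        calc 2 = ({e.erase x, e.erase y} : Finset (Finset V)).card :=
              (Finset.card_pair hne12).symm
        _ ≤ p A := Finset.card_le_card hsub2
      have hdegfull : degH A S = A.card := by
        have : A'.card = 0 := by rw [hne]; simp
        omega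
      have hcardle : (A.card : ℝ) ≤ c := by rw [← hdegfull]; exact hle
      have hple : c * 2 ≤ c * (p A : ℝ) := by
        apply mul_le_mul_of_nonneg_left _ hcpos.le
        exact_mod_cast h2le
      have : fval A ≤ c - c * 2 := by
        simp only [fval]
        linarith
      simp only [fval] at hAf
      linarith
    have hSTf : S ∈ Tf A := (hTfmem A S).2 ⟨hScard, hSdeg⟩
    have hpA' : p A' + 1 ≤ p A := by
      have hsub2 : Tf A' ⊆ (Tf A).erase S := by
        intro S' hS'
        obtain ⟨hS'card, hS'deg⟩ := (hTfmem A' S').1 hS'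
        have hdegmono : degH A' S' ≤ degH A S' :=
          Finset.card_le_card (Finset.filter_subset_filter _ hA'subA)
        have hS'ne : S' ≠ S := by
          rintro rfl
          have : A'.filter (fun e => S' ⊆ e) = ∅ := by
            apply Finset.filter_false_of_mem
            intro e he
            have he2 : e ∈ A.filter (fun e => ¬ S' ⊆ e) := hA' ▸ he
            exact (Finset.mem_filter.1 he2).2
          rw [degH, this] at hS'deg
          simp at hS'deg
        exact Finset.mem_erase.2 ⟨hS'ne, (hTfmem A S').2 ⟨hS'card, le_trans hS'deg hdegmono⟩⟩
      have h1 : p A' ≤ ((Tf A).erase S).card := Finset.card_le_card hsub2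
      have h2 : ((Tf A).erase S).card = p A - 1 := Finset.card_erase_of_mem hSTf
      have h3 : 1 ≤ p A := Finset.card_pos.2 ⟨S, hSTf⟩
      omega
    have hfA' : 0 ≤ fval A' := by
      have hc1 : (A'.card : ℝ) = (A.card : ℝ) - (degH A S : ℝ) := by
        have := hsplit
        push_cast [← this]
        ring
      have hc2 : (p A' : ℝ) ≤ (p A : ℝ) - 1 := by
        have : (p A' + 1 : ℝ) ≤ (p A : ℝ) := by exact_mod_cast hpA'
        linarith
      have hmul : c * (p A' : ℝ) ≤ c * ((p A : ℝ) - 1) :=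
        mul_le_mul_of_nonneg_left hc2 hcpos.le
      simp only [fval] at hAf ⊢
      rw [hc1]
      linarith
    have hmemQ : A'.card ∈ Qset := ⟨A', hA'subA.trans hAE, hA'ne, hfA', rfl⟩
    have h1 := Nat.sInf_le hmemQ
    have h2 : A'.card < A.card := by omega
    omega
  refine ⟨A, hAE, hAne, ?_⟩
  have hDne : {n : ℕ | ∃ S : Finset V, S.card = k - 1 ∧ 1 ≤ degH A S ∧ degH A S = n}.Nonempty := by
    obtain ⟨e, heA⟩ := hAne
    have hek := hE e (hAE heA)
    obtain ⟨S, hSe, hScard⟩ := Finset.exists_subset_card_eq (s := e) (n := k - 1) (by omega)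
    have hdeg : 1 ≤ degH A S := Finset.card_pos.2 ⟨e, Finset.mem_filter.2 ⟨heA, hSe⟩⟩
    exact ⟨degH A S, S, hScard, hdeg, rfl⟩
  obtain ⟨S, hScard, hSdeg, hSval⟩ := Nat.sInf_mem hDne
  have := hclaim S hScard hSdeg
  rw [posCodeg, ← hSval]
  exact this
end

section
/- Fix integers k ≥ 3 and 1 ≤ ℓ ≤ k-1 and let G be a k-graph on n vertices, where n is divisible by ⌊k/(k-ℓ)⌋(k-ℓ). Set w₁ = k-1 and wᵢ = ⌊k/(k-ℓ)⌋(k-ℓ) - 1 for each 2 ≤ i ≤ k. If δ⁺(G) ≥ (1 - 1/(⌊k/(k-ℓ)⌋(k-ℓ)))·n and G has no isolated vertices, then G admits a perfect (w₁, …, w_k)-weighted fractional matching. -/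
set_option linter.unusedSectionVars false
set_option maxHeartbeats 1600000


open Finset

open scoped Classical in
/-- The set `E*(G)` of ordered edges of the `k`-graph `E`: ordered `k`-tuples of distinct
vertices whose underlying set is an edge. -/
noncomputable def orderedEdges {V : Type*} [DecidableEq V] [Fintype V] (k : ℕ)
    (E : Finset (Finset V)) : Finset (Fin k → V) :=
  Finset.univ.filter (fun f => Function.Injective f ∧ Finset.univ.image f ∈ E)


open scoped InnerProductSpace

section Aux

open Finset

section Farkas

variable {H : Type*} [NormedAddCommGroup H] [InnerProductSpace ℝ H] [FiniteDimensional ℝ H]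
variable {ι : Type*} [Fintype ι] [DecidableEq ι]

/-- The set of nonnegative combinations of `A i`, `i ∈ s`. -/
def coneOf (A : ι → H) (s : Finset ι) : Set H :=
  {x | ∃ q : ι → ℝ, (∀ i, 0 ≤ q i) ∧ (∀ i ∉ s, q i = 0) ∧ x = ∑ i ∈ s, q i • A i}

lemma coneOf_mono (A : ι → H) {s t : Finset ι} (hst : s ⊆ t) :
    coneOf A s ⊆ coneOf A t := by
  rintro x ⟨q, hq0, hqs, rfl⟩
  refine ⟨q, hq0, fun i hi => hqs i (fun h => hi (hst h)), ?_⟩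
  rw [Finset.sum_subset hst]
  intro i _ hi
  rw [hqs i hi, zero_smul]

/-- Conic Carathéodory: any element of the cone is a nonneg combination of a
linearly independent subfamily. -/
lemma coneOf_caratheodory (A : ι → H) (s : Finset ι) :
    ∀ x ∈ coneOf A s, ∃ t ⊆ s,
      LinearIndependent ℝ (fun i : t => A i) ∧ x ∈ coneOf A t := by
  induction s using Finset.strongInduction with
  | _ s ih =>
  intro x hx
  by_cases hind : LinearIndependent ℝ (fun i : s => A i)
  · exact ⟨s, Finset.Subset.refl s, hind, hx⟩
  obtain ⟨q, hq0, hqs, rfl⟩ := hx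
  rw [Fintype.linearIndependent_iff] at hind
  push_neg at hind
  obtain ⟨g₀, hg₀sum, j₀, hj₀⟩ := hind
  -- get a dependence with a positive coefficient
  have key : ∃ g : ι → ℝ, (∀ i ∉ s, g i = 0) ∧ (∑ i ∈ s, g i • A i = 0) ∧
      ∃ i ∈ s, 0 < g i := by
    by_cases hpos : ∃ i : s, 0 < g₀ i
    · obtain ⟨i, hi⟩ := hpos
      refine ⟨fun i => if h : i ∈ s then g₀ ⟨i, h⟩ else 0, fun i hi => dif_neg hi, ?_, i, i.2, ?_⟩
      · rw [← Finset.sum_attach s]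
        simpa using hg₀sum
      · simpa using hi
    · push_neg at hpos
      refine ⟨fun i => if h : i ∈ s then -g₀ ⟨i, h⟩ else 0, fun i hi => dif_neg hi, ?_, j₀, j₀.2, ?_⟩
      · rw [← Finset.sum_attach s]
        simp only [Finset.mem_coe, Finset.coe_mem, dite_true, neg_smul, Finset.sum_neg_distrib]
        simpa using hg₀sum
      · simp only [Finset.coe_mem, dite_true]
        exact neg_pos.2 (lt_of_le_of_ne (hpos j₀) hj₀)
  obtain ⟨g, hgs, hgsum, hex⟩ := key
  set P := s.filter (fun i => 0 < g i) with hP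
  have hPne : P.Nonempty := by
    obtain ⟨i, his, hgi⟩ := hex
    exact ⟨i, Finset.mem_filter.2 ⟨his, hgi⟩⟩
  obtain ⟨i₀, hi₀P, hi₀min⟩ := Finset.exists_min_image P (fun i => q i / g i) hPne
  have hi₀s : i₀ ∈ s := (Finset.mem_filter.1 hi₀P).1
  have hgi₀ : 0 < g i₀ := (Finset.mem_filter.1 hi₀P).2
  set τ := q i₀ / g i₀ with hτ
  have hτ0 : 0 ≤ τ := div_nonneg (hq0 i₀) hgi₀.le
  set q' : ι → ℝ := fun i => if i ∈ s.erase i₀ then q i - τ * g i else 0 with hq'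
  have hq'0 : ∀ i, 0 ≤ q' i := by
    intro i
    rw [hq']
    dsimp only
    split_ifs with h
    · have his : i ∈ s := Finset.mem_of_mem_erase h
      rcases le_or_gt (g i) 0 with hgle | hgpos
      · nlinarith [hq0 i]
      · have : τ ≤ q i / g i := hi₀min i (Finset.mem_filter.2 ⟨his, hgpos⟩)
        rw [le_div_iff₀ hgpos] at this
        linarith
    · exact le_refl 0
  have hxeq : ∑ i ∈ s, q i • A i = ∑ i ∈ s.erase i₀, q' i • A i := by
    have h1 : ∑ i ∈ s.erase i₀, q' i • A i
        = ∑ i ∈ s.erase i₀, (q i - τ * g i) • A i := by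
      apply Finset.sum_congr rfl
      intro i hi
      rw [hq']
      simp only [hi, if_true]
    rw [h1]
    have h2 : ∑ i ∈ s, (q i - τ * g i) • A i
        = ∑ i ∈ s.erase i₀, (q i - τ * g i) • A i + (q i₀ - τ * g i₀) • A i₀ := by
      rw [Finset.sum_erase_add s _ hi₀s]
    have h3 : q i₀ - τ * g i₀ = 0 := by
      rw [hτ]
      field_simp
      ring
    have h4 : ∑ i ∈ s, (q i - τ * g i) • A i = ∑ i ∈ s, q i • A i := by
      rw [← sub_eq_zero]
      rw [← Finset.sum_sub_distrib]
      have : ∀ i ∈ s, (q i - τ * g i) • A i - q i • A i = -(τ • (g i • A i)) := by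
        intro i _
        rw [sub_smul, smul_smul]
        abel_nf
      rw [Finset.sum_congr rfl this, Finset.sum_neg_distrib, ← Finset.smul_sum, hgsum, smul_zero,
        neg_zero]
    rw [← h4, h2, h3, zero_smul, add_zero]
  have hmem : ∑ i ∈ s, q i • A i ∈ coneOf A (s.erase i₀) := by
    refine ⟨q', hq'0, ?_, hxeq⟩
    intro i hi
    rw [hq']
    simp only [hi, if_false]
  obtain ⟨t, hts, hind, hmem'⟩ := ih (s.erase i₀) (Finset.erase_ssubset hi₀s) _ hmem
  exact ⟨t, hts.trans (Finset.erase_subset _ _), hind, hmem'⟩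

end Farkas

section Farkas2

variable {H : Type*} [NormedAddCommGroup H] [InnerProductSpace ℝ H] [FiniteDimensional ℝ H]
variable {ι : Type*} [Fintype ι] [DecidableEq ι]

lemma isClosed_coneOf_indep (A : ι → H) (t : Finset ι)
    (h : LinearIndependent ℝ (fun i : t => A i)) : IsClosed (coneOf A t) := by
  set φ : (↥t → ℝ) →ₗ[ℝ] H := Fintype.linearCombination ℝ (fun i : t => A i) with hφ
  have hker : LinearMap.ker φ = ⊥ := by
    rw [LinearMap.ker_eq_bot']
    intro g hg
    have := Fintype.linearIndependent_iff.1 h g (by simpa [hφ, Fintype.linearCombination_apply] using hg)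
    funext i
    exact this i
  have hemb := LinearMap.isClosedEmbedding_of_injective (𝕜 := ℝ) (E := ↥t → ℝ) (F := H) hker
  have horset : IsClosed {g : ↥t → ℝ | ∀ i, 0 ≤ g i} := by
    have : {g : ↥t → ℝ | ∀ i, 0 ≤ g i} = ⋂ i, {g : ↥t → ℝ | 0 ≤ g i} := by
      ext g; simp [Set.mem_iInter]
    rw [this]
    exact isClosed_iInter (fun i => isClosed_le continuous_const (continuous_apply i))
  have himage : coneOf A t = φ '' {g : ↥t → ℝ | ∀ i, 0 ≤ g i} := by
    ext x
    constructor
    · rintro ⟨q, hq0, hqt, rfl⟩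
      refine ⟨fun i => q i, fun i => hq0 i, ?_⟩
      rw [hφ]
      simp only [Fintype.linearCombination_apply]
      rw [← Finset.sum_attach t (fun i => q i • A i)]
      rfl
    · rintro ⟨g, hg, rfl⟩
      refine ⟨fun i => if h : i ∈ t then g ⟨i, h⟩ else 0,
        fun i => by dsimp only; split_ifs with h; exacts [hg _, le_refl 0],
        fun i hi => dif_neg hi, ?_⟩
      rw [hφ]
      simp only [Fintype.linearCombination_apply]
      rw [← Finset.sum_attach t]
      apply Finset.sum_congr rfl
      intro i _
      rw [dif_pos i.2]
  rw [himage]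
  exact hemb.isClosedMap _ horset

lemma isClosed_coneOf_univ (A : ι → H) : IsClosed (coneOf A Finset.univ) := by
  have : coneOf A Finset.univ =
      ⋃ t ∈ {t : Finset ι | LinearIndependent ℝ (fun i : t => A i)}, coneOf A t := by
    ext x
    constructor
    · intro hx
      obtain ⟨t, _, hind, hmem⟩ := coneOf_caratheodory A Finset.univ x hx
      exact Set.mem_biUnion hind hmem
    · intro hx
      obtain ⟨t, _, hmem⟩ := Set.mem_iUnion₂.1 hx
      exact coneOf_mono A (Finset.subset_univ t) hmem
  rw [this]
  exact Set.Finite.isClosed_biUnion (Set.toFinite _)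
    (fun t ht => isClosed_coneOf_indep A t ht)

open scoped InnerProductSpace in
/-- Farkas lemma: if every `y` with `⟪A i, y⟫ ≥ 0` for all `i` satisfies `⟪b, y⟫ ≥ 0`,
then `b` is a nonnegative combination of the `A i`. -/
lemma farkas (A : ι → H) (b : H)
    (h : ∀ y : H, (∀ i, 0 ≤ ⟪A i, y⟫_ℝ) → 0 ≤ ⟪b, y⟫_ℝ) :
    ∃ q : ι → ℝ, (∀ i, 0 ≤ q i) ∧ ∑ i, q i • A i = b := by
  haveI : CompleteSpace H := FiniteDimensional.complete ℝ H
  set K : ConvexCone ℝ H :=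
    { carrier := coneOf A Finset.univ
      smul_mem' := by
        rintro c hc x ⟨q, hq0, hqs, rfl⟩
        exact ⟨fun i => c * q i, fun i => mul_nonneg hc.le (hq0 i),
          fun i hi => absurd (Finset.mem_univ i) hi, by
            rw [Finset.smul_sum]; apply Finset.sum_congr rfl; intro i _; rw [smul_smul]⟩
      add_mem' := by
        rintro x ⟨q1, hq10, _, rfl⟩ y ⟨q2, hq20, _, rfl⟩
        exact ⟨fun i => q1 i + q2 i, fun i => add_nonneg (hq10 i) (hq20 i),
          fun i hi => absurd (Finset.mem_univ i) hi, by
            rw [← Finset.sum_add_distrib]; apply Finset.sum_congr rfl; intro i _;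
            rw [add_smul]⟩ } with hK
  by_cases hb : b ∈ coneOf A Finset.univ
  · obtain ⟨q, hq0, _, rfl⟩ := hb
    exact ⟨q, hq0, rfl⟩
  exfalso
  have hne : (K : Set H).Nonempty :=
    ⟨0, ⟨fun _ => 0, fun _ => le_refl 0, fun _ _ => rfl, by simp⟩⟩
  have hcl : IsClosed (K : Set H) := isClosed_coneOf_univ A
  obtain ⟨y, hy1, hy2⟩ : ∃ y, (∀ x ∈ K, 0 ≤ ⟪x, y⟫_ℝ) ∧ ⟪y, b⟫_ℝ < 0 := by
    have hpt : K.Pointed := ⟨fun _ => 0, fun _ => le_refl 0, fun _ _ => rfl, by simp⟩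
    obtain ⟨y, hy1, hy2⟩ :=
      ProperCone.hyperplane_separation' (⟨K.toPointedCone hpt, hcl⟩ : ProperCone ℝ H) hb
    exact ⟨y, hy1, by rwa [real_inner_comm]⟩
  have hAy : ∀ i, 0 ≤ ⟪A i, y⟫_ℝ := by
    intro i
    apply hy1
    refine ⟨fun j => if j = i then 1 else 0, fun j => by positivity,
      fun j hj => absurd (Finset.mem_univ j) hj, ?_⟩
    simp
  have := h y hAy
  rw [real_inner_comm] at hy2
  linarith

end Farkas2

/-- The key dual bound. -/
lemma dual_bound (k m n : ℕ) (hk : 3 ≤ k) (hm2 : 2 ≤ m) (hmk : m ≤ k)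
    (E : Finset (Finset (Fin n))) (hE : ∀ e ∈ E, e.card = k)
    (hdeg : (1 - 1 / (m : ℝ)) * n ≤ (posCodeg k E : ℝ))
    (hiso : ∀ v : Fin n, 1 ≤ degH E {v})
    (y : Fin n → ℝ)
    (hy : ∀ f ∈ E, ∀ v ∈ f,
      0 ≤ ((k : ℝ) - 1) * y v + ((m : ℝ) - 1) * ((∑ u ∈ f, y u) - y v)) :
    0 ≤ ∑ v, y v := by
  classical
  by_contra hTneg
  push_neg at hTneg
  set T := ∑ v, y v with hT
  set kR := (k : ℝ) with hkR
  set mR := (m : ℝ) with hmR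
  set nR := (n : ℝ) with hnR
  have hk3 : (3 : ℝ) ≤ kR := by rw [hkR]; exact_mod_cast hk
  have hm2R : (2 : ℝ) ≤ mR := by rw [hmR]; exact_mod_cast hm2
  have hmkR : mR ≤ kR := by rw [hmR, hkR]; exact_mod_cast hmk
  have hm1 : (0:ℝ) < mR - 1 := by linarith
  -- n > 0
  have hn : 0 < n := by
    rcases Nat.eq_zero_or_pos n with h | h
    · subst h
      simp only [Finset.univ_eq_empty, Finset.sum_empty] at hT
      rw [hT] at hTneg; exact absurd hTneg (lt_irrefl 0)
    · exact h
  have hnR0 : (0:ℝ) < nR := by rw [hnR]; exact_mod_cast hn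
  -- minimum vertex
  have huniv : (Finset.univ : Finset (Fin n)).Nonempty := by
    rw [← Finset.card_pos]; simpa using hn
  obtain ⟨vm, _, hvm⟩ := Finset.exists_min_image Finset.univ y huniv
  have hvm' : ∀ v : Fin n, y vm ≤ y v := fun v => hvm v (Finset.mem_univ v)
  set β := -y vm with hβ
  have hβpos : 0 < β := by
    have hsum : (Finset.univ : Finset (Fin n)).card • y vm ≤ ∑ v, y v :=
      Finset.card_nsmul_le_sum _ _ _ (fun x _ => hvm' x)
    rw [Finset.card_univ, Fintype.card_fin, nsmul_eq_mul] at hsum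
    by_contra h
    push_neg at h
    have : 0 ≤ y vm := by rw [hβ] at h; linarith
    nlinarith
  -- an edge containing vm
  have hfm : ∃ f ∈ E, vm ∈ f := by
    have := hiso vm
    rw [degH] at this
    have hne : (E.filter (fun e => {vm} ⊆ e)).Nonempty := Finset.card_pos.1 (by omega)
    obtain ⟨f, hf⟩ := hne
    rw [Finset.mem_filter, Finset.singleton_subset_iff] at hf
    exact ⟨f, hf.1, hf.2⟩
  obtain ⟨fm, hfmE, hvfm⟩ := hfm
  have hfmcard : fm.card = k := hE fm hfmE
  -- the family of cores
  set 𝒞 : Finset (Finset (Fin n)) :=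
    Finset.univ.filter (fun S : Finset (Fin n) =>
      vm ∈ S ∧ S.card = k - 1 ∧ ∃ f ∈ E, S ⊆ f) with h𝒞
  have h𝒞ne : 𝒞.Nonempty := by
    have h1 : (fm.erase vm).Nonempty := by
      rw [← Finset.card_pos, Finset.card_erase_of_mem hvfm, hfmcard]; omega
    obtain ⟨u0, hu0⟩ := h1
    refine ⟨fm.erase u0, ?_⟩
    rw [h𝒞, Finset.mem_filter]
    refine ⟨Finset.mem_univ _, ?_, ?_, fm, hfmE, Finset.erase_subset _ _⟩
    · rw [Finset.mem_erase]
      exact ⟨fun h => (Finset.mem_erase.1 hu0).1 h.symm, hvfm⟩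
    · rw [Finset.card_erase_of_mem (Finset.mem_of_mem_erase hu0), hfmcard]
  -- minimize σ over cores
  obtain ⟨S, hS𝒞, hSmin⟩ := Finset.exists_min_image 𝒞 (fun S => ∑ u ∈ S, y u) h𝒞ne
  rw [h𝒞, Finset.mem_filter] at hS𝒞
  obtain ⟨-, hvS, hScard, f1, hf1E, hSf1⟩ := hS𝒞
  set σS := ∑ u ∈ S, y u with hσS
  -- the codegree bound
  have hD1 : 1 ≤ degH E S := by
    rw [degH]
    have : f1 ∈ E.filter (fun e => S ⊆ e) := Finset.mem_filter.2 ⟨hf1E, hSf1⟩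
    exact Finset.card_pos.2 ⟨f1, this⟩
  have hDcodeg : (1 - 1 / mR) * nR ≤ (degH E S : ℝ) := by
    refine le_trans hdeg ?_
    have : posCodeg k E ≤ degH E S := Nat.sInf_le ⟨S, hScard, hD1, rfl⟩
    exact_mod_cast this
  -- the neighborhood N
  set N : Finset (Fin n) :=
    Finset.univ.filter (fun x => x ∉ S ∧ insert x S ∈ E) with hN
  have hDN : degH E S ≤ N.card := by
    rw [degH]
    apply Finset.card_le_card_of_surjOn (fun x => insert x S)
    intro f hf
    rw [Finset.coe_filter] at hf
    obtain ⟨hfE, hSsub⟩ := hf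
    have hfk : f.card = k := hE f hfE
    have hcard_sdiff : (f \ S).card = 1 := by
      rw [Finset.card_sdiff_of_subset hSsub, hfk, hScard]; omega
    obtain ⟨x, hx⟩ := Finset.card_eq_one.1 hcard_sdiff
    have hxfS : x ∈ f \ S := by rw [hx]; exact Finset.mem_singleton_self x
    rw [Finset.mem_sdiff] at hxfS
    have hfeq : f = insert x S := by
      have h1 : S ∪ (f \ S) = f := Finset.union_sdiff_of_subset hSsub
      rw [hx] at h1
      rw [← h1, Finset.union_comm, Finset.insert_eq]
    refine ⟨x, ?_, hfeq.symm⟩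
    simp only [hN, Finset.coe_filter, Set.mem_setOf_eq, Finset.mem_univ, true_and]
    exact ⟨hxfS.2, hfeq ▸ hfE⟩
  set NN := (N.card : ℝ) with hNN
  have hNNn : NN ≤ nR := by
    rw [hNN, hnR]
    exact_mod_cast (Finset.card_le_univ N).trans_eq (by simp)
  have hNNlb : (1 - 1 / mR) * nR ≤ NN := by
    refine hDcodeg.trans ?_
    rw [hNN]; exact_mod_cast hDN
  have hNN0 : (0:ℝ) ≤ NN := Nat.cast_nonneg _
  have hmNN : (mR - 1) * nR ≤ mR * NN := by
    have h0 : (0:ℝ) < mR := by linarith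
    have := mul_le_mul_of_nonneg_left hNNlb h0.le
    calc (mR - 1) * nR = mR * ((1 - 1/mR) * nR) := by field_simp
    _ ≤ mR * NN := this
  have hNne : N.Nonempty := by
    rw [← Finset.card_pos]
    by_contra h
    push_neg at h
    have h0 : N.card = 0 := by omega
    have hNN0' : NN = 0 := by rw [hNN, h0]; simp
    have hpos : (0:ℝ) < (1 - 1/mR) * nR := by
      apply mul_pos _ hnR0
      have h1m : 1/mR ≤ 1/2 := by
        apply div_le_div_of_nonneg_left <;> linarith
      linarith
    linarith
  obtain ⟨x0, hx0N, hx0min⟩ := Finset.exists_min_image N y hNne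
  have hx0 := Finset.mem_filter.1 hx0N
  obtain ⟨-, hx0S, hx0E⟩ := hx0
  -- the max vertex of S.erase vm
  have hSene : (S.erase vm).Nonempty := by
    rw [← Finset.card_pos, Finset.card_erase_of_mem hvS, hScard]; omega
  obtain ⟨up, hupSe, hupmax⟩ := Finset.exists_max_image (S.erase vm) y hSene
  have hupS : up ∈ S := Finset.mem_of_mem_erase hupSe
  have hupne : up ≠ vm := (Finset.mem_erase.1 hupSe).1
  -- h3 : σS + β ≤ (k-2) * y up
  have hSecard : (S.erase vm).card = k - 2 := by
    rw [Finset.card_erase_of_mem hvS, hScard]; omega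
  have h3 : σS + β ≤ (kR - 2) * y up := by
    have hsum : ∑ u ∈ S.erase vm, y u ≤ (S.erase vm).card • y up :=
      Finset.sum_le_card_nsmul _ _ _ (fun x hx => hupmax x hx)
    rw [Finset.sum_erase_eq_sub hvS, hSecard, nsmul_eq_mul] at hsum
    have hcast : ((k - 2 : ℕ) : ℝ) = kR - 2 := by
      rw [hkR]; push_cast [Nat.cast_sub (by omega : 2 ≤ k)]; ring
    rw [hcast] at hsum
    rw [hσS, hβ]
    linarith
  -- minimality of S gives y up ≤ y x0
  have hyx0 : y up ≤ y x0 := by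
    set S' := insert x0 (S.erase up) with hS'
    have hx0notin : x0 ∉ S.erase up := fun h => hx0S (Finset.mem_of_mem_erase h)
    have hS'card : S'.card = k - 1 := by
      rw [hS', Finset.card_insert_of_notMem hx0notin,
        Finset.card_erase_of_mem hupS, hScard]
      omega
    have hS'𝒞 : S' ∈ 𝒞 := by
      rw [h𝒞, Finset.mem_filter]
      refine ⟨Finset.mem_univ _, ?_, hS'card, insert x0 S, hx0E, ?_⟩
      · rw [hS']
        exact Finset.mem_insert_of_mem (Finset.mem_erase.2 ⟨fun h => hupne h.symm, hvS⟩)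
      · rw [hS']
        exact Finset.insert_subset_insert x0 (Finset.erase_subset _ _)
    have hmin := hSmin S' hS'𝒞
    have hS'sum : ∑ u ∈ S', y u = y x0 + (σS - y up) := by
      rw [hS', Finset.sum_insert hx0notin, Finset.sum_erase_eq_sub hupS, ← hσS]
    rw [hS'sum] at hmin
    linarith
  -- h1
  have h1 : NN * y x0 ≤ ∑ x ∈ N, y x := by
    have := Finset.card_nsmul_le_sum N y (y x0) (fun x hx => hx0min x hx)
    rwa [nsmul_eq_mul, ← hNN] at this
  -- h2
  have h2 : ∑ x ∈ N, y x ≤ T + (nR - NN) * β := by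
    have hsplit : ∑ x ∈ N, y x + ∑ x ∈ Finset.univ.filter
        (fun x => ¬(x ∉ S ∧ insert x S ∈ E)), y x = T := by
      rw [hT, hN]
      exact Finset.sum_filter_add_sum_filter_not _ _ _
    have hcardsplit : N.card + (Finset.univ.filter
        (fun x => ¬(x ∉ S ∧ insert x S ∈ E))).card = n := by
      rw [hN]
      simpa using Finset.card_filter_add_card_filter_not
        (s := (Finset.univ : Finset (Fin n))) (p := fun x => x ∉ S ∧ insert x S ∈ E)
    have hlow : ∑ x ∈ Finset.univ.filter (fun x => ¬(x ∉ S ∧ insert x S ∈ E)), y x ≥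
        ((Finset.univ.filter (fun x => ¬(x ∉ S ∧ insert x S ∈ E))).card : ℝ) * (-β) := by
      have := Finset.card_nsmul_le_sum (Finset.univ.filter
        (fun x => ¬(x ∉ S ∧ insert x S ∈ E))) y (-β) (fun x _ => by
          rw [hβ]; simpa using hvm' x)
      rwa [nsmul_eq_mul] at this
    have hcc : ((Finset.univ.filter (fun x => ¬(x ∉ S ∧ insert x S ∈ E))).card : ℝ)
        = nR - NN := by
      rw [hNN, hnR]
      have := hcardsplit
      push_cast [← this]
      ring
    rw [hcc] at hlow
    nlinarith [hlow, hsplit]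
  -- h4, h5
  have h5 : NN * ((kR - mR) * β - (mR - 1) * σS) ≤ (mR - 1) * ∑ x ∈ N, y x := by
    have h4 : ∀ x ∈ N, (kR - mR) * β - (mR - 1) * σS ≤ (mR - 1) * y x := by
      intro x hx
      obtain ⟨-, hxS, hxE⟩ := Finset.mem_filter.1 hx
      have hvin : vm ∈ insert x S := Finset.mem_insert_of_mem hvS
      have := hy (insert x S) hxE vm hvin
      rw [Finset.sum_insert hxS, ← hσS] at this
      rw [hβ] at *
      nlinarith [this]
    have := Finset.card_nsmul_le_sum N (fun x => (mR - 1) * y x)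
      ((kR - mR) * β - (mR - 1) * σS) h4
    rwa [nsmul_eq_mul, ← hNN, ← Finset.mul_sum] at this
  -- final contradiction
  set P := T + (nR - NN) * β with hP
  have c1 : NN * (σS + β) ≤ (kR - 2) * P := by
    have s1 : NN * (σS + β) ≤ NN * ((kR - 2) * y up) :=
      mul_le_mul_of_nonneg_left h3 hNN0
    have s2 : NN * y up ≤ NN * y x0 := mul_le_mul_of_nonneg_left hyx0 hNN0
    have s3 : NN * y x0 ≤ P := h1.trans h2
    nlinarith [s1, s2, s3]
  have c2 : NN * ((kR - mR) * β - (mR - 1) * σS) ≤ (mR - 1) * P :=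
    h5.trans (mul_le_mul_of_nonneg_left h2 hm1.le)
  have c4 : NN * β ≤ (mR - 1) * P := by
    have c1' := mul_le_mul_of_nonneg_left c1 hm1.le
    have hk1 : (0:ℝ) < kR - 1 := by linarith
    have c3 : (kR - 1) * (NN * β) ≤ (kR - 1) * ((mR - 1) * P) := by nlinarith [c1', c2]
    exact le_of_mul_le_mul_left c3 hk1
  have c5 : mR * P < nR * β := by
    have hmpos : (0:ℝ) < mR := by linarith
    have h6 : mR * (nR - NN) ≤ nR := by linarith [hmNN]
    have h7 : (mR * (nR - NN)) * β ≤ nR * β := mul_le_mul_of_nonneg_right h6 hβpos.le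
    have h8 : mR * T < 0 := mul_neg_of_pos_of_neg hmpos hTneg
    calc mR * P = mR * T + (mR * (nR - NN)) * β := by rw [hP]; ring
    _ < 0 + nR * β := by linarith
    _ = nR * β := by ring
  -- combine
  have final1 : mR * (NN * β) ≤ (mR - 1) * (mR * P) := by nlinarith [c4]
  have final2 : (mR - 1) * (mR * P) < (mR - 1) * (nR * β) :=
    mul_lt_mul_of_pos_left c5 hm1
  have final3 : (mR - 1) * (nR * β) ≤ mR * (NN * β) := by nlinarith [hmNN, hβpos]
  linarith

end Aux

/-- Lemma 3.6: with `w₁ = k-1`, `wᵢ = ⌊k/(k-ℓ)⌋(k-ℓ) - 1` for `i ≥ 2`,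
if `⌊k/(k-ℓ)⌋(k-ℓ) ∣ n`, `δ⁺(G) ≥ (1 - 1/(⌊k/(k-ℓ)⌋(k-ℓ)))n` and `G` has no isolated
vertices, then `G` admits a perfect `(w₁,…,w_k)`-weighted fractional matching:
nonnegative weights `q` on the ordered edges such that for every vertex `v`,
`Σᵢ Σ_{e ∈ Eᵢᵛ} wᵢ·q(e) = 1`. -/
theorem statement16 (k ℓ n : ℕ) (hk : 3 ≤ k) (hℓ1 : 1 ≤ ℓ) (hℓ2 : ℓ ≤ k - 1)
    (hdiv : (k / (k - ℓ) * (k - ℓ)) ∣ n)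
    (w : Fin k → ℕ)
    (hw : ∀ i : Fin k, w i = if (i : ℕ) = 0 then k - 1 else k / (k - ℓ) * (k - ℓ) - 1)
    (E : Finset (Finset (Fin n))) (hE : ∀ e ∈ E, e.card = k)
    (hdeg : (1 - 1 / ((k / (k - ℓ) * (k - ℓ) : ℕ) : ℝ)) * n ≤ (posCodeg k E : ℝ))
    (hiso : ∀ v : Fin n, 1 ≤ degH E {v}) :
    ∃ q : (Fin k → Fin n) → ℝ,
      (∀ e, 0 ≤ q e) ∧
      (∀ e, e ∉ orderedEdges k E → q e = 0) ∧
      (∀ v : Fin n,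
        ∑ i : Fin k, ∑ e ∈ (orderedEdges k E).filter (fun e => e i = v), (w i : ℝ) * q e
          = 1) := by
  classical
  set m := k / (k - ℓ) * (k - ℓ) with hm
  -- arithmetic facts about m
  have hd : 0 < k - ℓ := by omega
  have hdm : m + k % (k - ℓ) = k := by
    rw [hm, Nat.mul_comm]
    exact Nat.div_add_mod k (k - ℓ)
  have hmodlt : k % (k - ℓ) < k - ℓ := Nat.mod_lt k hd
  have hm2 : 2 ≤ m := by omega
  have hmk : m ≤ k := by omega
  haveI : NeZero k := ⟨by omega⟩
  -- the generators
  set 𝓔 : Finset (Fin k → Fin n) := orderedEdges k E with h𝓔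
  set A : {e // e ∈ 𝓔} → EuclideanSpace ℝ (Fin n) :=
    fun e => WithLp.toLp 2 (fun v => ∑ i ∈ Finset.univ.filter (fun i => e.1 i = v), (w i : ℝ)) with hA
  set b : EuclideanSpace ℝ (Fin n) := WithLp.toLp 2 (fun _ => (1 : ℝ)) with hb
  -- inner products are concrete sums
  have hinner : ∀ (x y : EuclideanSpace ℝ (Fin n)), ⟪x, y⟫_ℝ = ∑ v, x v * y v := by
    intro x y
    rw [PiLp.inner_apply]
    simp [RCLike.inner_apply, mul_comm]
  -- Farkas hypothesis
  have hfk : ∀ y : EuclideanSpace ℝ (Fin n),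
      (∀ e : {e // e ∈ 𝓔}, 0 ≤ ⟪A e, y⟫_ℝ) → 0 ≤ ⟪b, y⟫_ℝ := by
    intro y hy
    rw [hinner]
    simp only [hb, one_mul]
    apply dual_bound k m n hk hm2 hmk E hE hdeg hiso
    -- derive the unordered inequality
    intro f hfE v hvf
    have hfcard : f.card = k := hE f hfE
    -- build an ordered edge with image f and first vertex v
    set g₀ : Fin k → Fin n := fun i => (f.equivFin.symm (finCongr hfcard.symm i) : Fin n)
      with hg₀
    have hg₀inj : Function.Injective g₀ := by
      intro a b' hab
      have := Subtype.val_injective hab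
      exact (finCongr hfcard.symm).injective (f.equivFin.symm.injective this)
    have hg₀img : Finset.univ.image g₀ = f := by
      apply Finset.eq_of_subset_of_card_le
      · intro x hx
        obtain ⟨i, _, rfl⟩ := Finset.mem_image.1 hx
        exact (f.equivFin.symm (finCongr hfcard.symm i)).2
      · rw [Finset.card_image_of_injective _ hg₀inj, Finset.card_univ, Fintype.card_fin, hfcard]
    obtain ⟨j, -, hj⟩ : ∃ j ∈ Finset.univ, g₀ j = v := by
      have : v ∈ Finset.univ.image g₀ := hg₀img ▸ hvf
      exact Finset.mem_image.1 this
    set g : Fin k → Fin n := g₀ ∘ (Equiv.swap 0 j) with hg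
    have hginj : Function.Injective g := hg₀inj.comp (Equiv.swap 0 j).injective
    have hgimg : Finset.univ.image g = f := by
      rw [hg, ← Finset.image_image]
      have : Finset.univ.image (⇑(Equiv.swap (0 : Fin k) j)) = Finset.univ := by
        apply Finset.eq_of_subset_of_card_le (Finset.subset_univ _)
        rw [Finset.card_image_of_injective _ (Equiv.swap 0 j).injective]
      rw [this, hg₀img]
    have hg0 : g 0 = v := by
      rw [hg]
      simp [Equiv.swap_apply_left, hj]
    have hgE : g ∈ 𝓔 := by
      rw [h𝓔, orderedEdges, Finset.mem_filter]
      exact ⟨Finset.mem_univ _, hginj, by rw [hgimg]; exact hfE⟩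
    have h0 := hy ⟨g, hgE⟩
    rw [hinner] at h0
    -- compute the inner product
    have hcomp : ∑ v', (A ⟨g, hgE⟩) v' * y v' = ∑ i, (w i : ℝ) * y (g i) := by
      have step1 : ∀ v', (A ⟨g, hgE⟩) v' * y v'
          = ∑ i ∈ Finset.univ.filter (fun i => g i = v'), (w i : ℝ) * y (g i) := by
        intro v'
        rw [hA]
        dsimp only
        rw [Finset.sum_mul]
        apply Finset.sum_congr rfl
        intro i hi
        rw [(Finset.mem_filter.1 hi).2]
      rw [Finset.sum_congr rfl (fun v' _ => step1 v')]
      exact Finset.sum_fiberwise_of_maps_to (fun x _ => Finset.mem_univ (g x)) _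
    rw [hcomp] at h0
    -- split off the first index
    have hsplit : ∑ i, (w i : ℝ) * y (g i)
        = (w 0 : ℝ) * y (g 0) + ∑ i ∈ Finset.univ.erase 0, (w i : ℝ) * y (g i) :=
      (Finset.add_sum_erase Finset.univ (fun i => (w i : ℝ) * y (g i))
        (Finset.mem_univ (0 : Fin k))).symm
    have hw0 : ((w 0 : ℕ) : ℝ) = (k : ℝ) - 1 := by
      rw [hw 0]
      simp only [Fin.val_zero, if_true]
      push_cast [Nat.cast_sub (by omega : 1 ≤ k)]
      ring
    have hwi : ∀ i : Fin k, i ≠ 0 → ((w i : ℕ) : ℝ) = (m : ℝ) - 1 := by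
      intro i hi
      rw [hw i]
      have : (i : ℕ) ≠ 0 := fun h => hi (Fin.ext (by simpa using h))
      rw [if_neg this]
      push_cast [Nat.cast_sub (by omega : 1 ≤ m)]
      ring
    have herase : ∑ i ∈ Finset.univ.erase 0, (w i : ℝ) * y (g i)
        = ((m : ℝ) - 1) * ((∑ u ∈ f, y u) - y v) := by
      have e1 : ∑ i ∈ Finset.univ.erase 0, (w i : ℝ) * y (g i)
          = ∑ i ∈ Finset.univ.erase 0, ((m : ℝ) - 1) * y (g i) :=
        Finset.sum_congr rfl (fun i hi => by rw [hwi i (Finset.mem_erase.1 hi).1])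
      rw [e1, ← Finset.mul_sum]
      congr 1
      have e2 : ∑ i ∈ Finset.univ.erase 0, y (g i)
          = (∑ i, y (g i)) - y (g 0) := by
        rw [Finset.sum_erase_eq_sub (Finset.mem_univ 0)]
      rw [e2, hg0]
      congr 1
      rw [← hgimg, Finset.sum_image (fun a _ b _ h => hginj h)]
    rw [hsplit, hw0, herase, hg0] at h0
    exact h0
  obtain ⟨q, hq0, hqsum⟩ := farkas A b hfk
  -- assemble the final witness
  refine ⟨fun e => if h : e ∈ 𝓔 then q ⟨e, h⟩ else 0, ?_, ?_, ?_⟩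
  · intro e
    dsimp only
    split_ifs with h
    · exact hq0 _
    · exact le_refl 0
  · intro e he
    exact dif_neg he
  · intro v
    have hv : (∑ e : {e // e ∈ 𝓔}, q e • A e) v = b v :=
      congrArg (fun x : EuclideanSpace ℝ (Fin n) => x v) hqsum
    have hlhs : (∑ e : {e // e ∈ 𝓔}, q e • A e) v = ∑ e : {e // e ∈ 𝓔}, q e * (A e v) := by
      rw [WithLp.ofLp_sum, Finset.sum_apply]
      rfl
    have hrhs : b v = 1 := rfl
    rw [hlhs, hrhs] at hv
    -- now rearrange the goal
    have goal_eq : ∑ i : Fin k, ∑ e ∈ 𝓔.filter (fun e => e i = v),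
        (w i : ℝ) * (if h : e ∈ 𝓔 then q ⟨e, h⟩ else 0)
        = ∑ e : {e // e ∈ 𝓔}, q e * (A e v) := by
      have s1 : ∀ i : Fin k, ∑ e ∈ 𝓔.filter (fun e => e i = v),
          (w i : ℝ) * (if h : e ∈ 𝓔 then q ⟨e, h⟩ else 0)
          = ∑ e ∈ 𝓔, if e i = v then (w i : ℝ) * (if h : e ∈ 𝓔 then q ⟨e, h⟩ else 0) else 0 := by
        intro i
        rw [Finset.sum_filter]
      rw [Finset.sum_congr rfl (fun i _ => s1 i), Finset.sum_comm]
      rw [← Finset.sum_attach 𝓔 (fun e => ∑ i : Fin k,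
        if e i = v then (w i : ℝ) * (if h : e ∈ 𝓔 then q ⟨e, h⟩ else 0) else 0)]
      apply Finset.sum_congr rfl
      intro e _
      rw [hA]
      dsimp only
      rw [Finset.mul_sum, Finset.sum_filter]
      apply Finset.sum_congr rfl
      intro i _
      rw [dif_pos e.2]
      split_ifs with h
      · ring
      · ring
    rw [goal_eq, hv]
end

section
/- Fix integers k ≥ 3 and 1 ≤ ℓ ≤ k-1 and a real α > 0, and let G be a k-graph on n vertices, where n is divisible by ⌊k/(k-ℓ)⌋(k-ℓ). Set w₁ = k-1 and wᵢ = ⌊k/(k-ℓ)⌋(k-ℓ) - 1 for each 2 ≤ i ≤ k. If δ⁺(G) ≥ (1 - 1/(⌊k/(k-ℓ)⌋(k-ℓ)))·n + αn and G has no isolated vertices, then G admits a perfect (w₁, …, w_k)-weighted fractional matching q with q(e) ≤ 1/(αn) for every ordered edge e ∈ E*(G). -/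
open Finset

namespace Statement17Aux

variable {n k : ℕ}

/-- The set of vertices extending `S` to an edge. -/
def extSet (E : Finset (Finset (Fin n))) (S : Finset (Fin n)) : Finset (Fin n) :=
  Finset.univ.filter (fun u => u ∉ S ∧ insert u S ∈ E)

lemma mem_extSet {E : Finset (Finset (Fin n))} {S : Finset (Fin n)} {u : Fin n} :
    u ∈ extSet E S ↔ u ∉ S ∧ insert u S ∈ E := by
  simp [extSet]

lemma insert_injOn (S : Finset (Fin n)) :
    ∀ u, u ∉ S → ∀ u', u' ∉ S → insert u S = insert u' S → u = u' := by
  intro u hu u' hu' h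
  have : u ∈ insert u' S := h ▸ mem_insert_self u S
  rcases mem_insert.mp this with rfl | h'
  · rfl
  · exact absurd h' hu

lemma filter_superset_eq_image (E : Finset (Finset (Fin n))) (hE : ∀ e ∈ E, e.card = k)
    (hk : 1 ≤ k) (S : Finset (Fin n)) (hS : S.card = k - 1) :
    E.filter (fun e => S ⊆ e) = (extSet E S).image (fun u => insert u S) := by
  ext e
  simp only [mem_filter, mem_image, mem_extSet]
  constructor
  · rintro ⟨heE, hSe⟩
    have hcard : (e \ S).card = 1 := by
      rw [card_sdiff_of_subset hSe, hE e heE, hS]; omega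
    obtain ⟨u, hu⟩ := Finset.card_eq_one.mp hcard
    have hu' : u ∈ e \ S := hu ▸ mem_singleton_self u
    have huS : u ∉ S := (mem_sdiff.mp hu').2
    have hue : u ∈ e := (mem_sdiff.mp hu').1
    have he : insert u S = e := by
      apply Finset.eq_of_subset_of_card_le
      · intro x hx
        rcases mem_insert.mp hx with rfl | hxS
        · exact hue
        · exact hSe hxS
      · rw [hE e heE, card_insert_of_notMem huS, hS]; omega
    exact ⟨u, ⟨huS, he ▸ heE⟩, he⟩
  · rintro ⟨u, ⟨huS, huE⟩, rfl⟩
    exact ⟨huE, subset_insert u S⟩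

lemma degH_eq_card_extSet (E : Finset (Finset (Fin n))) (hE : ∀ e ∈ E, e.card = k)
    (hk : 1 ≤ k) (S : Finset (Fin n)) (hS : S.card = k - 1) :
    degH E S = (extSet E S).card := by
  rw [degH, filter_superset_eq_image E hE hk S hS]
  apply Finset.card_image_of_injOn
  intro u hu u' hu' h
  exact insert_injOn S u (mem_extSet.mp hu).1 u' (mem_extSet.mp hu').1 h

/-- counting: any set `B` meets `extSet E S` in all but at most `n - δ` elements. -/
lemma card_le_inter_ext (E : Finset (Finset (Fin n))) (hE : ∀ e ∈ E, e.card = k)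
    (hk : 1 ≤ k) (δ : ℕ)
    (hδ : ∀ S : Finset (Fin n), S.card = k - 1 → 1 ≤ degH E S → δ ≤ degH E S)
    (S : Finset (Fin n)) (hS : S.card = k - 1) (hdeg1 : 1 ≤ degH E S)
    (B : Finset (Fin n)) :
    B.card ≤ (B ∩ extSet E S).card + (n - δ) := by
  have h1 : δ ≤ (extSet E S).card := by
    rw [← degH_eq_card_extSet E hE hk S hS]; exact hδ S hS hdeg1
  have h2 : B \ extSet E S ⊆ univ \ extSet E S :=
    sdiff_subset_sdiff (subset_univ B) (le_refl _)
  have h3 : (B \ extSet E S).card ≤ n - (extSet E S).card := by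
    calc (B \ extSet E S).card ≤ (univ \ extSet E S).card := card_le_card h2
    _ = n - (extSet E S).card := by
        rw [card_sdiff_of_subset (subset_univ _), card_univ, Fintype.card_fin]
  have h4 : (B ∩ extSet E S).card + (B \ extSet E S).card = B.card :=
    card_inter_add_card_sdiff B (extSet E S)
  have h5 : n - (extSet E S).card ≤ n - δ := Nat.sub_le_sub_left h1 n
  omega

/-- The window lemma: every non-isolated vertex `v` lies in at least `N` edges
all of whose other vertices belong to any prescribed set `A` of size `≥ (n-δ) + N + 1`. -/
lemma window (E : Finset (Finset (Fin n))) (hE : ∀ e ∈ E, e.card = k)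
    (hk : 3 ≤ k) (δ N : ℕ)
    (hδ : ∀ S : Finset (Fin n), S.card = k - 1 → 1 ≤ degH E S → δ ≤ degH E S)
    (hN : 1 ≤ N)
    (A : Finset (Fin n)) (hA : (n - δ) + N + 1 ≤ A.card)
    (v : Fin n) (hv : 1 ≤ degH E {v}) :
    ∃ F : Finset (Finset (Fin n)), F.card = N ∧
      ∀ f ∈ F, f ∈ E ∧ v ∈ f ∧ f.erase v ⊆ A := by
  classical
  have hne : (E.filter (fun e => {v} ⊆ e)).Nonempty := by
    rw [← card_pos]; exact hv
  obtain ⟨f0, hf0⟩ := hne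
  have hf0E : f0 ∈ E := (mem_filter.mp hf0).1
  have hvf0 : v ∈ f0 := singleton_subset_iff.mp (mem_filter.mp hf0).2
  -- improvement step: find an edge through v with all other vertices in A
  have key : ∀ r : ℕ, ∀ f, f ∈ E → v ∈ f → ((f.erase v) \ A).card ≤ r →
      ∃ f', f' ∈ E ∧ v ∈ f' ∧ f'.erase v ⊆ A := by
    intro r
    induction r with
    | zero =>
      intro f hf hvf hcard
      refine ⟨f, hf, hvf, ?_⟩
      have : (f.erase v) \ A = ∅ := card_eq_zero.mp (Nat.le_zero.mp hcard)
      exact sdiff_eq_empty_iff_subset.mp this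
    | succ r ih =>
      intro f hf hvf hcard
      by_cases hz : ((f.erase v) \ A) = ∅
      · exact ⟨f, hf, hvf, sdiff_eq_empty_iff_subset.mp hz⟩
      · obtain ⟨z, hzmem⟩ := nonempty_iff_ne_empty.mpr hz
        have hzf : z ∈ f := mem_of_mem_erase (mem_sdiff.mp hzmem).1
        have hzv : z ≠ v := ne_of_mem_erase (mem_sdiff.mp hzmem).1
        have hzA : z ∉ A := (mem_sdiff.mp hzmem).2
        have hScard : (f.erase z).card = k - 1 := by
          rw [card_erase_of_mem hzf, hE f hf]
        have hSdeg : 1 ≤ degH E (f.erase z) := by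
          rw [degH]
          exact card_pos.mpr ⟨f, mem_filter.mpr ⟨hf, erase_subset z f⟩⟩
        have hvS : v ∈ f.erase z := mem_erase.mpr ⟨fun h => hzv h.symm, hvf⟩
        have hcount := card_le_inter_ext E hE (by omega) δ hδ (f.erase z) hScard hSdeg A
        have hApos : 1 ≤ (A ∩ extSet E (f.erase z)).card := by omega
        obtain ⟨u, hu⟩ := card_pos.mp hApos
        have huA : u ∈ A := (mem_inter.mp hu).1
        have huext := mem_extSet.mp (mem_inter.mp hu).2
        refine ih (insert u (f.erase z)) huext.2 (mem_insert_of_mem hvS) ?_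
        have hsub : ((insert u (f.erase z)).erase v) \ A ⊆ (((f.erase v) \ A).erase z) := by
          intro x hx
          have hx1 : x ∈ (insert u (f.erase z)).erase v := (mem_sdiff.mp hx).1
          have hx2 : x ∉ A := (mem_sdiff.mp hx).2
          have hxv : x ≠ v := ne_of_mem_erase hx1
          have hxm : x ∈ insert u (f.erase z) := mem_of_mem_erase hx1
          rcases mem_insert.mp hxm with rfl | hxS
          · exact absurd huA hx2
          · have hxz : x ≠ z := ne_of_mem_erase hxS
            have hxf : x ∈ f := mem_of_mem_erase hxS
            exact mem_erase.mpr ⟨hxz, mem_sdiff.mpr ⟨mem_erase.mpr ⟨hxv, hxf⟩, hx2⟩⟩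
        have hzin : z ∈ (f.erase v) \ A :=
          mem_sdiff.mpr ⟨mem_erase.mpr ⟨hzv, hzf⟩, hzA⟩
        have hlt : (((f.erase v) \ A).erase z).card < ((f.erase v) \ A).card :=
          card_erase_lt_of_mem hzin
        have := card_le_card hsub
        omega
  obtain ⟨f', hf'E, hvf', hf'A⟩ := key ((f0.erase v) \ A).card f0 hf0E hvf0 (le_refl _)
  -- final expansion step
  have herase_ne : (f'.erase v).Nonempty := by
    rw [← card_pos, card_erase_of_mem hvf', hE f' hf'E]; omega
  obtain ⟨z', hz'⟩ := herase_ne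
  have hz'f : z' ∈ f' := mem_of_mem_erase hz'
  have hz'v : z' ≠ v := ne_of_mem_erase hz'
  have hS'card : (f'.erase z').card = k - 1 := by
    rw [card_erase_of_mem hz'f, hE f' hf'E]
  have hS'deg : 1 ≤ degH E (f'.erase z') := by
    rw [degH]
    exact card_pos.mpr ⟨f', mem_filter.mpr ⟨hf'E, erase_subset z' f'⟩⟩
  have hvS' : v ∈ f'.erase z' := mem_erase.mpr ⟨fun h => hz'v h.symm, hvf'⟩
  have hcount := card_le_inter_ext E hE (by omega) δ hδ (f'.erase z') hS'card hS'deg A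
  have hNle : N ≤ (A ∩ extSet E (f'.erase z')).card := by omega
  obtain ⟨C, hCsub, hCcard⟩ := Finset.exists_subset_card_eq hNle
  refine ⟨C.image (fun u => insert u (f'.erase z')), ?_, ?_⟩
  · rw [card_image_of_injOn, hCcard]
    intro u hu u' hu' h
    have hu1 := mem_extSet.mp (mem_inter.mp (hCsub hu)).2
    have hu2 := mem_extSet.mp (mem_inter.mp (hCsub hu')).2
    exact insert_injOn _ u hu1.1 u' hu2.1 h
  · intro f hf
    obtain ⟨u, huC, rfl⟩ := mem_image.mp hf
    have hu1 : u ∈ A := (mem_inter.mp (hCsub huC)).1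
    have hu2 := mem_extSet.mp (mem_inter.mp (hCsub huC)).2
    refine ⟨hu2.2, mem_insert_of_mem hvS', ?_⟩
    intro x hx
    have hxv : x ≠ v := ne_of_mem_erase hx
    rcases mem_insert.mp (mem_of_mem_erase hx) with rfl | hxS
    · exact hu1
    · exact hf'A (mem_erase.mpr ⟨hxv, mem_of_mem_erase hxS⟩)

/-- Existence of a "top set" of any size `W`. -/
lemma exists_topset (y : Fin n → ℝ) :
    ∀ W : ℕ, W ≤ n → ∃ A : Finset (Fin n), A.card = W ∧
      ∀ u, u ∉ A → ∀ a ∈ A, y u ≤ y a := by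
  intro W
  induction W with
  | zero => exact fun _ => ⟨∅, card_empty, by simp⟩
  | succ W ih =>
    intro hW
    obtain ⟨A, hcard, htop⟩ := ih (by omega)
    have hne : (univ \ A).Nonempty := by
      rw [← card_pos, card_sdiff_of_subset (subset_univ A), card_univ, Fintype.card_fin]; omega
    obtain ⟨x, hx, hmax⟩ := exists_max_image (univ \ A) y hne
    have hxA : x ∉ A := (mem_sdiff.mp hx).2
    refine ⟨insert x A, by rw [card_insert_of_notMem hxA, hcard], ?_⟩
    intro u hu a ha
    have huA : u ∉ A := fun h => hu (mem_insert_of_mem h)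
    rcases mem_insert.mp ha with rfl | haA
    · exact hmax u (mem_sdiff.mpr ⟨mem_univ u, huA⟩)
    · exact htop u huA a haA

/-- Every element of a `k`-set can be made the first element of an ordering. -/
lemma exists_ordering [NeZero k] (f : Finset (Fin n)) (hf : f.card = k) {v : Fin n}
    (hv : v ∈ f) :
    ∃ e : Fin k → Fin n, Function.Injective e ∧ Finset.univ.image e = f ∧ e 0 = v := by
  let σ := f.orderIsoOfFin hf
  let j : Fin k := σ.symm ⟨v, hv⟩
  refine ⟨fun i => (σ (Equiv.swap 0 j i) : Fin n), ?_, ?_, ?_⟩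
  · intro a b hab
    exact (Equiv.swap 0 j).injective (σ.injective (Subtype.coe_injective hab))
  · ext u
    simp only [mem_image, mem_univ, true_and]
    constructor
    · rintro ⟨i, rfl⟩; exact (σ (Equiv.swap 0 j i)).2
    · intro hu
      refine ⟨Equiv.swap 0 j (σ.symm ⟨u, hu⟩), ?_⟩
      rw [Equiv.swap_apply_self]
      simp
  · show (σ (Equiv.swap 0 j 0) : Fin n) = v
    rw [Equiv.swap_apply_left]
    simp [j]

set_option maxHeartbeats 1000000 in
/-- The key dual inequality. -/
lemma dualIneq (k ℓ n : ℕ) (hk : 3 ≤ k) (hℓ1 : 1 ≤ ℓ) (hℓ2 : ℓ ≤ k - 1)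
    (α : ℝ) (hα : 0 < α)
    (hdiv : (k / (k - ℓ) * (k - ℓ)) ∣ n)
    (w : Fin k → ℕ)
    (hw : ∀ i : Fin k, w i = if (i : ℕ) = 0 then k - 1 else k / (k - ℓ) * (k - ℓ) - 1)
    (E : Finset (Finset (Fin n))) (hE : ∀ e ∈ E, e.card = k)
    (hdeg : (1 - 1 / ((k / (k - ℓ) * (k - ℓ) : ℕ) : ℝ)) * n + α * n ≤ (posCodeg k E : ℝ))
    (hiso : ∀ v : Fin n, 1 ≤ degH E {v}) (y : Fin n → ℝ) :
    α * n * (∑ v, y v) ≤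
      ∑ e ∈ orderedEdges k E, max (∑ i : Fin k, (w i : ℝ) * y (e i)) 0 := by
  classical
  haveI : NeZero k := ⟨by omega⟩
  rcases le_or_gt (∑ v, y v) 0 with hs | hs
  · have h1 : α * n * (∑ v, y v) ≤ 0 :=
      mul_nonpos_of_nonneg_of_nonpos (by positivity) hs
    exact h1.trans (Finset.sum_nonneg fun e _ => le_max_right _ _)
  -- now ∑ y > 0
  set m : ℕ := k / (k - ℓ) * (k - ℓ) with hm
  have hkl1 : 1 ≤ k - ℓ := by omega
  have hm2 : 2 ≤ m := by
    have h1 : k % (k - ℓ) < k - ℓ := Nat.mod_lt _ (by omega)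
    have h2 : k % (k - ℓ) + (k - ℓ) * (k / (k - ℓ)) = k := Nat.mod_add_div k (k - ℓ)
    have h3 : m = (k - ℓ) * (k / (k - ℓ)) := by rw [hm, Nat.mul_comm]
    omega
  have hmk : m ≤ k := Nat.div_mul_le_self k (k - ℓ)
  -- the set of positive vertices
  set P : Finset (Fin n) := univ.filter (fun v => 0 < y v) with hP
  have hPne : P.Nonempty := by
    by_contra hcon
    have : ∀ v ∈ univ, y v ≤ 0 := by
      intro v _
      by_contra hy
      exact hcon ⟨v, mem_filter.mpr ⟨mem_univ v, by linarith⟩⟩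
    linarith [Finset.sum_nonpos this]
  have hn1 : 1 ≤ n := by
    obtain ⟨v, _⟩ := hPne
    have := v.isLt
    omega
  set b : ℕ := n / m with hb
  have hmb : m * b = n := Nat.mul_div_cancel' hdiv
  have hb1 : 1 ≤ b := by
    rcases Nat.eq_zero_or_pos b with h | h
    · rw [h, Nat.mul_zero] at hmb; omega
    · exact h
  set δ : ℕ := posCodeg k E with hδdef
  have hδlow : ∀ S : Finset (Fin n), S.card = k - 1 → 1 ≤ degH E S → δ ≤ degH E S :=
    fun S h1 h2 => Nat.sInf_le ⟨S, h1, h2, rfl⟩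
  -- δ ≤ n
  have hδn : δ ≤ n := by
    obtain ⟨v, _⟩ := hPne
    have hvne : (E.filter (fun e => {v} ⊆ e)).Nonempty := by
      rw [← card_pos]; exact hiso v
    obtain ⟨f0, hf0⟩ := hvne
    have hf0E : f0 ∈ E := (mem_filter.mp hf0).1
    have hvf0 : v ∈ f0 := singleton_subset_iff.mp (mem_filter.mp hf0).2
    have hScard : (f0.erase v).card = k - 1 := by
      rw [card_erase_of_mem hvf0, hE f0 hf0E]
    have hSdeg : 1 ≤ degH E (f0.erase v) := by
      rw [degH]
      exact card_pos.mpr ⟨f0, mem_filter.mpr ⟨hf0E, erase_subset v f0⟩⟩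
    have h1 : δ ≤ degH E (f0.erase v) := hδlow _ hScard hSdeg
    have h2 : degH E (f0.erase v) = (extSet E (f0.erase v)).card :=
      degH_eq_card_extSet E hE (by omega) _ hScard
    have h3 : (extSet E (f0.erase v)).card ≤ n := by
      calc (extSet E (f0.erase v)).card ≤ (univ : Finset (Fin n)).card := card_le_univ _
      _ = n := by rw [card_univ, Fintype.card_fin]
    omega
  set g : ℕ := n - δ with hg
  -- real arithmetic: α n ≤ b - g
  have hmR : (0:ℝ) < (m:ℝ) := by exact_mod_cast Nat.lt_of_lt_of_le (by norm_num) hm2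
  have hnmb : (n:ℝ) = (m:ℝ) * (b:ℝ) := by exact_mod_cast hmb.symm
  have hδR : (n:ℝ) - (b:ℝ) + α * n ≤ (δ:ℝ) := by
    have h1 : (1 - 1 / (m:ℝ)) * n = (n:ℝ) - (b:ℝ) := by
      field_simp
      rw [hnmb]; ring
    calc (n:ℝ) - (b:ℝ) + α * n = (1 - 1 / (m:ℝ)) * n + α * n := by rw [h1]
    _ ≤ (δ:ℝ) := hdeg
  have hgR : (g:ℝ) = (n:ℝ) - (δ:ℝ) := by
    rw [hg]; exact Nat.cast_sub hδn
  have hαbg : α * n ≤ (b:ℝ) - (g:ℝ) := by rw [hgR]; linarith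
  have hgb : g < b := by
    have : (g:ℝ) < (b:ℝ) := by nlinarith [mul_pos hα (show (0:ℝ) < n by exact_mod_cast hn1)]
    exact_mod_cast this
  -- choice of N
  set N : ℕ := ⌈α * n / ((k:ℝ) - 1)⌉₊ with hN
  have hk1R : (1:ℝ) ≤ (k:ℝ) - 1 := by
    have : (3:ℝ) ≤ (k:ℝ) := by exact_mod_cast hk
    linarith
  have hαn_pos : 0 < α * n := by positivity
  have hN1 : 1 ≤ N := by
    rw [hN]
    exact Nat.ceil_pos.mpr (by positivity)
  have hNα : α * n ≤ (N:ℝ) * ((k:ℝ) - 1) := by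
    have h1 : α * n / ((k:ℝ) - 1) ≤ (N:ℝ) := Nat.le_ceil _
    calc α * n = (α * n / ((k:ℝ) - 1)) * ((k:ℝ) - 1) := by field_simp
    _ ≤ (N:ℝ) * ((k:ℝ) - 1) := by nlinarith
  have hNbg : N ≤ b - g := by
    rw [hN, Nat.ceil_le]
    have h1 : ((b - g : ℕ):ℝ) = (b:ℝ) - (g:ℝ) := by exact_mod_cast Nat.cast_sub hgb.le
    rw [h1]
    calc α * n / ((k:ℝ) - 1) ≤ α * n := by
          apply div_le_self hαn_pos.le hk1R
    _ ≤ (b:ℝ) - (g:ℝ) := hαbg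
  -- the window
  set W : ℕ := max P.card (g + N + 1) with hW
  have hWn : W ≤ n := by
    apply max_le
    · calc P.card ≤ (univ : Finset (Fin n)).card := card_le_univ _
      _ = n := by rw [card_univ, Fintype.card_fin]
    · have : g + N + 1 ≤ b + 1 := by omega
      have h2 : b + 1 ≤ n := by
        have := hmb
        nlinarith [hm2, hb1]
      omega
  obtain ⟨A, hAcard, htop⟩ := exists_topset y W hWn
  have hPA : P ⊆ A := by
    intro v hv
    by_contra hvA
    have hyv : 0 < y v := (mem_filter.mp hv).2
    have hApos : ∀ a ∈ A, a ∈ P := by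
      intro a ha
      exact mem_filter.mpr ⟨mem_univ a, lt_of_lt_of_le hyv (htop v hvA a ha)⟩
    have hsub : insert v A ⊆ P := by
      intro x hx
      rcases mem_insert.mp hx with rfl | hxA
      · exact hv
      · exact hApos x hxA
    have hc1 : A.card + 1 ≤ P.card := by
      rw [← card_insert_of_notMem hvA]
      exact card_le_card hsub
    have hc2 : P.card ≤ W := le_max_left _ _
    omega
  have hAne : A.Nonempty := by
    rw [← card_pos, hAcard]
    have : g + N + 1 ≤ W := le_max_right _ _
    omega
  obtain ⟨w₀, hw₀A, hw₀min⟩ := exists_min_image A y hAne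
  set θ : ℝ := y w₀ with hθdef
  -- window families
  have hwindow : ∀ v : Fin n, ∃ F : Finset (Finset (Fin n)), F.card = N ∧
      ∀ f ∈ F, f ∈ E ∧ v ∈ f ∧ f.erase v ⊆ A := by
    intro v
    apply window E hE hk δ N hδlow hN1 A _ v (hiso v)
    rw [hAcard]
    have : g + N + 1 ≤ W := le_max_right _ _
    omega
  choose F hFcard hFprop using hwindow
  -- orderings
  have hord : ∃ eo : Fin n → Finset (Fin n) → (Fin k → Fin n),
      ∀ v f, f ∈ E → v ∈ f →
        Function.Injective (eo v f) ∧ Finset.univ.image (eo v f) = f ∧ eo v f 0 = v := by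
    refine ⟨fun v f => if h : f ∈ E ∧ v ∈ f then
      Classical.choose (exists_ordering f (hE f h.1) h.2) else fun _ => v, ?_⟩
    intro v f h1 h2
    simp only [dif_pos (And.intro h1 h2)]
    exact Classical.choose_spec (exists_ordering f (hE f h1) h2)
  obtain ⟨eo, heo⟩ := hord
  -- the chosen set of ordered edges
  set C : Finset (Fin k → Fin n) := P.biUnion (fun v => (F v).image (eo v)) with hC
  have hCsub : C ⊆ orderedEdges k E := by
    intro e he
    obtain ⟨v, hv, he2⟩ := mem_biUnion.mp he
    obtain ⟨f, hf, rfl⟩ := mem_image.mp he2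
    obtain ⟨hfE, hvf, _⟩ := hFprop v f hf
    obtain ⟨hinj, himg, _⟩ := heo v f hfE hvf
    unfold orderedEdges
    simp only [mem_filter, mem_univ, true_and]
    exact ⟨hinj, by rw [himg]; exact hfE⟩
  -- the value of each chosen config
  set μ : ℝ := min θ 0 with hμ
  have hμ0 : μ ≤ 0 := min_le_right _ _
  have hconfig : ∀ v ∈ P, ∀ f ∈ F v,
      ((k:ℝ) - 1) * y v + ((m:ℝ) - 1) * (((k:ℝ) - 1) * μ) ≤
        ∑ i : Fin k, (w i : ℝ) * y (eo v f i) := by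
    intro v hv f hf
    obtain ⟨hfE, hvf, hfA⟩ := hFprop v f hf
    obtain ⟨hinj, himg, he0⟩ := heo v f hfE hvf
    have hsplit : ∑ i : Fin k, (w i : ℝ) * y (eo v f i) =
        (w 0 : ℝ) * y v + ∑ i ∈ univ.erase (0 : Fin k), (w i : ℝ) * y (eo v f i) := by
      rw [← Finset.add_sum_erase univ _ (mem_univ (0 : Fin k)), he0]
    have himg' : (univ.erase (0 : Fin k)).image (eo v f) = f.erase v := by
      rw [Finset.image_erase hinj, himg, he0]
    have hsum2 : ∑ i ∈ univ.erase (0 : Fin k), (w i : ℝ) * y (eo v f i) =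
        ((m:ℝ) - 1) * ∑ u ∈ f.erase v, y u := by
      have h1 : ∀ i ∈ univ.erase (0 : Fin k), (w i : ℝ) * y (eo v f i) =
          ((m:ℝ) - 1) * y (eo v f i) := by
        intro i hi
        have hi0 : (i : ℕ) ≠ 0 := by
          have := (mem_erase.mp hi).1
          exact fun h => this (Fin.ext (by simp [h]))
        rw [hw i, if_neg hi0]
        rw [Nat.cast_sub (show 1 ≤ m by omega), Nat.cast_one]
      rw [Finset.sum_congr rfl h1, ← Finset.mul_sum]
      congr 1
      rw [← himg', Finset.sum_image]
      intro a _ b _ hab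
      exact hinj hab
    have hw0 : (w 0 : ℝ) = (k:ℝ) - 1 := by
      rw [hw 0]
      simp only [Fin.val_zero, if_pos]
      rw [Nat.cast_sub (show 1 ≤ k by omega), Nat.cast_one]
    have hcardE : (f.erase v).card = k - 1 := by
      rw [card_erase_of_mem hvf, hE f hfE]
    have hpartner : ((k:ℝ) - 1) * μ ≤ ∑ u ∈ f.erase v, y u := by
      have h1 : ∀ u ∈ f.erase v, μ ≤ y u := by
        intro u hu
        calc μ ≤ θ := min_le_left _ _
        _ ≤ y u := hw₀min u (hfA hu)
      calc ((k:ℝ) - 1) * μ = (f.erase v).card • μ := by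
            rw [hcardE, nsmul_eq_mul, Nat.cast_sub (show 1 ≤ k by omega), Nat.cast_one]
      _ = ∑ _u ∈ f.erase v, μ := (Finset.sum_const μ).symm
      _ ≤ ∑ u ∈ f.erase v, y u := Finset.sum_le_sum h1
    have hm1R : (0:ℝ) ≤ (m:ℝ) - 1 := by
      have : (2:ℝ) ≤ (m:ℝ) := by exact_mod_cast hm2
      linarith
    rw [hsplit, hsum2, hw0]
    have := mul_le_mul_of_nonneg_left hpartner hm1R
    linarith
  -- summing up
  have hsumC : ∑ v ∈ P, (N:ℝ) * (((k:ℝ) - 1) * y v + ((m:ℝ) - 1) * (((k:ℝ) - 1) * μ)) ≤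
      ∑ e ∈ C, max (∑ i : Fin k, (w i : ℝ) * y (e i)) 0 := by
    rw [hC, Finset.sum_biUnion]
    · apply Finset.sum_le_sum
      intro v hv
      rw [Finset.sum_image]
      · calc (N:ℝ) * (((k:ℝ) - 1) * y v + ((m:ℝ) - 1) * (((k:ℝ) - 1) * μ)) =
            ∑ _f ∈ F v, (((k:ℝ) - 1) * y v + ((m:ℝ) - 1) * (((k:ℝ) - 1) * μ)) := by
              rw [Finset.sum_const, hFcard v, nsmul_eq_mul]
        _ ≤ ∑ f ∈ F v, max (∑ i : Fin k, (w i : ℝ) * y (eo v f i)) 0 := by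
              apply Finset.sum_le_sum
              intro f hf
              exact (hconfig v hv f hf).trans (le_max_left _ _)
      · intro f hf f' hf' heq
        obtain ⟨hfE, hvf, _⟩ := hFprop v f hf
        obtain ⟨hfE', hvf', _⟩ := hFprop v f' hf'
        have h1 := (heo v f hfE hvf).2.1
        have h2 := (heo v f' hfE' hvf').2.1
        rw [← h1, ← h2, heq]
    · intro v hv v' hv' hne
      apply Finset.disjoint_left.mpr
      intro e he he'
      obtain ⟨f, hf, rfl⟩ := mem_image.mp he
      obtain ⟨f', hf', heq⟩ := mem_image.mp he'
      obtain ⟨hfE, hvf, _⟩ := hFprop v f hf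
      obtain ⟨hfE', hvf', _⟩ := hFprop v' f' hf'
      have h1 := (heo v f hfE hvf).2.2
      have h2 := (heo v' f' hfE' hvf').2.2
      apply hne
      rw [← h1, ← heq, h2]
  have hCtoAll : ∑ e ∈ C, max (∑ i : Fin k, (w i : ℝ) * y (e i)) 0 ≤
      ∑ e ∈ orderedEdges k E, max (∑ i : Fin k, (w i : ℝ) * y (e i)) 0 := by
    apply Finset.sum_le_sum_of_subset_of_nonneg hCsub
    intro e _ _
    exact le_max_right _ _
  -- the key comparison with s
  set s : ℝ := ∑ v, y v with hsdef
  set spos : ℝ := ∑ v ∈ P, y v with hspos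
  have hsplit_s : spos + ∑ v ∈ univ.filter (fun v => ¬ 0 < y v), y v = s := by
    rw [hspos, hsdef, hP]
    exact Finset.sum_filter_add_sum_filter_not univ _ y
  have hkey : s ≤ spos + ((m:ℝ) - 1) * (P.card : ℝ) * μ := by
    rcases le_or_gt 0 θ with hθ | hθ
    · have hμeq : μ = 0 := by rw [hμ, min_eq_right hθ]
      rw [hμeq]
      have : ∑ v ∈ univ.filter (fun v => ¬ 0 < y v), y v ≤ 0 := by
        apply Finset.sum_nonpos
        intro v hv
        have := (mem_filter.mp hv).2
        linarith [not_lt.mp this]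
      linarith
    · have hμeq : μ = θ := by rw [hμ, min_eq_left hθ.le]
      -- in this case A ≠ P, so W = g + N + 1
      have hPW : P.card < W := by
        rcases lt_or_ge P.card W with h | h
        · exact h
        · exfalso
          have hPA' : P = A := by
            apply Finset.eq_of_subset_of_card_le hPA
            rw [hAcard]; exact h
          have : w₀ ∈ P := by rw [hPA']; exact hw₀A
          have := (mem_filter.mp this).2
          rw [hθdef] at hθ
          linarith
      have hWeq : W = g + N + 1 := by
        rcases max_choice P.card (g + N + 1) with h | h
        · rw [hW] at hPW ⊢; omega
        · rw [hW]; exact h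
      -- counting the negative part
      have hmW : m * (W - 1) ≤ n := by
        have h1 : W - 1 ≤ b := by omega
        calc m * (W - 1) ≤ m * b := Nat.mul_le_mul_left m h1
        _ = n := hmb
      have hw₀P : w₀ ∉ P := by
        intro hcon
        have := (mem_filter.mp hcon).2
        rw [hθdef] at hθ
        linarith
      have houtside : ∀ u, u ∉ A → y u ≤ θ := by
        intro u hu
        exact htop u hu w₀ hw₀A
      -- sum over non-positive vertices
      have hbound : ((m:ℝ) - 1) * (P.card : ℝ) * (-θ) ≤
          ∑ v ∈ univ.filter (fun v => ¬ 0 < y v), (- y v) := by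
        have hsub : insert w₀ (univ \ A) ⊆ univ.filter (fun v => ¬ 0 < y v) := by
          intro x hx
          rcases mem_insert.mp hx with rfl | hxA
          · exact mem_filter.mpr ⟨mem_univ _, by rw [← hθdef]; linarith⟩
          · have := houtside x (mem_sdiff.mp hxA).2
            exact mem_filter.mpr ⟨mem_univ _, by linarith⟩
        have hterm : ∀ v ∈ univ.filter (fun v => ¬ 0 < y v), 0 ≤ - y v := by
          intro v hv
          have := not_lt.mp (mem_filter.mp hv).2
          linarith
        have h1 : ∑ v ∈ insert w₀ (univ \ A), (- y v) ≤
            ∑ v ∈ univ.filter (fun v => ¬ 0 < y v), (- y v) :=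
          Finset.sum_le_sum_of_subset_of_nonneg hsub (fun v hv _ => hterm v hv)
        have hw₀notin : w₀ ∉ univ \ A := by
          simp [hw₀A]
        have h2 : ∑ v ∈ insert w₀ (univ \ A), (- y v) =
            (- θ) + ∑ v ∈ univ \ A, (- y v) := by
          rw [Finset.sum_insert hw₀notin, hθdef]
        have h3 : ((univ \ A).card : ℝ) * (-θ) ≤ ∑ v ∈ univ \ A, (- y v) := by
          calc ((univ \ A).card : ℝ) * (-θ) = ∑ _v ∈ univ \ A, (-θ) := by
                rw [Finset.sum_const, nsmul_eq_mul]
          _ ≤ ∑ v ∈ univ \ A, (- y v) := by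
                apply Finset.sum_le_sum
                intro v hv
                have := houtside v (mem_sdiff.mp hv).2
                linarith
        have hcard_out : (univ \ A).card = n - W := by
          rw [card_sdiff_of_subset (subset_univ A), card_univ, Fintype.card_fin, hAcard]
        -- (m-1) * P.card ≤ (n - W) + 1
        have hnat : (m - 1) * P.card ≤ (n - W) + 1 := by
          have h5 : P.card ≤ W - 1 := by omega
          have h6 : (m - 1) * P.card ≤ (m - 1) * (W - 1) := Nat.mul_le_mul_left _ h5
          have h7 : m * (W - 1) ≤ n := hmW
          have h8 : 1 ≤ W := by omega
          -- (m-1)(W-1) = m(W-1) - (W-1) ≤ n - (W - 1) = n - W + 1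
          have h9 : (m - 1) * (W - 1) + (W - 1) = m * (W - 1) := by
            have h10 : m - 1 + 1 = m := by omega
            calc (m - 1) * (W - 1) + (W - 1) = ((m - 1) + 1) * (W - 1) := by ring
            _ = m * (W - 1) := by rw [h10]
          omega
        have hnatR : ((m:ℝ) - 1) * (P.card : ℝ) ≤ ((n - W : ℕ) : ℝ) + 1 := by
          have := hnat
          have hcast : (((m - 1) * P.card : ℕ) : ℝ) ≤ (((n - W) + 1 : ℕ) : ℝ) := by
            exact_mod_cast this
          have h1 : (((m - 1) * P.card : ℕ) : ℝ) = ((m:ℝ) - 1) * (P.card : ℝ) := by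
            push_cast [Nat.cast_sub (show 1 ≤ m by omega)]
            ring
          have h2 : (((n - W) + 1 : ℕ) : ℝ) = ((n - W : ℕ) : ℝ) + 1 := by push_cast; ring
          linarith [h1 ▸ h2 ▸ hcast]
        have hθneg : 0 < -θ := by linarith
        calc ((m:ℝ) - 1) * (P.card : ℝ) * (-θ) ≤ (((n - W : ℕ) : ℝ) + 1) * (-θ) := by
              apply mul_le_mul_of_nonneg_right hnatR hθneg.le
        _ = (-θ) + ((n - W : ℕ) : ℝ) * (-θ) := by ring
        _ ≤ (-θ) + ∑ v ∈ univ \ A, (- y v) := by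
              rw [hcard_out] at h3
              linarith
        _ = ∑ v ∈ insert w₀ (univ \ A), (- y v) := h2.symm
        _ ≤ ∑ v ∈ univ.filter (fun v => ¬ 0 < y v), (- y v) := h1
      have hneg : ∑ v ∈ univ.filter (fun v => ¬ 0 < y v), y v ≤
          ((m:ℝ) - 1) * (P.card : ℝ) * θ := by
        have h1 : ∑ v ∈ univ.filter (fun v => ¬ 0 < y v), (- y v) =
            - ∑ v ∈ univ.filter (fun v => ¬ 0 < y v), y v := by
          rw [← Finset.sum_neg_distrib]
        nlinarith [hbound]
      rw [hμeq]
      linarith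
  -- final chain
  have hNk_pos : (0:ℝ) < (N:ℝ) * ((k:ℝ) - 1) := by
    have : (1:ℝ) ≤ (N:ℝ) := by exact_mod_cast hN1
    nlinarith
  have htotal : (N:ℝ) * ((k:ℝ) - 1) * (spos + ((m:ℝ) - 1) * (P.card:ℝ) * μ) =
      ∑ v ∈ P, (N:ℝ) * (((k:ℝ) - 1) * y v + ((m:ℝ) - 1) * (((k:ℝ) - 1) * μ)) := by
    have h1 : ∑ v ∈ P, (N:ℝ) * (((k:ℝ) - 1) * y v + ((m:ℝ) - 1) * (((k:ℝ) - 1) * μ)) =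
        ∑ v ∈ P, (((N:ℝ) * ((k:ℝ) - 1)) * y v +
          (N:ℝ) * (((m:ℝ) - 1) * (((k:ℝ) - 1) * μ))) := by
      apply Finset.sum_congr rfl
      intro v _
      ring
    rw [h1, Finset.sum_add_distrib, ← Finset.mul_sum, Finset.sum_const, nsmul_eq_mul, ← hspos]
    ring
  calc α * n * s ≤ ((N:ℝ) * ((k:ℝ) - 1)) * s :=
        mul_le_mul_of_nonneg_right hNα hs.le
  _ ≤ ((N:ℝ) * ((k:ℝ) - 1)) * (spos + ((m:ℝ) - 1) * (P.card:ℝ) * μ) := by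
        apply mul_le_mul_of_nonneg_left hkey hNk_pos.le
  _ = ∑ v ∈ P, (N:ℝ) * (((k:ℝ) - 1) * y v + ((m:ℝ) - 1) * (((k:ℝ) - 1) * μ)) := htotal
  _ ≤ ∑ e ∈ C, max (∑ i : Fin k, (w i : ℝ) * y (e i)) 0 := hsumC
  _ ≤ ∑ e ∈ orderedEdges k E, max (∑ i : Fin k, (w i : ℝ) * y (e i)) 0 := hCtoAll


set_option maxHeartbeats 1000000 in
/-- Feasibility of the box-constrained linear system via Hahn–Banach separation. -/
lemma lp_feasible {n : ℕ} {ι : Type*} [Fintype ι] [DecidableEq ι] (T : Finset ι)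
    (χ : ι → Fin n → ℝ) {cap : ℝ} (hcap : 0 < cap)
    (H : ∀ y : Fin n → ℝ, (∑ v, y v) ≤ cap * ∑ e ∈ T, max (∑ v, χ e v * y v) 0) :
    ∃ q : ι → ℝ, (∀ e, 0 ≤ q e) ∧ (∀ e, q e ≤ cap) ∧ (∀ e ∉ T, q e = 0) ∧
      (∀ v, ∑ e ∈ T, q e * χ e v = 1) := by
  classical
  set capf : ι → ℝ := fun e => if e ∈ T then cap else 0 with hcapf
  set B : Set (ι → ℝ) := Set.univ.pi fun e => Set.Icc 0 (capf e) with hB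
  let L0 : (ι → ℝ) →ₗ[ℝ] (Fin n → ℝ) :=
    { toFun := fun q v => ∑ e ∈ T, q e * χ e v
      map_add' := fun a c => by
        funext v
        simp only [Pi.add_apply, add_mul]
        rw [Finset.sum_add_distrib]
      map_smul' := fun r a => by
        funext v
        simp only [Pi.smul_apply, smul_eq_mul, RingHom.id_apply]
        rw [Finset.mul_sum]
        apply Finset.sum_congr rfl
        intro e _
        ring }
  let eqv := WithLp.linearEquiv 2 ℝ (Fin n → ℝ)
  let L : (ι → ℝ) →ₗ[ℝ] EuclideanSpace ℝ (Fin n) := eqv.symm.toLinearMap.comp L0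
  have hL0app : ∀ (q : ι → ℝ) (v : Fin n), L0 q v = ∑ e ∈ T, q e * χ e v := fun _ _ => rfl
  have hBcompact : IsCompact B := isCompact_univ_pi fun e => isCompact_Icc
  have hBconvex : Convex ℝ B := convex_pi fun e _ => convex_Icc _ _
  have hLcont : Continuous L := L.continuous_of_finiteDimensional
  have hKcompact : IsCompact (L '' B) := hBcompact.image hLcont
  have hKclosed : IsClosed (L '' B) := hKcompact.isClosed
  have hKconvex : Convex ℝ (L '' B) := hBconvex.linear_image L
  by_cases hmem : eqv.symm (fun _ => (1:ℝ)) ∈ L '' B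
  · obtain ⟨q, hqB, hq1⟩ := hmem
    have hq1' : L0 q = fun _ => (1:ℝ) :=
      eqv.symm.injective (show eqv.symm (L0 q) = eqv.symm (fun _ => (1:ℝ)) from hq1)
    have hbox : ∀ e, q e ∈ Set.Icc (0:ℝ) (capf e) := fun e => hqB e (Set.mem_univ e)
    refine ⟨q, fun e => (hbox e).1, fun e => ?_, fun e he => ?_, fun v => ?_⟩
    · have h2 := (hbox e).2
      by_cases he : e ∈ T
      · rw [hcapf] at h2; simpa [he] using h2
      · have h3 : q e ≤ 0 := by rw [hcapf] at h2; simpa [he] using h2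
        linarith
    · have h2 := (hbox e).2
      have h1 := (hbox e).1
      rw [hcapf] at h2
      simp only [if_neg he] at h2
      linarith
    · have := congrFun hq1' v
      rw [hL0app] at this
      exact this
  · exfalso
    obtain ⟨φ, u, hKlt, hgt⟩ := geometric_hahn_banach_closed_point hKconvex hKclosed hmem
    set y : Fin n → ℝ := fun v => φ (eqv.symm (fun j => if v = j then 1 else 0)) with hy
    have hφ : ∀ x : Fin n → ℝ, φ (eqv.symm x) = ∑ v, x v * y v := by
      intro x
      have hx : x = ∑ v, x v • (fun j => if v = j then (1:ℝ) else 0) := pi_eq_sum_univ x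
      have h2 : eqv.symm x = ∑ v, x v • eqv.symm (fun j => if v = j then (1:ℝ) else 0) := by
        conv_lhs => rw [hx]
        rw [map_sum]
        exact Finset.sum_congr rfl fun v _ => map_smul _ _ _
      rw [h2, map_sum]
      apply Finset.sum_congr rfl
      intro v _
      rw [map_smul, smul_eq_mul, hy]
    have hφL : ∀ q : ι → ℝ, φ (L q) = ∑ e ∈ T, q e * (∑ v, χ e v * y v) := by
      intro q
      have h1 : φ (L q) = ∑ v, (∑ e ∈ T, q e * χ e v) * y v := hφ (L0 q)
      rw [h1]
      calc ∑ v, (∑ e ∈ T, q e * χ e v) * y v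
          = ∑ v, ∑ e ∈ T, q e * χ e v * y v := by
            apply Finset.sum_congr rfl
            intro v _
            rw [Finset.sum_mul]
      _ = ∑ e ∈ T, ∑ v, q e * χ e v * y v := Finset.sum_comm
      _ = ∑ e ∈ T, q e * ∑ v, χ e v * y v := by
            apply Finset.sum_congr rfl
            intro e _
            rw [Finset.mul_sum]
            apply Finset.sum_congr rfl
            intro v _
            ring
    set qs : ι → ℝ := fun e => if e ∈ T ∧ 0 < (∑ v, χ e v * y v) then cap else 0 with hqs
    have hqsB : qs ∈ B := by
      intro e _
      simp only [hqs, hcapf, Set.mem_Icc]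
      by_cases h : e ∈ T ∧ 0 < (∑ v, χ e v * y v)
      · rw [if_pos h, if_pos h.1]
        exact ⟨hcap.le, le_refl _⟩
      · rw [if_neg h]
        refine ⟨le_refl 0, ?_⟩
        by_cases he : e ∈ T
        · rw [if_pos he]; exact hcap.le
        · rw [if_neg he]
    have hval : φ (L qs) = cap * ∑ e ∈ T, max (∑ v, χ e v * y v) 0 := by
      rw [hφL, Finset.mul_sum]
      apply Finset.sum_congr rfl
      intro e heT
      by_cases h : 0 < (∑ v, χ e v * y v)
      · rw [hqs]
        simp only
        rw [if_pos ⟨heT, h⟩, max_eq_left h.le]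
      · rw [hqs]
        simp only
        rw [if_neg (fun hc => h hc.2), max_eq_right (not_lt.mp h), zero_mul, mul_zero]
    have hone : φ (eqv.symm (fun _ => (1:ℝ))) = ∑ v, y v := by
      rw [hφ]
      apply Finset.sum_congr rfl
      intro v _
      rw [one_mul]
    have hlt : φ (L qs) < u := hKlt (L qs) ⟨qs, hqsB, rfl⟩
    have hH := H y
    rw [← hval] at hH
    rw [hone] at hgt
    linarith

end Statement17Aux

/-- Corollary 3.7: with `w₁ = k-1`, `wᵢ = ⌊k/(k-ℓ)⌋(k-ℓ) - 1` for
`i ≥ 2`, if `⌊k/(k-ℓ)⌋(k-ℓ) ∣ n`, `δ⁺(G) ≥ (1 - 1/(⌊k/(k-ℓ)⌋(k-ℓ)))n + αn` and `G` has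
no isolated vertices, then `G` admits a perfect `(w₁,…,w_k)`-weighted fractional matching
with all weights at most `1/(αn)`. -/
theorem statement17 (k ℓ n : ℕ) (hk : 3 ≤ k) (hℓ1 : 1 ≤ ℓ) (hℓ2 : ℓ ≤ k - 1)
    (α : ℝ) (hα : 0 < α)
    (hdiv : (k / (k - ℓ) * (k - ℓ)) ∣ n)
    (w : Fin k → ℕ)
    (hw : ∀ i : Fin k, w i = if (i : ℕ) = 0 then k - 1 else k / (k - ℓ) * (k - ℓ) - 1)
    (E : Finset (Finset (Fin n))) (hE : ∀ e ∈ E, e.card = k)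
    (hdeg : (1 - 1 / ((k / (k - ℓ) * (k - ℓ) : ℕ) : ℝ)) * n + α * n ≤ (posCodeg k E : ℝ))
    (hiso : ∀ v : Fin n, 1 ≤ degH E {v}) :
    ∃ q : (Fin k → Fin n) → ℝ,
      (∀ e, 0 ≤ q e) ∧
      (∀ e, e ∉ orderedEdges k E → q e = 0) ∧
      (∀ e ∈ orderedEdges k E, q e ≤ 1 / (α * n)) ∧
      (∀ v : Fin n,
        ∑ i : Fin k, ∑ e ∈ (orderedEdges k E).filter (fun e => e i = v), (w i : ℝ) * q e
          = 1) := by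
  classical
  by_cases hn : n = 0
  · subst hn
    refine ⟨fun _ => 0, fun e => le_refl 0, fun e _ => rfl, fun e _ => ?_, fun v => Fin.elim0 v⟩
    norm_num
  · have hn1 : 1 ≤ n := Nat.one_le_iff_ne_zero.mpr hn
    have hnR : (0:ℝ) < n := by exact_mod_cast hn1
    have hcap : (0:ℝ) < 1 / (α * n) := by positivity
    set χ : (Fin k → Fin n) → Fin n → ℝ :=
      fun e v => ∑ i : Fin k, (w i : ℝ) * (if e i = v then 1 else 0) with hχ
    have hψeq : ∀ (e : Fin k → Fin n) (y : Fin n → ℝ),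
        (∑ v, χ e v * y v) = ∑ i : Fin k, (w i : ℝ) * y (e i) := by
      intro e y
      calc ∑ v, χ e v * y v
          = ∑ v, ∑ i : Fin k, (w i : ℝ) * (if e i = v then y v else 0) := by
            apply Finset.sum_congr rfl
            intro v _
            rw [hχ]
            simp only
            rw [Finset.sum_mul]
            apply Finset.sum_congr rfl
            intro i _
            by_cases h : e i = v <;> simp [h]
      _ = ∑ i : Fin k, ∑ v, (w i : ℝ) * (if e i = v then y v else 0) := Finset.sum_comm
      _ = ∑ i : Fin k, (w i : ℝ) * y (e i) := by
            apply Finset.sum_congr rfl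
            intro i _
            rw [← Finset.mul_sum]
            congr 1
            rw [Finset.sum_ite_eq univ (e i) y]
            simp
    have H : ∀ y : Fin n → ℝ, (∑ v, y v) ≤
        (1 / (α * n)) * ∑ e ∈ orderedEdges k E, max (∑ v, χ e v * y v) 0 := by
      intro y
      have hd := Statement17Aux.dualIneq k ℓ n hk hℓ1 hℓ2 α hα hdiv w hw E hE hdeg hiso y
      have h2 : ∑ e ∈ orderedEdges k E, max (∑ v, χ e v * y v) 0 =
          ∑ e ∈ orderedEdges k E, max (∑ i : Fin k, (w i : ℝ) * y (e i)) 0 := by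
        apply Finset.sum_congr rfl
        intro e _
        rw [hψeq]
      rw [h2]
      have hαn : (0:ℝ) < α * n := by positivity
      rw [div_mul_eq_mul_div, one_mul, le_div_iff₀ hαn]
      calc (∑ v, y v) * (α * n) = α * n * (∑ v, y v) := by ring
      _ ≤ _ := hd
    obtain ⟨q, hq0, hqcap, hqT, hqsum⟩ :=
      Statement17Aux.lp_feasible (orderedEdges k E) χ hcap H
    refine ⟨q, hq0, hqT, fun e _ => hqcap e, fun v => ?_⟩
    calc ∑ i : Fin k, ∑ e ∈ (orderedEdges k E).filter (fun e => e i = v), (w i : ℝ) * q e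
        = ∑ i : Fin k, ∑ e ∈ orderedEdges k E, (if e i = v then (w i : ℝ) * q e else 0) := by
          apply Finset.sum_congr rfl
          intro i _
          rw [Finset.sum_filter]
    _ = ∑ e ∈ orderedEdges k E, ∑ i : Fin k, (if e i = v then (w i : ℝ) * q e else 0) :=
          Finset.sum_comm
    _ = ∑ e ∈ orderedEdges k E, q e * χ e v := by
          apply Finset.sum_congr rfl
          intro e _
          rw [hχ]
          simp only
          rw [Finset.mul_sum]
          apply Finset.sum_congr rfl
          intro i _
          by_cases h : e i = v
          · simp [h]; ring
          · simp [h]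
    _ = 1 := hqsum v
end
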